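/- arXiv:2003.06341 — 6 statements merged into one kernel-verified Lean document; each statement's English description precedes it below -/
import Mathlib

section
/- Consider the SIS model under multi-layer Markovian mobility. Let (p, x) : [0, ∞) → ℝ^{nm} × ℝ^{nm} be a solution of the coupled ODE system ṗ = (B F(x) − D − L(x)) p − diag(p) B F(x) p, ẋ^α = (Q^α)^⊤ x^α, with x(0) entrywise positive. If p(0) ∈ [0,1]^{nm}, then p(t) ∈ [0,1]^{nm} for all t ≥ 0. -/
open Matrix Finset Filter

namespace SISMobility

/-- Index type for (class, patch) pairs: `(α, i)` with `α ∈ {1,…,m}` a class and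
`i ∈ {1,…,n}` a patch. -/
abbrev Idx (n m : ℕ) := Fin m × Fin n

/-- A CTMC generator matrix: nonnegative off-diagonal entries and zero row sums
(so that the diagonal entry is minus the total outgoing rate). -/
def IsGenerator {n : ℕ} (Q : Matrix (Fin n) (Fin n) ℝ) : Prop :=
  (∀ i j, i ≠ j → 0 ≤ Q i j) ∧ ∀ i, ∑ j, Q i j = 0

/-- Strong connectivity of the digraph on `{1,…,n}` with an edge `(i,j)` whenever
`i ≠ j` and `Q i j > 0`. -/
def StronglyConnected {n : ℕ} (Q : Matrix (Fin n) (Fin n) ℝ) : Prop :=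
  ∀ i j : Fin n, Relation.ReflTransGen (fun a b => a ≠ b ∧ 0 < Q a b) i j

/-- The `nm × nm` block-diagonal infection-rate matrix `B` (m copies of `diag β`). -/
noncomputable def Bmat (n m : ℕ) (β : Fin n → ℝ) : Matrix (Idx n m) (Idx n m) ℝ :=
  Matrix.diagonal fun k => β k.2

/-- The `nm × nm` block-diagonal recovery-rate matrix `D` (m copies of `diag δ`). -/
noncomputable def Dmat (n m : ℕ) (δ : Fin n → ℝ) : Matrix (Idx n m) (Idx n m) ℝ :=
  Matrix.diagonal fun k => δ k.2

/-- The block-diagonal mobility matrix `L(x)`: the `α`-block has entries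
`l^α_{ii} = ∑_{j≠i} q^α_{ji} x^α_j / x^α_i` and `l^α_{ij} = -q^α_{ji} x^α_j / x^α_i`. -/
noncomputable def Lmat {n m : ℕ} (Q : Fin m → Matrix (Fin n) (Fin n) ℝ)
    (x : Idx n m → ℝ) : Matrix (Idx n m) (Idx n m) ℝ :=
  fun k l =>
    if k.1 = l.1 then
      if k.2 = l.2 then ∑ j ∈ Finset.univ.filter (· ≠ k.2), Q k.1 j k.2 * x (k.1, j) / x k
      else -(Q k.1 l.2 k.2 * x (k.1, l.2) / x k)
    else 0

/-- The population-fraction matrix `F(x)`: entry `((α,i),(γ,j))` equals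
`x^γ_i / ∑_η x^η_i` if `j = i` and `0` otherwise. -/
noncomputable def Fmat {n m : ℕ} (x : Idx n m → ℝ) : Matrix (Idx n m) (Idx n m) ℝ :=
  fun k l => if l.2 = k.2 then x (l.1, k.2) / ∑ η : Fin m, x (η, k.2) else 0

/-- Right-hand side of the infection dynamics
`ṗ = (B F(x) − D − L(x)) p − diag(p) B F(x) p`. -/
noncomputable def pRHS {n m : ℕ} (β δ : Fin n → ℝ) (Q : Fin m → Matrix (Fin n) (Fin n) ℝ)
    (x p : Idx n m → ℝ) : Idx n m → ℝ :=
  (Bmat n m β * Fmat x - Dmat n m δ - Lmat Q x).mulVec p -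
    (Matrix.diagonal p * (Bmat n m β * Fmat x)).mulVec p

/-- Right-hand side of the mobility dynamics `ẋ^α = (Q^α)ᵀ x^α`. -/
noncomputable def xRHS {n m : ℕ} (Q : Fin m → Matrix (Fin n) (Fin n) ℝ)
    (x : Idx n m → ℝ) : Idx n m → ℝ :=
  fun k => ∑ j, Q k.1 j k.2 * x (k.1, j)

/-- `(p, x)` is a solution of the SIS model under multi-layer Markovian mobility. -/
def IsSolution {n m : ℕ} (β δ : Fin n → ℝ) (Q : Fin m → Matrix (Fin n) (Fin n) ℝ)
    (p x : ℝ → Idx n m → ℝ) : Prop :=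
  ∀ t : ℝ, 0 ≤ t → ∀ k : Idx n m,
    HasDerivAt (fun s => p s k) (pRHS β δ Q (x t) (p t) k) t ∧
    HasDerivAt (fun s => x s k) (xRHS Q (x t) k) t

/-- The radial abscissa `μ(G)`: the largest real part of a (complex) eigenvalue of a
real matrix `G`. -/
noncomputable def muMax {ι : Type*} [Fintype ι] [DecidableEq ι] (G : Matrix ι ι ℝ) : ℝ :=
  sSup (Complex.re '' spectrum ℂ (G.map (algebraMap ℝ ℂ)))

/-- The spectral radius `ρ(G)` of a real matrix `G`. -/
noncomputable def specRad {ι : Type*} [Fintype ι] [DecidableEq ι] (G : Matrix ι ι ℝ) : ℝ :=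
  sSup ((fun z : ℂ => ‖z‖) '' spectrum ℂ (G.map (algebraMap ℝ ℂ)))

/-- The fixed-point map `H(p) = (I + A(diag p + (I − diag p) M))⁻¹ A p`. -/
noncomputable def Hfun {n m : ℕ} (A M : Matrix (Idx n m) (Idx n m) ℝ)
    (p : Idx n m → ℝ) : Idx n m → ℝ :=
  ((1 + A * (Matrix.diagonal p + (1 - Matrix.diagonal p) * M))⁻¹).mulVec (A.mulVec p)

lemma BF_mulVec {n m : ℕ} (β : Fin n → ℝ) (x p : Idx n m → ℝ) (k : Idx n m) :
    (Bmat n m β * Fmat x).mulVec p k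
      = β k.2 * ∑ γ : Fin m, x (γ, k.2) / (∑ η : Fin m, x (η, k.2)) * p (γ, k.2) := by
  rw [Matrix.mulVec, dotProduct]
  have hentry : ∀ l, (Bmat n m β * Fmat x) k l = β k.2 * Fmat x k l := by
    intro l; rw [Bmat, Matrix.diagonal_mul]
  simp only [hentry, Fmat]
  rw [Fintype.sum_prod_type_right]
  simp only [mul_ite, mul_zero, ite_mul, zero_mul]
  rw [Finset.sum_comm]
  simp [Finset.sum_ite_eq', Finset.mul_sum, mul_assoc]

lemma Lmat_mulVec {n m : ℕ} (Q : Fin m → Matrix (Fin n) (Fin n) ℝ)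
    (x p : Idx n m → ℝ) (k : Idx n m) :
    (Lmat Q x).mulVec p k
      = ∑ j ∈ Finset.univ.filter (· ≠ k.2), Q k.1 j k.2 * x (k.1, j) / x k * (p k - p (k.1, j)) := by
  rw [Matrix.mulVec, dotProduct]
  rw [Fintype.sum_prod_type]
  have hsplit : ∀ γ : Fin m, ∑ j : Fin n, Lmat Q x k (γ, j) * p (γ, j)
      = if γ = k.1 then
          (∑ j ∈ Finset.univ.filter (· ≠ k.2), Q k.1 j k.2 * x (k.1, j) / x k) * p (k.1, k.2)
            - ∑ j ∈ Finset.univ.filter (· ≠ k.2), Q k.1 j k.2 * x (k.1, j) / x k * p (k.1, j)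
        else 0 := by
    intro γ
    by_cases hγ : γ = k.1
    · rw [if_pos hγ]
      subst hγ
      have hterm : ∀ j : Fin n, Lmat Q x k (k.1, j) * p (k.1, j)
          = (if j = k.2 then (∑ j' ∈ Finset.univ.filter (· ≠ k.2), Q k.1 j' k.2 * x (k.1, j') / x k) * p (k.1, k.2)
             else -(Q k.1 j k.2 * x (k.1, j) / x k * p (k.1, j))) := by
        intro j
        by_cases hj : j = k.2
        · subst hj; simp [Lmat]
        · rw [if_neg hj]
          simp only [Lmat, if_pos rfl, if_neg (fun h => hj (id (Eq.symm h)) : ¬ k.2 = j)]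
          simp
      rw [Finset.sum_congr rfl (fun j _ => hterm j)]
      rw [Finset.sum_ite]
      simp only [Finset.filter_eq', Finset.mem_univ, if_pos, Finset.sum_singleton,
        Finset.sum_neg_distrib]
      rfl
    · rw [if_neg hγ]
      apply Finset.sum_eq_zero
      intro j _
      have : Lmat Q x k (γ, j) = 0 := by
        simp only [Lmat]
        rw [if_neg (fun h => hγ (id (Eq.symm h)) : ¬ k.1 = γ)]
      rw [this, zero_mul]
  rw [Finset.sum_congr rfl (fun γ _ => hsplit γ)]
  rw [Finset.sum_ite_eq' Finset.univ k.1]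
  rw [if_pos (Finset.mem_univ k.1)]
  have : (k.1, k.2) = k := rfl
  rw [this]
  rw [Finset.sum_mul]
  rw [← Finset.sum_sub_distrib]
  apply Finset.sum_congr rfl
  intro j _
  ring

lemma pRHS_apply {n m : ℕ} (β δ : Fin n → ℝ) (Q : Fin m → Matrix (Fin n) (Fin n) ℝ)
    (x p : Idx n m → ℝ) (k : Idx n m) :
    pRHS β δ Q x p k =
      (1 - p k) * (β k.2 * ∑ γ : Fin m, x (γ, k.2) / (∑ η : Fin m, x (η, k.2)) * p (γ, k.2))
        - δ k.2 * p k
        - ∑ j ∈ Finset.univ.filter (· ≠ k.2),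
            Q k.1 j k.2 * x (k.1, j) / x k * (p k - p (k.1, j)) := by
  have hD : (Dmat n m δ).mulVec p k = δ k.2 * p k := by
    rw [Dmat, Matrix.mulVec_diagonal]
  have hdiag : (Matrix.diagonal p * (Bmat n m β * Fmat x)).mulVec p k
      = p k * ((Bmat n m β * Fmat x).mulVec p k) := by
    rw [Matrix.mulVec, Matrix.mulVec, dotProduct, dotProduct, Finset.mul_sum]
    apply Finset.sum_congr rfl
    intro l _
    rw [Matrix.diagonal_mul]
    ring
  simp only [pRHS, Pi.sub_apply, Matrix.sub_mulVec]
  rw [hD, hdiag, BF_mulVec, Lmat_mulVec]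
  ring


end SISMobility

open SISMobility

lemma deriv_nonpos_of_first_zero {g : ℝ → ℝ} {c d : ℝ} (hc : 0 < c)
    (h0 : g c = 0) (hpos : ∀ s, 0 ≤ s → s < c → 0 < g s)
    (hd : HasDerivAt g d c) : d ≤ 0 := by
  have h1 : HasDerivWithinAt g d (Set.Iio c) c := hd.hasDerivWithinAt
  rw [hasDerivWithinAt_iff_tendsto_slope] at h1
  have heq : Set.Iio c \ {c} = Set.Iio c := Set.diff_singleton_eq_self (by simp)
  rw [heq] at h1
  refine le_of_tendsto h1 ?_
  filter_upwards [Ioo_mem_nhdsLT_of_mem (Set.mem_Ioc.2 ⟨hc, le_rfl⟩)] with s hs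
  have hgs : 0 < g s := hpos s hs.1.le hs.2
  have : slope g c s = g s / (s - c) := by rw [slope_def_field]; rw [h0]; ring
  rw [this]
  exact div_nonpos_of_nonneg_of_nonpos hgs.le (by linarith [hs.2])

lemma barrier {ι : Type*} [Finite ι] {T : ℝ} {g d : ℝ → ι → ℝ}
    (hderiv : ∀ t ∈ Set.Icc (0:ℝ) T, ∀ k, HasDerivAt (fun s => g s k) (d t k) t)
    (h0 : ∀ k, 0 < g 0 k)
    (hbd : ∀ t ∈ Set.Icc (0:ℝ) T, ∀ k, g t k = 0 → (∀ l, 0 ≤ g t l) → 0 < d t k) :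
    ∀ t ∈ Set.Icc (0:ℝ) T, ∀ k, 0 < g t k := by
  by_contra hcon
  push_neg at hcon
  obtain ⟨t0, ht0, k0, hk0⟩ := hcon
  set S : Set ℝ := {s | s ∈ Set.Icc (0:ℝ) T ∧ ∃ k, g s k ≤ 0} with hSdef
  have hne : S.Nonempty := ⟨t0, ht0, k0, hk0⟩
  have hbdd : BddBelow S := ⟨0, fun s hs => hs.1.1⟩
  set c := sInf S with hc
  have hcclos : c ∈ closure S := csInf_mem_closure hne hbdd
  have hcIcc : c ∈ Set.Icc (0:ℝ) T := by
    have : closure S ⊆ Set.Icc (0:ℝ) T := closure_minimal (fun s hs => hs.1) isClosed_Icc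
    exact this hcclos
  have hlt : ∀ s, 0 ≤ s → s < c → ∀ k, 0 < g s k := by
    intro s hs hsc k
    by_contra hle
    push_neg at hle
    have hsS : s ∈ S := ⟨⟨hs, hsc.le.trans hcIcc.2⟩, k, hle⟩
    exact absurd (csInf_le hbdd hsS) (not_le.2 hsc)
  have hex : ∃ k, g c k ≤ 0 := by
    by_contra hpos
    push_neg at hpos
    have hev : ∀ᶠ s in nhds c, ∀ k, 0 < g s k :=
      eventually_all.2 fun k =>
        ((hderiv c hcIcc k).continuousAt).eventually (eventually_gt_nhds (hpos k))
    obtain ⟨s, hsU, hsS⟩ := mem_closure_iff_nhds.1 hcclos _ hev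
    obtain ⟨_, k, hk⟩ := hsS
    exact absurd (hsU k) (not_lt.2 hk)
  obtain ⟨k, hk⟩ := hex
  have hcpos : 0 < c := by
    rcases lt_or_eq_of_le hcIcc.1 with h | h
    · exact h
    · exact absurd hk (not_le.2 (h ▸ h0 k))
  have hge : ∀ l, 0 ≤ g c l := by
    intro l
    have htend : Tendsto (fun s => g s l) (nhdsWithin c (Set.Iio c)) (nhds (g c l)) :=
      ((hderiv c hcIcc l).continuousAt).continuousWithinAt.tendsto
    refine ge_of_tendsto htend ?_
    filter_upwards [Ioo_mem_nhdsLT_of_mem (Set.mem_Ioc.2 ⟨hcpos, le_rfl⟩)] with s hs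
    exact (hlt s hs.1.le hs.2 l).le
  have hck : g c k = 0 := le_antisymm hk (hge k)
  have hdpos := hbd c hcIcc k hck hge
  have hdle : d c k ≤ 0 :=
    deriv_nonpos_of_first_zero hcpos hck (fun s hs1 hs2 => hlt s hs1 hs2 k)
      (hderiv c hcIcc k)
  linarith


set_option maxHeartbeats 1000000 in
/-- Theorem 2 (i), first part: for the SIS model under multi-layer
Markovian mobility, if `x(0) ≫ 0` and `p(0) ∈ [0,1]^{nm}`, then `p(t) ∈ [0,1]^{nm}`
for all `t ≥ 0`. -/
theorem sis_box_invariant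
    (n m : ℕ) (hn : 2 ≤ n) (hm : 1 ≤ m)
    (Q : Fin m → Matrix (Fin n) (Fin n) ℝ)
    (hQgen : ∀ α, IsGenerator (Q α)) (hQirr : ∀ α, StronglyConnected (Q α))
    (β δ : Fin n → ℝ) (hβ : ∀ i, 0 < β i) (hδ : ∀ i, 0 ≤ δ i)
    (p x : ℝ → Idx n m → ℝ)
    (hsol : IsSolution β δ Q p x)
    (hx0 : ∀ k, 0 < x 0 k)
    (hp0 : ∀ k, p 0 k ∈ Set.Icc (0 : ℝ) 1) :
    ∀ t : ℝ, 0 ≤ t → ∀ k, p t k ∈ Set.Icc (0 : ℝ) 1 := by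
  have hm' : 0 < m := hm
  have hn' : 0 < n := by omega
  haveI : Nonempty (Fin m) := ⟨⟨0, hm'⟩⟩
  haveI : Nonempty (Fin n) := ⟨⟨0, hn'⟩⟩
  intro t ht k
  -- ### Step A : positivity of x on [0, t]
  set c : ℝ := (Finset.univ.inf' Finset.univ_nonempty fun l : Idx n m => x 0 l) / 2 with hcdef
  have hinfpos : 0 < Finset.univ.inf' Finset.univ_nonempty fun l : Idx n m => x 0 l :=
    (Finset.lt_inf'_iff _).2 fun l _ => hx0 l
  have hc : 0 < c := by rw [hcdef]; linarith
  have hclt : ∀ l : Idx n m, c < x 0 l := by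
    intro l
    have h1 : (Finset.univ.inf' Finset.univ_nonempty fun l : Idx n m => x 0 l) ≤ x 0 l :=
      Finset.inf'_le _ (Finset.mem_univ l)
    rw [hcdef]; linarith
  set K1 : ℝ := 1 + ∑ l : Idx n m, |Q l.1 l.2 l.2| with hK1def
  have hK1 : ∀ l : Idx n m, -Q l.1 l.2 l.2 < K1 := by
    intro l
    have h1 : |Q l.1 l.2 l.2| ≤ ∑ l' : Idx n m, |Q l'.1 l'.2 l'.2| :=
      Finset.single_le_sum (f := fun l' : Idx n m => |Q l'.1 l'.2 l'.2|)
        (fun _ _ => abs_nonneg _) (Finset.mem_univ l)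
    have h2 := neg_abs_le (Q l.1 l.2 l.2)
    rw [hK1def]; linarith
  have hxbar : ∀ s ∈ Set.Icc (0:ℝ) t, ∀ l, c * Real.exp (-K1 * s) < x s l := by
    have hbar := barrier (T := t)
      (g := fun s l => x s l - c * Real.exp (-K1 * s))
      (d := fun s l => xRHS Q (x s) l + K1 * (c * Real.exp (-K1 * s)))
      (by
        intro s hs l
        have h1 := (hsol s hs.1 l).2
        have h2 : HasDerivAt (fun u => c * Real.exp (-K1 * u))
            (c * (Real.exp (-K1 * s) * (-K1 * 1))) s :=
          (((hasDerivAt_id s).const_mul (-K1)).exp).const_mul c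
        have h3 := h1.sub h2
        refine h3.congr_deriv ?_
        ring)
      (by
        intro l
        have := hclt l
        simp only [neg_mul, mul_zero, neg_zero, Real.exp_zero, mul_one]
        linarith)
      (by
        intro s hs l hzero hnn
        have hE : 0 < Real.exp (-K1 * s) := Real.exp_pos _
        have hxl : x s l = c * Real.exp (-K1 * s) := by linarith
        show 0 < xRHS Q (x s) l + K1 * (c * Real.exp (-K1 * s))
        rw [xRHS]
        have hsplit : ∑ j, Q l.1 j l.2 * x s (l.1, j)
            = Q l.1 l.2 l.2 * x s l
              + ∑ j ∈ Finset.univ.erase l.2, Q l.1 j l.2 * x s (l.1, j) := by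
          rw [← Finset.add_sum_erase _ _ (Finset.mem_univ l.2)]
        rw [hsplit]
        have hterm : 0 ≤ ∑ j ∈ Finset.univ.erase l.2, Q l.1 j l.2 * x s (l.1, j) := by
          apply Finset.sum_nonneg
          intro j hj
          have hq : 0 ≤ Q l.1 j l.2 := (hQgen l.1).1 j l.2 (Finset.ne_of_mem_erase hj)
          have hx' := hnn (l.1, j)
          have : 0 ≤ x s (l.1, j) := by nlinarith [mul_pos hc hE]
          exact mul_nonneg hq this
        have hKQ : 0 < K1 + Q l.1 l.2 l.2 := by linarith [hK1 l]
        rw [hxl]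
        nlinarith [mul_pos hKQ (mul_pos hc hE)])
    intro s hs l
    have := hbar s hs l
    linarith
  have hxpos : ∀ s ∈ Set.Icc (0:ℝ) t, ∀ l, 0 < x s l := by
    intro s hs l
    have := hxbar s hs l
    nlinarith [mul_pos hc (Real.exp_pos (-K1 * s))]
  -- ### Step B : lower bound for p
  set K2 : ℝ := 1 + 2 * m * ∑ i, β i with hK2def
  have hβsum : 0 < ∑ i, β i := Finset.sum_pos (fun i _ => hβ i) Finset.univ_nonempty
  have hK2pos : 0 < K2 := by
    rw [hK2def]
    have : (0:ℝ) ≤ 2 * m := by positivity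
    nlinarith
  have hK2b : ∀ i : Fin n, 2 * β i * m ≤ K2 - 1 := by
    intro i
    have h1 : β i ≤ ∑ i', β i' := Finset.single_le_sum (fun i' _ => (hβ i').le) (Finset.mem_univ i)
    have h2 : (0:ℝ) ≤ 2 * m := by positivity
    rw [hK2def]
    nlinarith
  have hplowkey : ∀ ε : ℝ, 0 < ε → ε * Real.exp (K2 * t) ≤ 1 →
      ∀ s ∈ Set.Icc (0:ℝ) t, ∀ l, 0 < p s l + ε * Real.exp (K2 * s) := by
    intro ε hε hεbd
    apply barrier (d := fun s l => pRHS β δ Q (x s) (p s) l + K2 * (ε * Real.exp (K2 * s)))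
    · intro s hs l
      have h1 := (hsol s hs.1 l).1
      have h2 : HasDerivAt (fun u => ε * Real.exp (K2 * u))
          (ε * (Real.exp (K2 * s) * (K2 * 1))) s :=
        (((hasDerivAt_id s).const_mul K2).exp).const_mul ε
      have h3 := h1.add h2
      refine h3.congr_deriv ?_
      ring
    · intro l
      have := (hp0 l).1
      simp only [mul_zero, Real.exp_zero, mul_one]
      linarith
    · intro s hs l hzero hnn
      have hEpos : 0 < Real.exp (K2 * s) := Real.exp_pos _
      have hεE : 0 < ε * Real.exp (K2 * s) := mul_pos hε hEpos
      have hεE1 : ε * Real.exp (K2 * s) ≤ 1 := by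
        have h1 : Real.exp (K2 * s) ≤ Real.exp (K2 * t) :=
          Real.exp_le_exp.2 (mul_le_mul_of_nonneg_left hs.2 hK2pos.le)
        nlinarith
      have hpk : p s l = -(ε * Real.exp (K2 * s)) := by linarith
      have hpl : ∀ l', -(ε * Real.exp (K2 * s)) ≤ p s l' := fun l' => by
        have := hnn l'; linarith
      show 0 < pRHS β δ Q (x s) (p s) l + K2 * (ε * Real.exp (K2 * s))
      rw [pRHS_apply]
      set E := Real.exp (K2 * s) with hEdef
      set S := ∑ η : Fin m, x s (η, l.2) with hSdef
      have hSpos : 0 < S :=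
        Finset.sum_pos (fun η _ => hxpos s hs (η, l.2)) Finset.univ_nonempty
      have hcγ : ∀ γ : Fin m, 0 ≤ x s (γ, l.2) / S ∧ x s (γ, l.2) / S ≤ 1 := by
        intro γ
        constructor
        · exact div_nonneg (hxpos s hs (γ, l.2)).le hSpos.le
        · rw [div_le_one hSpos]
          exact Finset.single_le_sum (f := fun η => x s (η, l.2))
            (fun η _ => (hxpos s hs (η, l.2)).le) (Finset.mem_univ γ)
      have hsum : -(m * (ε * E)) ≤ ∑ γ : Fin m, x s (γ, l.2) / S * p s (γ, l.2) := by
        have hterm : ∀ γ ∈ Finset.univ, -(ε * E) ≤ x s (γ, l.2) / S * p s (γ, l.2) := by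
          intro γ _
          rcases le_or_gt 0 (p s (γ, l.2)) with h | h
          · have := mul_nonneg (hcγ γ).1 h
            linarith
          · have h2 : 1 * p s (γ, l.2) ≤ x s (γ, l.2) / S * p s (γ, l.2) :=
              mul_le_mul_of_nonpos_right (hcγ γ).2 h.le
            have := hpl (γ, l.2)
            linarith
        calc -(↑m * (ε * E)) = ∑ _γ : Fin m, -(ε * E) := by
              simp [Finset.sum_const, Finset.card_univ]
          _ ≤ _ := Finset.sum_le_sum hterm
      have hLsum : ∑ j ∈ Finset.univ.filter (· ≠ l.2),
          Q l.1 j l.2 * x s (l.1, j) / x s l * (p s l - p s (l.1, j)) ≤ 0 := by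
        apply Finset.sum_nonpos
        intro j hj
        have hjne : j ≠ l.2 := by simpa using (Finset.mem_filter.1 hj).2
        have hq : 0 ≤ Q l.1 j l.2 := (hQgen l.1).1 j l.2 hjne
        have hxr : 0 ≤ Q l.1 j l.2 * x s (l.1, j) / x s l :=
          div_nonneg (mul_nonneg hq (hxpos s hs (l.1, j)).le) (hxpos s hs l).le
        have hpd : p s l - p s (l.1, j) ≤ 0 := by
          have := hpl (l.1, j); rw [hpk]; linarith
        exact mul_nonpos_of_nonneg_of_nonpos hxr hpd
      set Bv := β l.2 * ∑ γ : Fin m, x s (γ, l.2) / S * p s (γ, l.2) with hBvdef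
      have hBv : -(β l.2 * (m * (ε * E))) ≤ Bv := by
        rw [hBvdef]
        nlinarith [hβ l.2, hsum]
      have h1p : 1 - p s l = 1 + ε * E := by rw [hpk]; ring
      have hA : -(2 * β l.2 * m * (ε * E)) ≤ (1 - p s l) * Bv := by
        rw [h1p]
        have hmpos : (0:ℝ) < (m:ℝ) := by exact_mod_cast hm'
        rcases le_or_gt 0 Bv with h | h
        · have h1 : 0 ≤ (1 + ε * E) * Bv := mul_nonneg (by positivity) h
          have h2 : 0 < 2 * β l.2 * ↑m * (ε * E) := by
            have := hβ l.2
            positivity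
          linarith
        · have h1 : 0 ≤ (1 - ε * E) * (-Bv) :=
            mul_nonneg (by linarith) (by linarith)
          nlinarith [hBv]
      have hδterm : 0 ≤ -(δ l.2 * p s l) := by
        rw [hpk]
        have := hδ l.2
        nlinarith
      have hKK := hK2b l.2
      nlinarith [mul_nonneg (by linarith : (0:ℝ) ≤ K2 - 1 - 2 * β l.2 * m) hεE.le]
  have hplow : ∀ s ∈ Set.Icc (0:ℝ) t, ∀ l, 0 ≤ p s l := by
    intro s hs l
    by_contra hneg
    push_neg at hneg
    have hes : (0:ℝ) < Real.exp (K2 * s) := Real.exp_pos _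
    have het : (0:ℝ) < Real.exp (K2 * t) := Real.exp_pos _
    set ε : ℝ := min (Real.exp (-(K2 * t))) (-(p s l) * Real.exp (-(K2 * s)) / 2) with hεdef
    have hε : 0 < ε := by
      apply lt_min (Real.exp_pos _)
      have := Real.exp_pos (-(K2 * s))
      nlinarith
    have hεbd : ε * Real.exp (K2 * t) ≤ 1 := by
      have h1 : ε ≤ Real.exp (-(K2 * t)) := min_le_left _ _
      have h2 : Real.exp (-(K2 * t)) * Real.exp (K2 * t) = 1 := by
        rw [← Real.exp_add]; simp
      nlinarith
    have hkey := hplowkey ε hε hεbd s hs l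
    have h3 : ε ≤ -(p s l) * Real.exp (-(K2 * s)) / 2 := min_le_right _ _
    have h4 : Real.exp (-(K2 * s)) * Real.exp (K2 * s) = 1 := by
      rw [← Real.exp_add]; simp
    nlinarith
  -- ### Step C : upper bound for p
  have hupkey : ∀ ε : ℝ, 0 < ε →
      ∀ s ∈ Set.Icc (0:ℝ) t, ∀ l, 0 < 1 + ε * Real.exp s - p s l := by
    intro ε hε
    apply barrier (d := fun s l => ε * Real.exp s - pRHS β δ Q (x s) (p s) l)
    · intro s hs l
      have h1 := (hsol s hs.1 l).1
      have h2 : HasDerivAt (fun u => 1 + ε * Real.exp u) (ε * Real.exp s) s :=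
        ((Real.hasDerivAt_exp s).const_mul ε).const_add 1
      have h3 := h2.sub h1
      exact h3
    · intro l
      have := (hp0 l).2
      simp only [Real.exp_zero, mul_one]
      linarith [hε]
    · intro s hs l hzero hnn
      have hEpos : 0 < Real.exp s := Real.exp_pos _
      have hεE : 0 < ε * Real.exp s := mul_pos hε hEpos
      have hpk : p s l = 1 + ε * Real.exp s := by linarith
      have hpl : ∀ l', p s l' ≤ 1 + ε * Real.exp s := fun l' => by
        have := hnn l'; linarith
      show 0 < ε * Real.exp s - pRHS β δ Q (x s) (p s) l
      rw [pRHS_apply]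
      set E := Real.exp s with hEdef
      set S := ∑ η : Fin m, x s (η, l.2) with hSdef
      have hSpos : 0 < S :=
        Finset.sum_pos (fun η _ => hxpos s hs (η, l.2)) Finset.univ_nonempty
      have hBv : 0 ≤ β l.2 * ∑ γ : Fin m, x s (γ, l.2) / S * p s (γ, l.2) := by
        apply mul_nonneg (hβ l.2).le
        apply Finset.sum_nonneg
        intro γ _
        exact mul_nonneg (div_nonneg (hxpos s hs (γ, l.2)).le hSpos.le)
          (hplow s hs (γ, l.2))
      have hAterm : (1 - p s l) * (β l.2 * ∑ γ : Fin m, x s (γ, l.2) / S * p s (γ, l.2)) ≤ 0 :=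
        mul_nonpos_of_nonpos_of_nonneg (by rw [hpk]; linarith) hBv
      have hδterm : 0 ≤ δ l.2 * p s l := by
        apply mul_nonneg (hδ l.2)
        rw [hpk]; linarith
      have hLsum : 0 ≤ ∑ j ∈ Finset.univ.filter (· ≠ l.2),
          Q l.1 j l.2 * x s (l.1, j) / x s l * (p s l - p s (l.1, j)) := by
        apply Finset.sum_nonneg
        intro j hj
        have hjne : j ≠ l.2 := by simpa using (Finset.mem_filter.1 hj).2
        have hq : 0 ≤ Q l.1 j l.2 := (hQgen l.1).1 j l.2 hjne
        have hxr : 0 ≤ Q l.1 j l.2 * x s (l.1, j) / x s l :=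
          div_nonneg (mul_nonneg hq (hxpos s hs (l.1, j)).le) (hxpos s hs l).le
        have hpd : 0 ≤ p s l - p s (l.1, j) := by
          have := hpl (l.1, j); rw [hpk]; linarith
        exact mul_nonneg hxr hpd
      linarith
  have hup : p t k ≤ 1 := by
    by_contra hgt
    push_neg at hgt
    have het : (0:ℝ) < Real.exp t := Real.exp_pos _
    set ε : ℝ := (p t k - 1) * Real.exp (-t) / 2 with hεdef
    have hε : 0 < ε := by
      have := Real.exp_pos (-t)
      rw [hεdef]
      nlinarith
    have hkey := hupkey ε hε t ⟨ht, le_rfl⟩ k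
    have h4 : Real.exp (-t) * Real.exp t = 1 := by
      rw [← Real.exp_add]; simp
    rw [hεdef] at hkey
    nlinarith
  exact ⟨hplow t ⟨ht, le_rfl⟩ k, hup⟩
end

section
/- Consider the SIS model under multi-layer Markovian mobility. Let (p, x) : [0, ∞) → ℝ^{nm} × ℝ^{nm} be a solution of the coupled ODE system ṗ = (B F(x) − D − L(x)) p − diag(p) B F(x) p, ẋ^α = (Q^α)^⊤ x^α, with x(0) entrywise positive and p(0) ∈ [0,1]^{nm}. If p(0) > 0 (entrywise nonnegative and not identically zero), then p(t) ≫ 0 (all entries strictly positive) for all t > 0. -/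
open Matrix Finset Filter

open SISMobility

section Aux
open Filter Set

/-- Core comparison: if `f' = g + h f` with `g ≥ 0` on `[a,b]` and `h` continuous,
then `f a * exp(∫ h) ≤ f b`. -/
lemma comp_mono {f g h : ℝ → ℝ} {a b : ℝ} (hab : a ≤ b)
    (hh : Continuous h)
    (hf : ∀ t ∈ Set.Icc a b, HasDerivAt f (g t + h t * f t) t)
    (hg : ∀ t ∈ Set.Icc a b, 0 ≤ g t) :
    f a * Real.exp (∫ s in a..b, h s) ≤ f b := by
  set H : ℝ → ℝ := fun t => ∫ s in a..t, h s with hH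
  have hHd : ∀ t : ℝ, HasDerivAt H (h t) t := fun t =>
    intervalIntegral.integral_hasDerivAt_right (hh.intervalIntegrable a t)
      (ContinuousAt.stronglyMeasurableAtFilter isOpen_univ (fun x _ => hh.continuousAt) t
        (Set.mem_univ t)) hh.continuousAt
  set φ : ℝ → ℝ := fun t => f t * Real.exp (-(H t)) with hφ
  have hφd : ∀ t ∈ Set.Icc a b, HasDerivAt φ (g t * Real.exp (-(H t))) t := by
    intro t ht
    have : HasDerivAt (fun y => f y * Real.exp (-(H y)))
        ((g t + h t * f t) * Real.exp (-(H t)) + f t * (Real.exp (-(H t)) * -(h t))) t :=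
      (hf t ht).mul ((hHd t).neg.exp)
    convert this using 1
    ring
  have hmono : MonotoneOn φ (Set.Icc a b) := by
    apply monotoneOn_of_deriv_nonneg (convex_Icc a b)
    · intro t ht
      exact ((hφd t ht).continuousAt).continuousWithinAt
    · intro t ht
      rw [interior_Icc] at ht
      exact ((hφd t (Ioo_subset_Icc_self ht)).differentiableAt).differentiableWithinAt
    · intro t ht
      rw [interior_Icc] at ht
      rw [(hφd t (Ioo_subset_Icc_self ht)).deriv]
      exact mul_nonneg (hg t (Ioo_subset_Icc_self ht)) (Real.exp_pos _).le
  have h1 : φ a ≤ φ b := hmono (Set.left_mem_Icc.2 hab) (Set.right_mem_Icc.2 hab) hab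
  have hHa : H a = 0 := intervalIntegral.integral_same
  have : f a * Real.exp (-(H a)) ≤ f b * Real.exp (-(H b)) := h1
  rw [hHa] at this
  simp only [neg_zero, Real.exp_zero, mul_one] at this
  calc f a * Real.exp (H b) ≤ (f b * Real.exp (-(H b))) * Real.exp (H b) := by
        apply mul_le_mul_of_nonneg_right this (Real.exp_pos _).le
    _ = f b := by rw [mul_assoc, ← Real.exp_add]; simp

/-- Strict version when `g > 0` on `[a,b]` and `a < b`. -/
lemma comp_strict {f g h : ℝ → ℝ} {a b : ℝ} (hab : a < b)
    (hh : Continuous h)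
    (hf : ∀ t ∈ Set.Icc a b, HasDerivAt f (g t + h t * f t) t)
    (hg : ∀ t ∈ Set.Icc a b, 0 < g t)
    (hfa : 0 ≤ f a) : 0 < f b := by
  set H : ℝ → ℝ := fun t => ∫ s in a..t, h s with hH
  have hHd : ∀ t : ℝ, HasDerivAt H (h t) t := fun t =>
    intervalIntegral.integral_hasDerivAt_right (hh.intervalIntegrable a t)
      (ContinuousAt.stronglyMeasurableAtFilter isOpen_univ (fun x _ => hh.continuousAt) t
        (Set.mem_univ t)) hh.continuousAt
  set φ : ℝ → ℝ := fun t => f t * Real.exp (-(H t)) with hφ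
  have hφd : ∀ t ∈ Set.Icc a b, HasDerivAt φ (g t * Real.exp (-(H t))) t := by
    intro t ht
    have : HasDerivAt (fun y => f y * Real.exp (-(H y)))
        ((g t + h t * f t) * Real.exp (-(H t)) + f t * (Real.exp (-(H t)) * -(h t))) t :=
      (hf t ht).mul ((hHd t).neg.exp)
    convert this using 1
    ring
  have hmono : StrictMonoOn φ (Set.Icc a b) := by
    apply strictMonoOn_of_deriv_pos (convex_Icc a b)
    · intro t ht
      exact ((hφd t ht).continuousAt).continuousWithinAt
    · intro t ht
      rw [interior_Icc] at ht
      rw [(hφd t (Ioo_subset_Icc_self ht)).deriv]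
      exact mul_pos (hg t (Ioo_subset_Icc_self ht)) (Real.exp_pos _)
  have h1 : φ a < φ b := hmono (Set.left_mem_Icc.2 hab.le) (Set.right_mem_Icc.2 hab.le) hab
  have hHa : H a = 0 := intervalIntegral.integral_same
  have hφa : 0 ≤ φ a := by
    simp only [hφ, hHa, neg_zero, Real.exp_zero, mul_one]; exact hfa
  have hφb : 0 < φ b := lt_of_le_of_lt hφa h1
  have := mul_pos hφb (Real.exp_pos (H b))
  calc (0:ℝ) < φ b * Real.exp (H b) := this
    _ = f b := by simp only [hφ]; rw [mul_assoc, ← Real.exp_add]; simp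

/-- First-exit lemma: if a finite family of functions is continuous on `[0,b]`,
strictly positive at `0`, and some coordinate is nonpositive somewhere in `[0,b]`,
then there is a first time `T` where some coordinate vanishes. -/
lemma first_exit {ι : Type*} [Finite ι] {u : ℝ → ι → ℝ} {b : ℝ}
    (hc : ∀ t ∈ Set.Icc (0:ℝ) b, ∀ k, ContinuousAt (fun s => u s k) t)
    (h0 : ∀ k, 0 < u 0 k)
    (hne : ∃ t ∈ Set.Icc (0:ℝ) b, ∃ k, u t k ≤ 0) :
    ∃ T ∈ Set.Ioc (0:ℝ) b, ∃ k, u T k = 0 ∧ (∀ s ∈ Set.Ico (0:ℝ) T, ∀ l, 0 < u s l) ∧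
      (∀ l, 0 ≤ u T l) := by
  classical
  set E : Set ℝ := {t | t ∈ Set.Icc (0:ℝ) b ∧ ∃ k, u t k ≤ 0} with hE
  obtain ⟨t0, ht0, k0, hk0⟩ := hne
  have hEne : E.Nonempty := ⟨t0, ht0, k0, hk0⟩
  have hbdd : BddBelow E := ⟨0, fun e he => he.1.1⟩
  set T := sInf E with hT
  have hT0 : 0 ≤ T := le_csInf hEne fun e he => he.1.1
  have hTb : T ≤ b := le_trans (csInf_le hbdd ⟨ht0, k0, hk0⟩) ht0.2
  have hTIcc : T ∈ Set.Icc (0:ℝ) b := ⟨hT0, hTb⟩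
  have hlow : ∀ s ∈ Set.Ico (0:ℝ) T, ∀ l, 0 < u s l := by
    intro s hs l
    by_contra hle
    push_neg at hle
    have hsE : s ∈ E := ⟨⟨hs.1, le_trans hs.2.le hTb⟩, l, hle⟩
    exact absurd (csInf_le hbdd hsE) (not_le.2 hs.2)
  have hTk : ∃ k, u T k ≤ 0 := by
    by_contra hpos
    push_neg at hpos
    have hev : ∀ᶠ s in nhds T, ∀ k, 0 < u s k := by
      rw [Filter.eventually_all]
      intro k
      exact (hc T hTIcc k).eventually (eventually_gt_nhds (hpos k))
    obtain ⟨δ, hδ, hball⟩ := Metric.eventually_nhds_iff.1 hev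
    obtain ⟨e, heE, helt⟩ := exists_lt_of_csInf_lt hEne (lt_add_of_pos_right T hδ)
    have hTe : T ≤ e := csInf_le hbdd heE
    have : dist e T < δ := by rw [Real.dist_eq, abs_of_nonneg (by linarith)]; linarith
    obtain ⟨k, hk⟩ := heE.2
    exact absurd (hball this k) (not_lt.2 hk)
  have hTpos : 0 < T := by
    rcases hTk with ⟨k, hk⟩
    rcases lt_or_eq_of_le hT0 with h | h
    · exact h
    · exact absurd hk (not_le.2 (h ▸ h0 k))
  have hTnn : ∀ l, 0 ≤ u T l := by
    intro l
    have htend : Filter.Tendsto (fun s => u s l) (nhdsWithin T (Set.Iio T)) (nhds (u T l)) :=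
      (hc T hTIcc l).continuousWithinAt
    refine ge_of_tendsto htend ?_
    filter_upwards [Ioo_mem_nhdsLT_of_mem (Set.mem_Ioc.2 ⟨hTpos, le_refl T⟩)] with s hs
    exact (hlow s ⟨hs.1.le, hs.2⟩ l).le
  obtain ⟨k, hk⟩ := hTk
  exact ⟨T, ⟨hTpos, hTb⟩, k, le_antisymm hk (hTnn k), hlow, hTnn⟩

/-- If `f > 0` on `[0,T)`, `f T = 0` and `f` is differentiable at `T > 0`,
then `f'(T) ≤ 0`. -/
lemma deriv_nonpos_at_zero {f : ℝ → ℝ} {T d : ℝ} (hT : 0 < T)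
    (hf : HasDerivAt f d T) (hpos : ∀ s ∈ Set.Ico (0:ℝ) T, 0 < f s) (hfT : f T = 0) : d ≤ 0 := by
  have h1 : HasDerivWithinAt f d (Set.Iio T) T := hf.hasDerivWithinAt
  rw [hasDerivWithinAt_iff_tendsto_slope] at h1
  have hset : Set.Iio T \ {T} = Set.Iio T := Set.diff_singleton_eq_self (by simp)
  rw [hset] at h1
  refine le_of_tendsto h1 ?_
  filter_upwards [Ioo_mem_nhdsLT_of_mem (Set.mem_Ioc.2 ⟨hT, le_refl T⟩)] with s hs
  rw [slope_def_field, hfT]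
  have h2 : 0 < f s := hpos s ⟨hs.1.le, hs.2⟩
  have h3 : s - T < 0 := by linarith [hs.2]
  have : (f s - 0) / (s - T) < 0 := div_neg_of_pos_of_neg (by linarith) h3
  linarith [this]

end Aux

section SISAux

open Finset

variable {n m : ℕ} (β δ : Fin n → ℝ) (Q : Fin m → Matrix (Fin n) (Fin n) ℝ)

/-- The linear part `M = B F(x) − D − L(x)` of the infection dynamics. -/
noncomputable def Mt (x : Idx n m → ℝ) : Matrix (Idx n m) (Idx n m) ℝ :=
  Bmat n m β * Fmat x - Dmat n m δ - Lmat Q x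

/-- The matrix `B F(x)`. -/
noncomputable def BFm (x : Idx n m → ℝ) : Matrix (Idx n m) (Idx n m) ℝ :=
  Bmat n m β * Fmat x

lemma BFm_apply (x : Idx n m → ℝ) (k l : Idx n m) :
    BFm β x k l = if l.2 = k.2 then β k.2 * (x (l.1, k.2) / ∑ η, x (η, k.2)) else 0 := by
  rw [BFm, Bmat, Matrix.diagonal_mul, Fmat]
  split_ifs <;> ring

lemma Mt_apply (x : Idx n m → ℝ) (k l : Idx n m) :
    Mt β δ Q x k l = BFm β x k l - Dmat n m δ k l - Lmat Q x k l := by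
  simp [Mt, BFm, Matrix.sub_apply]

/-- The off-diagonal inhomogeneous part of the `k`-th infection equation. -/
noncomputable def gf (x p : Idx n m → ℝ) (k : Idx n m) : ℝ :=
  ∑ l ∈ Finset.univ.erase k, Mt β δ Q x k l * p l

/-- The coefficient of `p k` in the `k`-th infection equation. -/
noncomputable def hf (x p : Idx n m → ℝ) (k : Idx n m) : ℝ :=
  Mt β δ Q x k k - ∑ l, BFm β x k l * p l

lemma pRHS_eq (x p : Idx n m → ℝ) (k : Idx n m) :
    pRHS β δ Q x p k = gf β δ Q x p k + hf β δ Q x p k * p k := by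
  have h1 : ∑ l ∈ Finset.univ.erase k, Mt β δ Q x k l * p l + Mt β δ Q x k k * p k
      = ∑ l, Mt β δ Q x k l * p l := Finset.sum_erase_add _ _ (Finset.mem_univ k)
  have h2 : pRHS β δ Q x p k
      = ∑ l, Mt β δ Q x k l * p l - p k * ∑ l, BFm β x k l * p l := by
    rw [pRHS, Pi.sub_apply, Mt, BFm]
    simp only [Matrix.mulVec, dotProduct, Matrix.diagonal_mul, Finset.mul_sum]
    congr 1
    apply Finset.sum_congr rfl
    intro l _
    ring
  rw [h2, gf, hf, ← h1]
  ring

lemma S_pos {x : Idx n m → ℝ} (hm : 0 < m) (hx : ∀ k, 0 < x k) (i : Fin n) :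
    0 < ∑ η, x (η, i) := by
  haveI : Nonempty (Fin m) := Fin.pos_iff_nonempty.1 hm
  exact Finset.sum_pos (fun η _ => hx (η, i)) Finset.univ_nonempty

lemma BFm_nonneg {x : Idx n m → ℝ} (hβ : ∀ i, 0 ≤ β i) (hm : 0 < m) (hx : ∀ k, 0 < x k)
    (k l : Idx n m) : 0 ≤ BFm β x k l := by
  rw [BFm_apply]
  split_ifs
  · exact mul_nonneg (hβ k.2) (div_nonneg (hx _).le (S_pos hm hx k.2).le)
  · exact le_refl 0

lemma Mt_offdiag_nonneg (hQgen : ∀ α, IsGenerator (Q α)) (hβ : ∀ i, 0 ≤ β i) (hm : 0 < m)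
    {x : Idx n m → ℝ} (hx : ∀ k, 0 < x k) {k l : Idx n m} (hne : l ≠ k) :
    0 ≤ Mt β δ Q x k l := by
  rw [Mt_apply]
  have hD : Dmat n m δ k l = 0 := Matrix.diagonal_apply_ne _ (Ne.symm hne)
  have hBF : 0 ≤ BFm β x k l := BFm_nonneg β hβ hm hx k l
  have hL : Lmat Q x k l ≤ 0 := by
    rw [Lmat]
    split_ifs with h1 h2
    · exact absurd (Prod.ext h1 h2) (Ne.symm hne)
    · have hq : 0 ≤ Q k.1 l.2 k.2 := (hQgen k.1).1 l.2 k.2 (fun h => h2 h.symm)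
      have : 0 ≤ Q k.1 l.2 k.2 * x (k.1, l.2) / x k :=
        div_nonneg (mul_nonneg hq (hx _).le) (hx k).le
      linarith
    · exact le_refl 0
  rw [hD]
  linarith

lemma Mt_move_pos {x : Idx n m → ℝ} (hx : ∀ k, 0 < x k) (α : Fin m) {a b : Fin n}
    (hab : a ≠ b) (hq : 0 < Q α a b) : 0 < Mt β δ Q x (α, b) (α, a) := by
  rw [Mt_apply]
  have hBF : BFm β x (α, b) (α, a) = 0 := by
    rw [BFm_apply]
    exact if_neg hab
  have hD : Dmat n m δ (α, b) (α, a) = 0 :=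
    Matrix.diagonal_apply_ne _ (by simp [Prod.ext_iff, Ne.symm hab])
  have hL : Lmat Q x (α, b) (α, a) = -(Q α a b * x (α, a) / x (α, b)) := by
    simp [Lmat, Ne.symm hab]
  rw [hBF, hD, hL]
  have : 0 < Q α a b * x (α, a) / x (α, b) :=
    div_pos (mul_pos hq (hx _)) (hx _)
  linarith

lemma Mt_cross_pos (hβ : ∀ i, 0 < β i) (hm : 0 < m) {x : Idx n m → ℝ} (hx : ∀ k, 0 < x k)
    {α γ : Fin m} (hne : α ≠ γ) (i : Fin n) : 0 < Mt β δ Q x (γ, i) (α, i) := by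
  rw [Mt_apply]
  have hBF : BFm β x (γ, i) (α, i) = β i * (x (α, i) / ∑ η, x (η, i)) := by
    rw [BFm_apply]
    exact if_pos rfl
  have hD : Dmat n m δ (γ, i) (α, i) = 0 :=
    Matrix.diagonal_apply_ne _ (by simp [Prod.ext_iff, Ne.symm hne])
  have hL : Lmat Q x (γ, i) (α, i) = 0 := by
    rw [Lmat, if_neg (by exact hne.symm : (γ, i).1 ≠ (α, i).1)]
  rw [hBF, hD, hL]
  have : 0 < β i * (x (α, i) / ∑ η, x (η, i)) :=
    mul_pos (hβ i) (div_pos (hx _) (S_pos hm hx i))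
  linarith

lemma contAt_BFm {x : ℝ → Idx n m → ℝ} {τ : ℝ} (hm : 0 < m)
    (hxc : ∀ k, ContinuousAt (fun s => x s k) τ) (hxpos : ∀ k, 0 < x τ k) (k l : Idx n m) :
    ContinuousAt (fun s => BFm β (x s) k l) τ := by
  simp only [BFm_apply]
  split_ifs
  · exact continuousAt_const.mul ((hxc _).div
      (tendsto_finset_sum _ fun η _ => hxc (η, k.2)) (ne_of_gt (S_pos hm hxpos k.2)))
  · exact continuousAt_const

lemma contAt_Lmat {x : ℝ → Idx n m → ℝ} {τ : ℝ}
    (hxc : ∀ k, ContinuousAt (fun s => x s k) τ) (hxpos : ∀ k, 0 < x τ k) (k l : Idx n m) :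
    ContinuousAt (fun s => Lmat Q (x s) k l) τ := by
  unfold Lmat
  split_ifs
  · exact tendsto_finset_sum _ fun j _ =>
      (continuousAt_const.mul (hxc (k.1, j))).div (hxc k) (ne_of_gt (hxpos k))
  · exact ((continuousAt_const.mul (hxc (k.1, l.2))).div (hxc k) (ne_of_gt (hxpos k))).neg
  · exact continuousAt_const

lemma contAt_Mt {x : ℝ → Idx n m → ℝ} {τ : ℝ} (hm : 0 < m)
    (hxc : ∀ k, ContinuousAt (fun s => x s k) τ) (hxpos : ∀ k, 0 < x τ k) (k l : Idx n m) :
    ContinuousAt (fun s => Mt β δ Q (x s) k l) τ := by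
  simp only [Mt_apply]
  exact ((contAt_BFm β hm hxc hxpos k l).sub continuousAt_const).sub
    (contAt_Lmat Q hxc hxpos k l)

lemma contAt_hf {x p : ℝ → Idx n m → ℝ} {τ : ℝ} (hm : 0 < m)
    (hxc : ∀ k, ContinuousAt (fun s => x s k) τ) (hxpos : ∀ k, 0 < x τ k)
    (hpc : ∀ k, ContinuousAt (fun s => p s k) τ) (k : Idx n m) :
    ContinuousAt (fun s => hf β δ Q (x s) (p s) k) τ := by
  unfold hf
  exact (contAt_Mt β δ Q hm hxc hxpos k k).sub
    (tendsto_finset_sum _ fun l _ => (contAt_BFm β hm hxc hxpos k l).mul (hpc l))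

end SISAux

/-- Theorem 2 (i), second part: for the SIS model under multi-layer
Markovian mobility, if `x(0) ≫ 0`, `p(0) ∈ [0,1]^{nm}` and `p(0) > 0` (entrywise
nonnegative and not identically zero), then `p(t) ≫ 0` for all `t > 0`. -/
theorem sis_eventually_positive
    (n m : ℕ) (hn : 2 ≤ n) (hm : 1 ≤ m)
    (Q : Fin m → Matrix (Fin n) (Fin n) ℝ)
    (hQgen : ∀ α, IsGenerator (Q α)) (hQirr : ∀ α, StronglyConnected (Q α))
    (β δ : Fin n → ℝ) (hβ : ∀ i, 0 < β i) (hδ : ∀ i, 0 ≤ δ i)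
    (p x : ℝ → Idx n m → ℝ)
    (hsol : IsSolution β δ Q p x)
    (hx0 : ∀ k, 0 < x 0 k)
    (hp0 : ∀ k, p 0 k ∈ Set.Icc (0 : ℝ) 1)
    (hp0ne : p 0 ≠ 0) :
    ∀ t : ℝ, 0 < t → ∀ k, 0 < p t k := by
  classical
  have hm' : 0 < m := hm
  -- continuity of x and p at nonnegative times
  have hxc : ∀ τ : ℝ, 0 ≤ τ → ∀ k, ContinuousAt (fun s => x s k) τ :=
    fun τ hτ k => (hsol τ hτ k).2.continuousAt
  have hpc : ∀ τ : ℝ, 0 ≤ τ → ∀ k, ContinuousAt (fun s => p s k) τ :=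
    fun τ hτ k => (hsol τ hτ k).1.continuousAt
  -- Stage 1 : positivity of x for all nonnegative times
  have hxpos : ∀ τ : ℝ, 0 ≤ τ → ∀ k, 0 < x τ k := by
    intro τ hτ k
    by_contra hcon
    push_neg at hcon
    obtain ⟨T, hTmem, k', hk'0, hlow, hTnn⟩ :=
      first_exit (u := x) (b := τ)
        (fun s hs l => hxc s hs.1 l) hx0 ⟨τ, ⟨hτ, le_refl τ⟩, k, hcon⟩
    have hxnn : ∀ s ∈ Set.Icc (0:ℝ) T, ∀ l, 0 ≤ x s l := by
      intro s hs l
      rcases lt_or_eq_of_le hs.2 with h | h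
      · exact (hlow s ⟨hs.1, h⟩ l).le
      · rw [h]; exact hTnn l
    have hkey := comp_mono (a := 0) (b := T) (f := fun s => x s k')
      (g := fun s => ∑ j ∈ Finset.univ.erase k'.2, Q k'.1 j k'.2 * x s (k'.1, j))
      (h := fun _ => Q k'.1 k'.2 k'.2) hTmem.1.le continuous_const
      (by
        intro s hs
        have hd := (hsol s hs.1 k').2
        have heq : xRHS Q (x s) k'
            = (∑ j ∈ Finset.univ.erase k'.2, Q k'.1 j k'.2 * x s (k'.1, j))
              + Q k'.1 k'.2 k'.2 * x s k' := by
          rw [xRHS, ← Finset.sum_erase_add _ _ (Finset.mem_univ k'.2)]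
        rw [heq] at hd
        exact hd)
      (by
        intro s hs
        apply Finset.sum_nonneg
        intro j hj
        exact mul_nonneg ((hQgen k'.1).1 j k'.2 (Finset.ne_of_mem_erase hj))
          (hxnn s hs (k'.1, j)))
    have hkey2 : x 0 k' * Real.exp (∫ s in (0:ℝ)..T, Q k'.1 k'.2 k'.2) ≤ x T k' := hkey
    rw [hk'0] at hkey2
    have : 0 < x 0 k' * Real.exp (∫ s in (0:ℝ)..T, Q k'.1 k'.2 k'.2) :=
      mul_pos (hx0 k') (Real.exp_pos _)
    linarith
  -- Stage 2 : nonnegativity of p for all nonnegative times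
  have hpnn : ∀ τ : ℝ, 0 ≤ τ → ∀ k, 0 ≤ p τ k := by
    intro τ hτ k
    -- a uniform bound on the coefficients on [0, τ]
    set G : ℝ → ℝ := fun s => ∑ k : Idx n m,
      ((∑ l ∈ Finset.univ.erase k, Mt β δ Q (x s) k l) + |hf β δ Q (x s) (p s) k|) with hG
    have hGc : ContinuousOn G (Set.Icc 0 τ) := by
      intro s hs
      have h1 : ContinuousAt G s := by
        rw [hG]
        exact tendsto_finset_sum _ fun k _ =>
          (((tendsto_finset_sum _ fun l _ =>
            contAt_Mt β δ Q hm' (hxc s hs.1) (hxpos s hs.1) k l) : ContinuousAt _ s).add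
          ((contAt_hf β δ Q hm' (hxc s hs.1) (hxpos s hs.1) (hpc s hs.1) k).abs) :
            ContinuousAt _ s)
      exact h1.continuousWithinAt
    obtain ⟨C0, hC0⟩ := isCompact_Icc.exists_bound_of_continuousOn hGc
    set C : ℝ := max C0 0 + 1 with hC
    have key : ∀ ε : ℝ, 0 < ε → ∀ s ∈ Set.Icc (0:ℝ) τ, ∀ l, 0 < p s l + ε * Real.exp (C * s) := by
      intro ε hε
      by_contra hcon
      push_neg at hcon
      obtain ⟨s0, hs0, l0, hl0⟩ := hcon
      obtain ⟨T, hTmem, k', hk'0, hlow, hTnn⟩ :=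
        first_exit (u := fun s l => p s l + ε * Real.exp (C * s)) (b := τ)
          (fun s hs l => (hpc s hs.1 l).add
            (continuousAt_const.mul ((Real.continuous_exp.comp
              (continuous_const.mul continuous_id)).continuousAt)))
          (fun l => by
            have := (hp0 l).1
            simp only [mul_zero, Real.exp_zero, mul_one]
            linarith)
          ⟨s0, hs0, l0, hl0⟩
      -- the derivative at time T
      have hd : HasDerivAt (fun s => p s k' + ε * Real.exp (C * s))
          (pRHS β δ Q (x T) (p T) k' + ε * (Real.exp (C * T) * C)) T := by
        have h1 := (hsol T hTmem.1.le k').1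
        have h2 : HasDerivAt (fun s : ℝ => ε * Real.exp (C * s))
            (ε * (Real.exp (C * T) * C)) T := by
          have h3 : HasDerivAt (fun s : ℝ => C * s) (C * 1) T :=
            (hasDerivAt_id T).const_mul C
          have h4 : HasDerivAt (fun s : ℝ => ε * Real.exp (C * s))
              (ε * (Real.exp (C * T) * (C * 1))) T := h3.exp.const_mul ε
          convert h4 using 1
          ring
        exact h1.add h2
      have hle : pRHS β δ Q (x T) (p T) k' + ε * (Real.exp (C * T) * C) ≤ 0 :=
        deriv_nonpos_at_zero hTmem.1 hd (fun s hs => hlow s hs k') hk'0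
      -- the lower estimate on the derivative
      set e : ℝ := ε * Real.exp (C * T) with he
      have hepos : 0 < e := mul_pos hε (Real.exp_pos _)
      have hpT : p T k' = -e := by
        have : p T k' + e = 0 := hk'0
        linarith
      have hplT : ∀ l, -e ≤ p T l := fun l => by have := hTnn l; linarith
      have hMnn : ∀ l ∈ Finset.univ.erase k', 0 ≤ Mt β δ Q (x T) k' l := fun l hl =>
        Mt_offdiag_nonneg β δ Q hQgen (fun i => (hβ i).le) hm' (hxpos T hTmem.1.le)
          (Finset.ne_of_mem_erase hl)
      have hgbound : (∑ l ∈ Finset.univ.erase k', Mt β δ Q (x T) k' l) * (-e)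
          ≤ gf β δ Q (x T) (p T) k' := by
        rw [Finset.sum_mul, gf]
        exact Finset.sum_le_sum fun l hl =>
          mul_le_mul_of_nonneg_left (hplT l) (hMnn l hl)
      have hhbound : -(|hf β δ Q (x T) (p T) k'| * e) ≤ hf β δ Q (x T) (p T) k' * p T k' := by
        rw [hpT]
        have h1 := le_abs_self (hf β δ Q (x T) (p T) k')
        nlinarith [hepos.le]
      have hterm : (∑ l ∈ Finset.univ.erase k', Mt β δ Q (x T) k' l)
          + |hf β δ Q (x T) (p T) k'| ≤ C0 := by
        have h1 : ∀ k'' ∈ (Finset.univ : Finset (Idx n m)),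
            0 ≤ (∑ l ∈ Finset.univ.erase k'', Mt β δ Q (x T) k'' l)
              + |hf β δ Q (x T) (p T) k''| := by
          intro k'' _
          have h2 : 0 ≤ ∑ l ∈ Finset.univ.erase k'', Mt β δ Q (x T) k'' l :=
            Finset.sum_nonneg fun l hl =>
              Mt_offdiag_nonneg β δ Q hQgen (fun i => (hβ i).le) hm' (hxpos T hTmem.1.le)
                (Finset.ne_of_mem_erase hl)
          have h3 := abs_nonneg (hf β δ Q (x T) (p T) k'')
          linarith
        have h2 := Finset.single_le_sum h1 (Finset.mem_univ k')
        have h3 := hC0 T (Set.mem_Icc.2 ⟨hTmem.1.le, hTmem.2⟩)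
        rw [Real.norm_eq_abs] at h3
        calc (∑ l ∈ Finset.univ.erase k', Mt β δ Q (x T) k' l)
              + |hf β δ Q (x T) (p T) k'| ≤ G T := by rw [hG]; exact h2
          _ ≤ |G T| := le_abs_self _
          _ ≤ C0 := h3
      have hEC : ε * (Real.exp (C * T) * C) = e * C := by rw [he]; ring
      have hC1 : C0 + 1 ≤ C := by
        rw [hC]
        have := le_max_left C0 (0:ℝ)
        linarith
      have hfinal : 0 < pRHS β δ Q (x T) (p T) k' + ε * (Real.exp (C * T) * C) := by
        rw [pRHS_eq, hEC]
        set a := ∑ l ∈ Finset.univ.erase k', Mt β δ Q (x T) k' l with ha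
        set b := |hf β δ Q (x T) (p T) k'| with hb
        have h8 : (a + b) * e ≤ C0 * e := mul_le_mul_of_nonneg_right hterm hepos.le
        have h9 : 0 ≤ (C - C0 - 1) * e := mul_nonneg (by linarith) hepos.le
        nlinarith [hgbound, hhbound]
      linarith
    -- conclude nonnegativity
    by_contra hneg
    push_neg at hneg
    have hε : 0 < -p τ k / Real.exp (C * τ) :=
      div_pos (by linarith) (Real.exp_pos _)
    have := key _ hε τ ⟨hτ, le_refl τ⟩ k
    rw [div_mul_cancel₀ _ (ne_of_gt (Real.exp_pos (C * τ)))] at this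
    linarith
  -- clamped coefficient functions (continuous on all of ℝ)
  have hclc : ∀ k : Idx n m, Continuous (fun r => hf β δ Q (x (max r 0)) (p (max r 0)) k) := by
    intro k
    rw [continuous_iff_continuousAt]
    intro r
    have h1 : ContinuousAt (fun s => hf β δ Q (x s) (p s) k) (max r 0) :=
      contAt_hf β δ Q hm' (hxc _ (le_max_right r 0)) (hxpos _ (le_max_right r 0))
        (hpc _ (le_max_right r 0)) k
    have h2 : ContinuousAt (fun r : ℝ => max r 0) r :=
      (continuous_id.max continuous_const).continuousAt
    exact Filter.Tendsto.comp h1 h2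
  have hderiv : ∀ k : Idx n m, ∀ r : ℝ, 0 ≤ r →
      HasDerivAt (fun s => p s k)
        (gf β δ Q (x r) (p r) k
          + (fun r' => hf β δ Q (x (max r' 0)) (p (max r' 0)) k) r * p r k) r := by
    intro k r hr
    have h1 := (hsol r hr k).1
    rw [pRHS_eq] at h1
    simpa [max_eq_left hr] using h1
  have hgnn : ∀ k : Idx n m, ∀ r : ℝ, 0 ≤ r → 0 ≤ gf β δ Q (x r) (p r) k := by
    intro k r hr
    exact Finset.sum_nonneg fun l hl => mul_nonneg
      (Mt_offdiag_nonneg β δ Q hQgen (fun i => (hβ i).le) hm' (hxpos r hr)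
        (Finset.ne_of_mem_erase hl)) (hpnn r hr l)
  -- persistence of positivity of a single coordinate
  have persist : ∀ k : Idx n m, ∀ a s : ℝ, 0 ≤ a → a ≤ s → 0 < p a k → 0 < p s k := by
    intro k a s ha has hpa
    have hkey := comp_mono (a := a) (b := s) (f := fun r => p r k)
      (g := fun r => gf β δ Q (x r) (p r) k)
      (h := fun r' => hf β δ Q (x (max r' 0)) (p (max r' 0)) k) has (hclc k)
      (fun r hr => hderiv k r (le_trans ha hr.1))
      (fun r hr => hgnn k r (le_trans ha hr.1))
    calc (0:ℝ) < p a k *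
          Real.exp (∫ u in a..s, hf β δ Q (x (max u 0)) (p (max u 0)) k) :=
        mul_pos hpa (Real.exp_pos _)
      _ ≤ p s k := hkey
  -- propagation of positivity along an edge of the coupling graph
  have step : ∀ k l : Idx n m, l ≠ k → (∀ r : ℝ, 0 ≤ r → 0 < Mt β δ Q (x r) k l) →
      (∀ r : ℝ, 0 < r → 0 < p r l) → ∀ r : ℝ, 0 < r → 0 < p r k := by
    intro k l hlk hM hl r hr
    have ha : 0 < r / 2 := by linarith
    have har : r / 2 < r := by linarith
    refine comp_strict (a := r/2) (b := r) (f := fun u => p u k)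
      (g := fun u => gf β δ Q (x u) (p u) k)
      (h := fun u => hf β δ Q (x (max u 0)) (p (max u 0)) k) har (hclc k)
      (fun u hu => hderiv k u (le_trans ha.le hu.1))
      (fun u hu => ?_) (hpnn (r/2) ha.le k)
    have hu0 : 0 < u := lt_of_lt_of_le ha hu.1
    refine Finset.sum_pos' (fun l' hl' => mul_nonneg
        (Mt_offdiag_nonneg β δ Q hQgen (fun i => (hβ i).le) hm' (hxpos u hu0.le)
          (Finset.ne_of_mem_erase hl')) (hpnn u hu0.le l'))
      ⟨l, Finset.mem_erase.2 ⟨hlk, Finset.mem_univ l⟩, mul_pos (hM u hu0.le) (hl u hu0)⟩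
  -- the initially infected coordinate
  obtain ⟨k0, hk0⟩ := Function.ne_iff.1 hp0ne
  have hk0' : p 0 k0 ≠ 0 := by simpa using hk0
  have hk0pos : 0 < p 0 k0 := lt_of_le_of_ne (hp0 k0).1 (Ne.symm hk0')
  -- induction along reachability in the coupling graph
  have hkey : ∀ k : Idx n m, Relation.ReflTransGen
      (fun a b : Idx n m => a ≠ b ∧ ∀ r : ℝ, 0 ≤ r → 0 < Mt β δ Q (x r) b a) k0 k →
      ∀ r : ℝ, 0 < r → 0 < p r k := by
    intro k hk
    induction hk with
    | refl => exact fun r hr => persist k0 0 r le_rfl hr.le hk0pos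
    | @tail b c hb hbc ih => exact step c b hbc.1 hbc.2 ih
  -- every coordinate is reachable from k0
  have hreach : ∀ k : Idx n m, Relation.ReflTransGen
      (fun a b : Idx n m => a ≠ b ∧ ∀ r : ℝ, 0 ≤ r → 0 < Mt β δ Q (x r) b a) k0 k := by
    intro k
    have hpath1 : Relation.ReflTransGen
        (fun a b : Idx n m => a ≠ b ∧ ∀ r : ℝ, 0 ≤ r → 0 < Mt β δ Q (x r) b a)
        (k0.1, k0.2) (k0.1, k.2) :=
      Relation.ReflTransGen.lift (fun j => (k0.1, j))
        (fun a b hab => ⟨by simp [Prod.ext_iff, hab.1], fun r hr =>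
          Mt_move_pos β δ Q (hxpos r hr) k0.1 hab.1 hab.2⟩) _ _
        (hQirr k0.1 k0.2 k.2)
    by_cases hγ : k0.1 = k.1
    · have heq : ((k0.1, k.2) : Idx n m) = k := by rw [hγ]
      rwa [heq] at hpath1
    · have htail : Relation.ReflTransGen
          (fun a b : Idx n m => a ≠ b ∧ ∀ r : ℝ, 0 ≤ r → 0 < Mt β δ Q (x r) b a)
          (k0.1, k0.2) (k.1, k.2) :=
        hpath1.tail ⟨by simp [Prod.ext_iff, hγ],
          fun r hr => Mt_cross_pos β δ Q hβ hm' (hxpos r hr) hγ k.2⟩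
      exact htail
  intro t ht k
  exact hkey k (hreach k) t ht
end

section
/- Consider the SIS model under multi-layer Markovian mobility, with F* = F(v) and L* = L(v). There exists a vector p̄ ∈ ℝ^{nm} with 0 ≪ p̄ ≤ 1 (all entries in (0,1]) satisfying the endemic-equilibrium equation (B F* − D − L* − diag(p̄) B F*) p̄ = 0 if and only if μ(B F* − D − L*) > 0, where μ(G) denotes the largest real part of an eigenvalue of G. -/
set_option maxHeartbeats 1600000


open Matrix Finset Filter

open SISMobility

set_option linter.unusedSectionVars false
set_option linter.unnecessarySimpa false
section SISPFInfra
namespace SISPF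
open Matrix Finset
variable {ι : Type*} [Fintype ι] [DecidableEq ι]

lemma mulVec_nonneg {A : Matrix ι ι ℝ} (hA : ∀ i j, 0 ≤ A i j) {x : ι → ℝ}
    (hx : ∀ j, 0 ≤ x j) (i : ι) : 0 ≤ A.mulVec x i := by
  simpa [Matrix.mulVec, dotProduct] using
    Finset.sum_nonneg fun j _ => mul_nonneg (hA i j) (hx j)

lemma mulVec_mono {A : Matrix ι ι ℝ} (hA : ∀ i j, 0 ≤ A i j) {x y : ι → ℝ}
    (h : ∀ j, x j ≤ y j) (i : ι) : A.mulVec x i ≤ A.mulVec y i := by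
  simp only [Matrix.mulVec, dotProduct]
  exact Finset.sum_le_sum fun j _ => mul_le_mul_of_nonneg_left (h j) (hA i j)

lemma pow_entry_nonneg {A : Matrix ι ι ℝ} (hA : ∀ i j, 0 ≤ A i j) :
    ∀ (k : ℕ) (i j : ι), 0 ≤ (A ^ k) i j := by
  intro k
  induction k with
  | zero => intro i j; rw [pow_zero, Matrix.one_apply]; split <;> norm_num
  | succ k ih =>
    intro i j
    rw [pow_succ, Matrix.mul_apply]
    exact Finset.sum_nonneg fun c _ => mul_nonneg (ih i c) (hA c j)

lemma one_add_entry_nonneg {A : Matrix ι ι ℝ} (hA : ∀ i j, 0 ≤ A i j) (i j : ι) :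
    0 ≤ (1 + A) i j := by
  rw [Matrix.add_apply, Matrix.one_apply]
  have := hA i j
  split <;> linarith

lemma pow_one_add_mono {A : Matrix ι ι ℝ} (hA : ∀ i j, 0 ≤ A i j) {k K : ℕ} (hkK : k ≤ K)
    (i j : ι) : ((1 + A) ^ k) i j ≤ ((1 + A) ^ K) i j := by
  induction K with
  | zero => simpa [Nat.le_zero.mp hkK] using le_refl _
  | succ K ih =>
    rcases Nat.lt_or_ge k (K + 1) with h | h
    · refine (ih (Nat.lt_succ_iff.mp h)).trans ?_
      rw [pow_succ, Matrix.mul_apply]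
      have h1 : ((1 + A) ^ K) i j * 1 ≤ ((1 + A) ^ K) i j * (1 + A) j j := by
        apply mul_le_mul_of_nonneg_left _ (pow_entry_nonneg (one_add_entry_nonneg hA) K i j)
        rw [Matrix.add_apply, Matrix.one_apply_eq]
        have := hA j j; linarith
      calc ((1 + A) ^ K) i j = ((1 + A) ^ K) i j * 1 := (mul_one _).symm
        _ ≤ ((1 + A) ^ K) i j * (1 + A) j j := h1
        _ ≤ ∑ c, ((1 + A) ^ K) i c * (1 + A) c j := by
            apply Finset.single_le_sum (f := fun c => ((1 + A) ^ K) i c * (1 + A) c j)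
              (fun c _ => mul_nonneg (pow_entry_nonneg (one_add_entry_nonneg hA) K i c)
                (one_add_entry_nonneg hA c j)) (Finset.mem_univ j)
    · have : k = K + 1 := le_antisymm hkK h
      subst this; exact le_refl _

lemma exists_pow_one_add_pos [Nonempty ι] {A : Matrix ι ι ℝ} (hA : ∀ i j, 0 ≤ A i j)
    (hirr : ∀ i j : ι, Relation.ReflTransGen (fun a b => 0 < A a b) i j) :
    ∃ K : ℕ, ∀ i j, 0 < ((1 + A) ^ K) i j := by
  have hex : ∀ i j : ι, ∃ k : ℕ, 0 < ((1 + A) ^ k) i j := by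
    intro i j
    induction hirr i j with
    | refl => exact ⟨0, by simp [Matrix.one_apply]⟩
    | @tail b c hab hbc ih =>
      obtain ⟨k, hk⟩ := ih
      refine ⟨k + 1, ?_⟩
      rw [pow_succ, Matrix.mul_apply]
      have hterm : 0 < ((1 + A) ^ k) i b * (1 + A) b c := by
        apply mul_pos hk
        rw [Matrix.add_apply, Matrix.one_apply]
        split
        · have := hA b b; linarith [hbc]
        · simpa using hbc
      refine lt_of_lt_of_le hterm ?_
      apply Finset.single_le_sum (f := fun d => ((1 + A) ^ k) i d * (1 + A) d c)
        (fun d _ => mul_nonneg (pow_entry_nonneg (one_add_entry_nonneg hA) k i d)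
          (one_add_entry_nonneg hA d c)) (Finset.mem_univ b)
  choose f hf using hex
  refine ⟨Finset.univ.sup (fun p : ι × ι => f p.1 p.2), fun i j => ?_⟩
  exact lt_of_lt_of_le (hf i j)
    (pow_one_add_mono hA (Finset.le_sup (f := fun p : ι × ι => f p.1 p.2)
      (Finset.mem_univ (i, j))) i j)


variable {ι : Type*} [Fintype ι] [DecidableEq ι]


theorem perron [Nonempty ι] {A : Matrix ι ι ℝ} (hA : ∀ i j, 0 ≤ A i j)
    {P : Matrix ι ι ℝ} (hPpos : ∀ i j, 0 < P i j) (hcomm : A * P = P * A)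
    (hPdiag : ∀ t : ℝ, 0 ≤ t → ∀ x : ι → ℝ, (A.mulVec x = fun k => t * x k) →
      ∃ c : ℝ, 0 < c ∧ P.mulVec x = fun k => c * x k) :
    ∃ (r : ℝ) (w : ι → ℝ), 0 ≤ r ∧ (∀ k, 0 < w k) ∧ (A.mulVec w = fun k => r * w k) ∧
      ∀ (t : ℝ) (x : ι → ℝ), (∀ k, 0 ≤ x k) → x ≠ 0 →
        (∀ k, t * x k ≤ A.mulVec x k) → t ≤ r := by
  classical
  set C : ℝ := ∑ i, ∑ j, A i j with hC
  have hC0 : 0 ≤ C := Finset.sum_nonneg fun i _ => Finset.sum_nonneg fun j _ => hA i j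
  have hbound : ∀ (t : ℝ) (x : ι → ℝ), (∀ k, 0 ≤ x k) → (∑ k, x k) = 1 →
      (∀ k, t * x k ≤ A.mulVec x k) → t ≤ C := by
    intro t x hx hsum hineq
    have hx1 : ∀ j, x j ≤ 1 := fun j => by
      rw [← hsum]; exact Finset.single_le_sum (fun k _ => hx k) (Finset.mem_univ j)
    have h2 : (∑ k, A.mulVec x k) ≤ C := by
      rw [hC]
      refine Finset.sum_le_sum fun i _ => ?_
      simp only [Matrix.mulVec, dotProduct]
      exact Finset.sum_le_sum fun j _ => by nlinarith [hA i j, hx j, hx1 j]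
    calc t = ∑ k, t * x k := by rw [← Finset.mul_sum, hsum, mul_one]
      _ ≤ ∑ k, A.mulVec x k := Finset.sum_le_sum fun k _ => hineq k
      _ ≤ C := h2
  set K : Set (ℝ × (ι → ℝ)) := {q | 0 ≤ q.1 ∧ q.1 ≤ C ∧ (∀ k, 0 ≤ q.2 k) ∧
      (∑ k, q.2 k) = 1 ∧ ∀ k, q.1 * q.2 k ≤ A.mulVec q.2 k} with hK
  have hmulcont : ∀ k : ι, Continuous fun q : ℝ × (ι → ℝ) => A.mulVec q.2 k := by
    intro k
    simp only [Matrix.mulVec, dotProduct]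
    exact continuous_finset_sum _ fun j _ =>
      (continuous_const.mul ((continuous_apply j).comp continuous_snd))
  have hKclosed : IsClosed K := by
    rw [hK]
    simp only [Set.setOf_and, Set.setOf_forall]
    refine ((isClosed_le continuous_const continuous_fst).inter
      (((isClosed_le continuous_fst continuous_const)).inter
      ((isClosed_iInter fun k => isClosed_le continuous_const
          ((continuous_apply k).comp continuous_snd)).inter
      ((isClosed_eq (continuous_finset_sum _ fun j _ =>
          (continuous_apply j).comp continuous_snd) continuous_const).inter
      (isClosed_iInter fun k => isClosed_le
        (continuous_fst.mul ((continuous_apply k).comp continuous_snd)) (hmulcont k))))))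
  have hsub : K ⊆ Set.Icc ((0 : ℝ), (fun _ => 0 : ι → ℝ)) (C, fun _ => 1) := by
    rintro ⟨t, x⟩ ⟨h1, h2, h3, h4, h5⟩
    refine ⟨⟨h1, fun k => h3 k⟩, ⟨h2, fun k => ?_⟩⟩
    rw [← h4]; exact Finset.single_le_sum (fun j _ => h3 j) (Finset.mem_univ k)
  have hKcomp : IsCompact K := (isCompact_Icc).of_isClosed_subset hKclosed hsub
  have hKne : K.Nonempty := by
    have hcard : (0:ℝ) < (Fintype.card ι : ℝ) := by
      exact_mod_cast Fintype.card_pos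
    refine ⟨(0, fun _ => (Fintype.card ι : ℝ)⁻¹), le_refl 0, hC0,
      fun k => by positivity, ?_, fun k => ?_⟩
    · rw [Finset.sum_const, Finset.card_univ, nsmul_eq_mul, mul_inv_cancel₀ hcard.ne']
    · rw [zero_mul]; exact mulVec_nonneg hA (fun j => by positivity) k
  obtain ⟨⟨r, x⟩, hqK, hqmax⟩ := hKcomp.exists_isMaxOn hKne continuous_fst.continuousOn
  obtain ⟨hr0, hrC, hx0, hxsum, hxineq⟩ := hqK
  have hmax : ∀ p ∈ K, p.1 ≤ r := fun p hp => hqmax hp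
  -- Collatz-Wielandt maximality
  have hCW : ∀ (t : ℝ) (y : ι → ℝ), (∀ k, 0 ≤ y k) → y ≠ 0 →
      (∀ k, t * y k ≤ A.mulVec y k) → t ≤ r := by
    intro t y hy hy0 hineq
    rcases le_or_gt t 0 with ht | ht
    · exact ht.trans hr0
    obtain ⟨k₀, hk₀⟩ := Function.ne_iff.mp hy0
    have hyk₀ : 0 < y k₀ := lt_of_le_of_ne (hy k₀) (Ne.symm hk₀)
    have hσ : 0 < ∑ k, y k :=
      lt_of_lt_of_le hyk₀ (Finset.single_le_sum (fun k _ => hy k) (Finset.mem_univ k₀))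
    set σ := ∑ k, y k with hσdef
    have hmem : (t, fun k => σ⁻¹ * y k) ∈ K := by
      have hy' : ∀ k, 0 ≤ σ⁻¹ * y k := fun k => mul_nonneg (by positivity) (hy k)
      have hsum' : (∑ k, σ⁻¹ * y k) = 1 := by
        rw [← Finset.mul_sum, ← hσdef, inv_mul_cancel₀ hσ.ne']
      have hineq' : ∀ k, t * (σ⁻¹ * y k) ≤ A.mulVec (fun k => σ⁻¹ * y k) k := by
        intro k
        have : A.mulVec (fun k => σ⁻¹ * y k) k = σ⁻¹ * A.mulVec y k := by
          simp only [Matrix.mulVec, dotProduct, Finset.mul_sum]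
          exact Finset.sum_congr rfl fun j _ => by ring
        have h3 : t * (σ⁻¹ * y k) = σ⁻¹ * (t * y k) := by ring
        rw [this, h3]
        exact mul_le_mul_of_nonneg_left (hineq k) (by positivity)
      exact ⟨ht.le, hbound t _ hy' hsum' hineq', hy', hsum', hineq'⟩
    exact hmax _ hmem
  -- P maps nonneg nonzero vectors to positive vectors
  have hPmap : ∀ (y : ι → ℝ), (∀ k, 0 ≤ y k) → y ≠ 0 → ∀ k, 0 < P.mulVec y k := by
    intro y hy hy0 k
    obtain ⟨k₀, hk₀⟩ := Function.ne_iff.mp hy0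
    have hyk₀ : 0 < y k₀ := lt_of_le_of_ne (hy k₀) (Ne.symm hk₀)
    have : 0 < P k k₀ * y k₀ := mul_pos (hPpos k k₀) hyk₀
    refine lt_of_lt_of_le this ?_
    simp only [Matrix.mulVec, dotProduct]
    exact Finset.single_le_sum (f := fun j => P k j * y j)
      (fun j _ => mul_nonneg (hPpos k j).le (hy j)) (Finset.mem_univ k₀)
  have hxne : x ≠ 0 := by
    intro h
    rw [h] at hxsum
    simp at hxsum
  by_cases hz0 : (fun k => A.mulVec x k - r * x k) = 0
  · -- eigenvector case
    have heig : A.mulVec x = fun k => r * x k := by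
      funext k
      have := congrFun hz0 k
      simp only [Pi.zero_apply] at this
      linarith
    obtain ⟨c, hc, hPx⟩ := hPdiag r hr0 x heig
    have hxpos : ∀ k, 0 < x k := by
      intro k
      have h1 : 0 < P.mulVec x k := hPmap x hx0 hxne k
      rw [hPx] at h1
      have h2 : 0 < c * x k := by simpa using h1
      nlinarith [hx0 k]
    exact ⟨r, x, hr0, hxpos, heig, hCW⟩
  · -- contradiction case
    exfalso
    set z : ι → ℝ := fun k => A.mulVec x k - r * x k with hzdef
    have hz : ∀ k, 0 ≤ z k := fun k => by
      have := hxineq k; simp only [hzdef]; linarith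
    set y := P.mulVec x with hydef
    set u := P.mulVec z with hudef
    have hy : ∀ k, 0 < y k := hPmap x hx0 hxne
    have hu : ∀ k, 0 < u k := hPmap z hz hz0
    have hAx : A.mulVec x = fun k => r * x k + z k := by
      funext k; simp only [hzdef]; ring
    have hAy : A.mulVec y = fun k => r * y k + u k := by
      have h1 : A.mulVec y = P.mulVec (A.mulVec x) := by
        rw [hydef, Matrix.mulVec_mulVec, Matrix.mulVec_mulVec, hcomm]
      rw [h1, hAx]
      funext k
      have : (fun k => r * x k + z k) = (r • x) + z := by funext j; simp [Pi.smul_apply]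
      rw [this, Matrix.mulVec_add, Matrix.mulVec_smul]
      simp [hydef, hudef]
    set ε := Finset.univ.inf' Finset.univ_nonempty (fun k => u k / y k) with hεdef
    have hε : 0 < ε := by
      rw [hεdef, Finset.lt_inf'_iff]
      exact fun k _ => div_pos (hu k) (hy k)
    have hyineq : ∀ k, (r + ε) * y k ≤ A.mulVec y k := by
      intro k
      have h1 : ε ≤ u k / y k := Finset.inf'_le _ (Finset.mem_univ k)
      have h2 : ε * y k ≤ u k := (le_div_iff₀ (hy k)).mp h1
      have := congrFun hAy k
      rw [this]; ring_nf; linarith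
    have hyne : y ≠ 0 := by
      intro h
      have := hy (Classical.arbitrary ι)
      rw [h] at this; simp at this
    have := hCW (r + ε) y (fun k => (hy k).le) hyne hyineq
    linarith


variable {ι : Type*} [Fintype ι] [DecidableEq ι]


theorem perron_irr [Nonempty ι] {A : Matrix ι ι ℝ} (hA : ∀ i j, 0 ≤ A i j)
    (hirr : ∀ i j : ι, Relation.ReflTransGen (fun a b => 0 < A a b) i j) :
    ∃ (r : ℝ) (w : ι → ℝ), 0 ≤ r ∧ (∀ k, 0 < w k) ∧ (A.mulVec w = fun k => r * w k) ∧
      ∀ (t : ℝ) (x : ι → ℝ), (∀ k, 0 ≤ x k) → x ≠ 0 →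
        (∀ k, t * x k ≤ A.mulVec x k) → t ≤ r := by
  obtain ⟨K₀, hP⟩ := exists_pow_one_add_pos hA hirr
  refine perron hA hP (((Commute.one_right A).add_right (Commute.refl A)).pow_right K₀) ?_
  intro t ht x hx
  refine ⟨(1 + t) ^ K₀, by positivity, ?_⟩
  have key : ∀ k : ℕ, ((1 + A) ^ k).mulVec x = fun j => (1 + t) ^ k * x j := by
    intro k
    induction k with
    | zero => funext j; simp [Matrix.one_mulVec]
    | succ k ih =>
      funext j
      rw [pow_succ, ← Matrix.mulVec_mulVec]
      have h1 : (1 + A).mulVec x = (1 + t) • x := by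
        funext i
        rw [Matrix.add_mulVec, Matrix.one_mulVec]
        have h2 := congrFun hx i
        simp only [Pi.add_apply, Pi.smul_apply, smul_eq_mul] at h2 ⊢
        rw [h2]; ring
      rw [h1, Matrix.mulVec_smul, ih]
      simp only [Pi.smul_apply, smul_eq_mul, pow_succ]
      ring
  exact key K₀

lemma mem_spectrum_iff_exists {M : Matrix ι ι ℂ} {t : ℂ} :
    t ∈ spectrum ℂ M ↔ ∃ z : ι → ℂ, z ≠ 0 ∧ M.mulVec z = t • z := by
  rw [spectrum.mem_iff]
  have h1 : ¬IsUnit (algebraMap ℂ (Matrix ι ι ℂ) t - M) ↔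
      (algebraMap ℂ (Matrix ι ι ℂ) t - M).det = 0 := by
    rw [Matrix.isUnit_iff_isUnit_det, isUnit_iff_ne_zero, not_not]
  rw [h1, ← Matrix.exists_mulVec_eq_zero_iff]
  constructor
  · rintro ⟨z, hz0, hz⟩
    refine ⟨z, hz0, ?_⟩
    rw [Matrix.sub_mulVec, Algebra.algebraMap_eq_smul_one, Matrix.smul_mulVec,
      Matrix.one_mulVec, sub_eq_zero] at hz
    exact hz.symm
  · rintro ⟨z, hz0, hz⟩
    refine ⟨z, hz0, ?_⟩
    rw [Matrix.sub_mulVec, Algebra.algebraMap_eq_smul_one, Matrix.smul_mulVec,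
      Matrix.one_mulVec, sub_eq_zero, hz]

lemma bddAbove_re_spectrum (M : Matrix ι ι ℂ) :
    BddAbove (Complex.re '' spectrum ℂ M) :=
  ((Matrix.finite_spectrum M).image Complex.re).bddAbove


variable {ι : Type*} [Fintype ι] [DecidableEq ι]

lemma mmatrix_inverse_positive [Nonempty ι] {S : Matrix ι ι ℝ}
    (hoff : ∀ i j, i ≠ j → S i j ≤ 0) (hrow : ∀ i, 0 < ∑ j, S i j) :
    (∀ x : ι → ℝ, (∀ k, 0 ≤ S.mulVec x k) → ∀ k, 0 ≤ x k) := by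
  intro x hx
  by_contra hneg
  push_neg at hneg
  obtain ⟨k₀, hk₀⟩ := hneg
  obtain ⟨i, -, hi⟩ := Finset.exists_min_image Finset.univ x ⟨k₀, Finset.mem_univ k₀⟩
  have hxi : x i < 0 := lt_of_le_of_lt (hi k₀ (Finset.mem_univ k₀)) hk₀
  have h1 : S.mulVec x i ≤ (∑ j, S i j) * x i := by
    rw [Finset.sum_mul]
    simp only [Matrix.mulVec, dotProduct]
    refine Finset.sum_le_sum fun j _ => ?_
    rcases eq_or_ne i j with rfl | hij
    · exact le_refl _
    · exact mul_le_mul_of_nonpos_left (hi j (Finset.mem_univ j)) (hoff i j hij)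
  have h2 : (∑ j, S i j) * x i < 0 := mul_neg_of_pos_of_neg (hrow i) hxi
  linarith [hx i]

lemma mmatrix_isUnit_det [Nonempty ι] {S : Matrix ι ι ℝ}
    (hoff : ∀ i j, i ≠ j → S i j ≤ 0) (hrow : ∀ i, 0 < ∑ j, S i j) :
    IsUnit S.det := by
  rw [isUnit_iff_ne_zero]
  intro hdet
  obtain ⟨y, hy0, hy⟩ := (Matrix.exists_mulVec_eq_zero_iff).mpr hdet
  have h1 := mmatrix_inverse_positive hoff hrow y (fun k => by rw [hy]; exact le_refl _)
  have h2 := mmatrix_inverse_positive hoff hrow (-y)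
    (fun k => by rw [Matrix.mulVec_neg, hy]; simp)
  refine hy0 (funext fun k => ?_)
  have h3 := h2 k
  simp only [Pi.neg_apply, Pi.zero_apply] at h3 ⊢
  linarith [h1 k]

lemma mmatrix_inv_entry_nonneg [Nonempty ι] {S : Matrix ι ι ℝ}
    (hoff : ∀ i j, i ≠ j → S i j ≤ 0) (hrow : ∀ i, 0 < ∑ j, S i j) (i j : ι) :
    0 ≤ S⁻¹ i j := by
  refine mmatrix_inverse_positive hoff hrow (fun c => S⁻¹ c j) (fun k => ?_) i
  have h1 : S.mulVec (fun c => S⁻¹ c j) k = (S * S⁻¹) k j := by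
    simp [Matrix.mulVec, dotProduct, Matrix.mul_apply]
  rw [h1, Matrix.mul_nonsing_inv S (mmatrix_isUnit_det hoff hrow), Matrix.one_apply]
  split <;> norm_num

lemma exists_fixed_point {e : ι → ℝ} {T : (ι → ℝ) → (ι → ℝ)} (he1 : e ≤ (1 : ι → ℝ))
    (hmono : ∀ p q : ι → ℝ, e ≤ p → p ≤ q → q ≤ 1 → T p ≤ T q)
    (hTe : e ≤ T e) (hT1 : T 1 ≤ 1) :
    ∃ p : ι → ℝ, e ≤ p ∧ p ≤ 1 ∧ T p = p := by
  haveI : Fact (e ≤ (1 : ι → ℝ)) := ⟨he1⟩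
  have hmem : ∀ p : Set.Icc e (1 : ι → ℝ), T (p : ι → ℝ) ∈ Set.Icc e (1 : ι → ℝ) := by
    intro p
    exact ⟨hTe.trans (hmono e p le_rfl p.2.1 p.2.2), (hmono p 1 p.2.1 p.2.2 le_rfl).trans hT1⟩
  set f : Set.Icc e (1 : ι → ℝ) →o Set.Icc e (1 : ι → ℝ) :=
    ⟨fun p => ⟨T p, hmem p⟩, fun p q hpq => by
      simp only [Subtype.mk_le_mk]
      exact hmono p q p.2.1 hpq q.2.2⟩ with hf
  have hfix := OrderHom.map_lfp f
  refine ⟨(OrderHom.lfp f : Set.Icc e (1 : ι → ℝ)), (OrderHom.lfp f).2.1,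
    (OrderHom.lfp f).2.2, ?_⟩
  exact congrArg Subtype.val hfix


end SISPF
end SISPFInfra



namespace SISHelper
open SISMobility Matrix Finset
set_option linter.unusedSectionVars false
variable {n m : ℕ}

lemma diag_mulVec {ι : Type*} [Fintype ι] [DecidableEq ι] (d y : ι → ℝ) :
    (Matrix.diagonal d).mulVec y = fun k => d k * y k := by
  funext k
  simp [Matrix.mulVec, dotProduct, Matrix.diagonal_apply, ite_mul,
    Finset.sum_ite_eq]

lemma W_apply (β : Fin n → ℝ) (v : Idx n m → ℝ) (k l : Idx n m) :
    (Bmat n m β * Fmat v) k l =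
      β k.2 * (if l.2 = k.2 then v (l.1, k.2) / ∑ η, v (η, k.2) else 0) := by
  simp [Bmat, Fmat, Matrix.diagonal_mul]

lemma L_diag (Q : Fin m → Matrix (Fin n) (Fin n) ℝ) (v : Idx n m → ℝ) (k : Idx n m) :
    Lmat Q v k k = ∑ j ∈ Finset.univ.erase k.2, Q k.1 j k.2 * v (k.1, j) / v k := by
  simp [Lmat, Finset.filter_ne']

lemma L_off_same (Q : Fin m → Matrix (Fin n) (Fin n) ℝ) (v : Idx n m → ℝ)
    {k l : Idx n m} (h1 : k.1 = l.1) (h2 : k.2 ≠ l.2) :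
    Lmat Q v k l = -(Q k.1 l.2 k.2 * v (k.1, l.2) / v k) := by
  simp [Lmat, h1, h2]

lemma L_off_diff (Q : Fin m → Matrix (Fin n) (Fin n) ℝ) (v : Idx n m → ℝ)
    {k l : Idx n m} (h1 : k.1 ≠ l.1) : Lmat Q v k l = 0 := by
  simp [Lmat, h1]

lemma L_row_sum (Q : Fin m → Matrix (Fin n) (Fin n) ℝ) (v : Idx n m → ℝ) (k : Idx n m) :
    ∑ l, Lmat Q v k l = 0 := by
  rw [Fintype.sum_prod_type]
  rw [Finset.sum_eq_single_of_mem k.1 (Finset.mem_univ _) (fun γ _ hγ =>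
    Finset.sum_eq_zero fun j _ => L_off_diff Q v (fun h => hγ (h.symm)))]
  rw [← Finset.add_sum_erase _ _ (Finset.mem_univ k.2)]
  have h1 : Lmat Q v k (k.1, k.2) =
      ∑ j ∈ Finset.univ.erase k.2, Q k.1 j k.2 * v (k.1, j) / v k := L_diag Q v k
  have h2 : ∀ j ∈ Finset.univ.erase k.2,
      Lmat Q v k (k.1, j) = -(Q k.1 j k.2 * v (k.1, j) / v k) := by
    intro j hj
    exact L_off_same Q v rfl (Ne.symm (Finset.ne_of_mem_erase hj))
  rw [h1, Finset.sum_congr rfl h2, Finset.sum_neg_distrib]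
  ring

end SISHelper

/-- Theorem 2 (iii): with `F* = F(v)` and `L* = L(v)`, there exists
`p̄` with `0 ≪ p̄ ≤ 1` satisfying the endemic-equilibrium equation
`(B F* − D − L* − diag(p̄) B F*) p̄ = 0` if and only if `μ(B F* − D − L*) > 0`. -/
theorem endemic_equilibrium_iff
    (n m : ℕ) (hn : 2 ≤ n) (hm : 1 ≤ m)
    (Q : Fin m → Matrix (Fin n) (Fin n) ℝ)
    (hQgen : ∀ α, IsGenerator (Q α)) (hQirr : ∀ α, StronglyConnected (Q α))
    (β δ : Fin n → ℝ) (hβ : ∀ i, 0 < β i) (hδ : ∀ i, 0 ≤ δ i)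
    (vα : Fin m → Fin n → ℝ) (hvαpos : ∀ α i, 0 < vα α i)
    (hvαnorm : ∀ α, ∑ i, vα α i = 1)
    (hvαeig : ∀ α i, ∑ j, Q α j i * vα α j = 0)
    (Npop : Fin m → ℝ) (hNpop : ∀ α, 0 < Npop α)
    (v : Idx n m → ℝ) (hv : ∀ k, v k = Npop k.1 * vα k.1 k.2) :
    (∃ pbar : Idx n m → ℝ, (∀ k, 0 < pbar k ∧ pbar k ≤ 1) ∧
        (Bmat n m β * Fmat v - Dmat n m δ - Lmat Q v -
          Matrix.diagonal pbar * (Bmat n m β * Fmat v)).mulVec pbar = 0)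
      ↔ 0 < muMax (Bmat n m β * Fmat v - Dmat n m δ - Lmat Q v) := by
  classical
  haveI hnen : Nonempty (Fin n) := ⟨⟨0, by omega⟩⟩
  haveI hnem : Nonempty (Fin m) := ⟨⟨0, by omega⟩⟩
  haveI hneI : Nonempty (Idx n m) := inferInstance
  set W : Matrix (Idx n m) (Idx n m) ℝ := Bmat n m β * Fmat v with hWdef
  set G : Matrix (Idx n m) (Idx n m) ℝ := W - Dmat n m δ - Lmat Q v with hGdef
  have hvpos : ∀ k : Idx n m, 0 < v k := fun k => by
    rw [hv k]; exact mul_pos (hNpop k.1) (hvαpos k.1 k.2)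
  have hVpos : ∀ i : Fin n, 0 < ∑ η, v (η, i) := fun i =>
    Finset.sum_pos (fun η _ => hvpos (η, i)) Finset.univ_nonempty
  have hWapp : ∀ k l : Idx n m, W k l =
      β k.2 * (if l.2 = k.2 then v (l.1, k.2) / ∑ η, v (η, k.2) else 0) := by
    intro k l; rw [hWdef]; exact SISHelper.W_apply β v k l
  have hWnn : ∀ k l, 0 ≤ W k l := by
    intro k l
    rw [hWapp]
    split
    · exact mul_nonneg (hβ k.2).le (div_nonneg (hvpos _).le (hVpos _).le)
    · simp
  have hWvecpos : ∀ p : Idx n m → ℝ, (∀ k, 0 < p k) → ∀ k, 0 < W.mulVec p k := by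
    intro p hp k
    have hWkk : W k k = β k.2 * (v (k.1, k.2) / ∑ η, v (η, k.2)) := by
      rw [hWapp]; simp
    have hterm : 0 < W k k * p k := by
      rw [hWkk]
      exact mul_pos (mul_pos (hβ _) (div_pos (hvpos _) (hVpos _))) (hp k)
    have hsum : W.mulVec p k = ∑ l, W k l * p l := by
      simp [Matrix.mulVec, dotProduct]
    rw [hsum]
    exact lt_of_lt_of_le hterm (Finset.single_le_sum
      (fun l _ => mul_nonneg (hWnn k l) (hp l).le) (Finset.mem_univ k))
  have hDoff : ∀ k l : Idx n m, k ≠ l → Dmat n m δ k l = 0 := fun k l h =>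
    Matrix.diagonal_apply_ne _ h
  have hGapp : ∀ k l, G k l = W k l - Dmat n m δ k l - Lmat Q v k l := by
    intro k l; rw [hGdef]; simp [Matrix.sub_apply]
  have hGoff_same : ∀ k l : Idx n m, k.1 = l.1 → k.2 ≠ l.2 →
      G k l = Q k.1 l.2 k.2 * v (k.1, l.2) / v k := by
    intro k l h1 h2
    have hkl : k ≠ l := fun h => h2 (by rw [h])
    rw [hGapp, hDoff k l hkl, SISHelper.L_off_same Q v h1 h2, hWapp,
      if_neg (Ne.symm h2)]
    ring
  have hGoff_cross : ∀ k l : Idx n m, k.1 ≠ l.1 → l.2 = k.2 →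
      G k l = β k.2 * (v (l.1, k.2) / ∑ η, v (η, k.2)) := by
    intro k l h1 h2
    have hkl : k ≠ l := fun h => h1 (by rw [h])
    rw [hGapp, hDoff k l hkl, SISHelper.L_off_diff Q v h1, hWapp, if_pos h2]
    ring
  have hGoff_nn : ∀ k l, k ≠ l → 0 ≤ G k l := by
    intro k l hkl
    rcases eq_or_ne k.1 l.1 with h1 | h1
    · have h2 : k.2 ≠ l.2 := fun h2 => hkl (Prod.ext_iff.mpr ⟨h1, h2⟩)
      rw [hGoff_same k l h1 h2]
      have hQnn : 0 ≤ Q k.1 l.2 k.2 := (hQgen k.1).1 l.2 k.2 (Ne.symm h2)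
      exact div_nonneg (mul_nonneg hQnn (hvpos _).le) (hvpos _).le
    · rcases eq_or_ne l.2 k.2 with h2 | h2
      · rw [hGoff_cross k l h1 h2]
        exact mul_nonneg (hβ k.2).le (div_nonneg (hvpos _).le (hVpos _).le)
      · rw [hGapp, hDoff k l hkl, SISHelper.L_off_diff Q v h1, hWapp, if_neg h2]
        simp
  set c : ℝ := 1 + ∑ k : Idx n m, |G k k| with hcdef
  have hcG : ∀ k, 0 ≤ G k k + c := by
    intro k
    have h1 : |G k k| ≤ ∑ j : Idx n m, |G j j| :=
      Finset.single_le_sum (f := fun j : Idx n m => |G j j|)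
        (fun j _ => abs_nonneg _) (Finset.mem_univ k)
    have h2 := neg_abs_le (G k k)
    rw [hcdef]; linarith
  set A : Matrix (Idx n m) (Idx n m) ℝ := G + c • 1 with hAdef
  have hAoff : ∀ k l : Idx n m, k ≠ l → A k l = G k l := by
    intro k l h; rw [hAdef]
    simp [Matrix.add_apply, Matrix.smul_apply, Matrix.one_apply_ne h]
  have hAdiag : ∀ k, A k k = G k k + c := by
    intro k; rw [hAdef]
    simp [Matrix.add_apply, Matrix.smul_apply, Matrix.one_apply_eq]
  have hAnn : ∀ k l, 0 ≤ A k l := by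
    intro k l
    rcases eq_or_ne k l with rfl | h
    · rw [hAdiag]; exact hcG k
    · rw [hAoff k l h]; exact hGoff_nn k l h
  have hAmulVec : ∀ x : Idx n m → ℝ, A.mulVec x = fun k => G.mulVec x k + c * x k := by
    intro x; funext k
    rw [hAdef, Matrix.add_mulVec, Matrix.smul_mulVec, Matrix.one_mulVec]
    simp
  have hedge_in : ∀ (α : Fin m) (i j : Fin n),
      Relation.ReflTransGen (fun a b : Idx n m => 0 < A a b) (α, i) (α, j) := by
    intro α i j
    have hpath : Relation.ReflTransGen
        (Function.swap fun a b => a ≠ b ∧ 0 < Q α a b) i j :=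
      Relation.reflTransGen_swap.mpr (hQirr α j i)
    refine Relation.ReflTransGen.lift (fun x : Fin n => ((α, x) : Idx n m)) ?_ i j hpath
    rintro a b ⟨hab, hQab⟩
    show 0 < A (α, a) (α, b)
    have hne : ((α, a) : Idx n m) ≠ (α, b) := fun h => hab (by
      have := congrArg Prod.snd h; simpa using this.symm)
    rw [hAoff _ _ hne, hGoff_same (α, a) (α, b) rfl (by simpa using Ne.symm hab)]
    exact div_pos (mul_pos hQab (hvpos _)) (hvpos _)
  have hAirr : ∀ k l : Idx n m, Relation.ReflTransGen (fun a b => 0 < A a b) k l := by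
    intro k l
    rcases eq_or_ne k.1 l.1 with h1 | h1
    · have h2 := hedge_in k.1 k.2 l.2
      have e2 : ((k.1, l.2) : Idx n m) = l := by rw [h1]
      rw [e2] at h2
      exact h2
    · have h2 := hedge_in l.1 k.2 l.2
      refine Relation.ReflTransGen.head ?_ h2
      have hne : k ≠ (l.1, k.2) := fun h => h1 (by rw [h])
      rw [hAoff _ _ hne, hGoff_cross k (l.1, k.2) (by simpa using h1) rfl]
      exact mul_pos (hβ _) (div_pos (hvpos _) (hVpos _))
  obtain ⟨r, w, hr0, hwpos, hweig, hCW⟩ := SISPF.perron_irr hAnn hAirr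
  set μ : ℝ := r - c with hμdef
  have hGw : G.mulVec w = fun k => μ * w k := by
    funext k
    have h1 := congrFun hweig k
    have h2 := congrFun (hAmulVec w) k
    rw [hμdef]
    rw [h1] at h2
    linarith
  set Gc : Matrix (Idx n m) (Idx n m) ℂ := G.map (algebraMap ℝ ℂ) with hGcdef
  have hGcapp : ∀ k l, Gc k l = ((G k l : ℝ) : ℂ) := by
    intro k l; rw [hGcdef]; simp [Matrix.map_apply]
  have hμ_spec : ((μ : ℝ) : ℂ) ∈ spectrum ℂ Gc := by
    rw [SISPF.mem_spectrum_iff_exists]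
    refine ⟨fun k => ((w k : ℝ) : ℂ), ?_, ?_⟩
    · intro h
      have h1 := congrFun h (Classical.arbitrary _)
      simp only [Pi.zero_apply, Complex.ofReal_eq_zero] at h1
      exact (hwpos _).ne' h1
    · funext k
      have h1 := congrFun hGw k
      simp only [Matrix.mulVec, dotProduct] at h1 ⊢
      simp only [Pi.smul_apply, smul_eq_mul]
      calc ∑ j, Gc k j * ((w j : ℝ) : ℂ)
          = ((∑ j, G k j * w j : ℝ) : ℂ) := by
            push_cast
            exact Finset.sum_congr rfl fun j _ => by rw [hGcapp]
        _ = (((μ * w k : ℝ)) : ℂ) := by rw [h1]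
        _ = ((μ : ℝ) : ℂ) * ((w k : ℝ) : ℂ) := by push_cast; ring
  have hbddA := SISPF.bddAbove_re_spectrum Gc
  have hspec_bound : ∀ t ∈ spectrum ℂ Gc, t.re ≤ μ := by
    intro t ht
    rw [SISPF.mem_spectrum_iff_exists] at ht
    obtain ⟨z, hz0, hz⟩ := ht
    set x : Idx n m → ℝ := fun k => ‖z k‖ with hxdef
    have hxnn : ∀ k, 0 ≤ x k := fun k => norm_nonneg _
    have hxne : x ≠ 0 := by
      obtain ⟨k₀, hk₀⟩ := Function.ne_iff.mp hz0
      intro h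
      have h1 := congrFun h k₀
      rw [hxdef] at h1
      simp only [Pi.zero_apply, norm_eq_zero] at h1
      exact hk₀ h1
    have hkey : ∀ k, ‖t + (c : ℂ)‖ * x k ≤ A.mulVec x k := by
      intro k
      have h1 : (∑ j, ((A k j : ℝ) : ℂ) * z j) = (t + (c : ℂ)) * z k := by
        have h2 := congrFun hz k
        simp only [Matrix.mulVec, dotProduct, Pi.smul_apply, smul_eq_mul] at h2
        have h3 : ∀ j, ((A k j : ℝ) : ℂ) * z j =
            ((G k j : ℝ) : ℂ) * z j + (c : ℂ) * (if k = j then 1 else 0) * z j := by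
          intro j
          rcases eq_or_ne k j with rfl | h
          · rw [hAdiag, if_pos rfl]; push_cast; ring
          · rw [hAoff _ _ h, if_neg h]; push_cast; ring
        rw [Finset.sum_congr rfl (fun j _ => h3 j), Finset.sum_add_distrib]
        have h4 : (∑ j, (c : ℂ) * (if k = j then 1 else 0) * z j) = (c : ℂ) * z k := by
          simp [ite_mul, mul_ite, Finset.sum_ite_eq]
        have h5 : (∑ j, ((G k j : ℝ) : ℂ) * z j) = t * z k := by
          calc (∑ j, ((G k j : ℝ) : ℂ) * z j) = ∑ j, Gc k j * z j :=
              Finset.sum_congr rfl fun j _ => by rw [hGcapp]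
            _ = t * z k := h2
        rw [h4, h5]; ring
      calc ‖t + (c : ℂ)‖ * x k
          = ‖(t + (c : ℂ)) * z k‖ := by rw [norm_mul]
        _ = ‖∑ j, ((A k j : ℝ) : ℂ) * z j‖ := by rw [h1]
        _ ≤ ∑ j, ‖((A k j : ℝ) : ℂ) * z j‖ :=
            norm_sum_le _ _
        _ = ∑ j, A k j * x j := by
            refine Finset.sum_congr rfl fun j _ => ?_
            rw [norm_mul, Complex.norm_real, Real.norm_eq_abs, abs_of_nonneg (hAnn k j), hxdef]
        _ = A.mulVec x k := by simp [Matrix.mulVec, dotProduct]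
    have h6 := hCW (‖t + (c : ℂ)‖) x hxnn hxne hkey
    have h7 : t.re + c ≤ ‖t + (c : ℂ)‖ := by
      have h8 := Complex.re_le_norm (t + (c : ℂ))
      simpa using h8
    rw [hμdef]; linarith
  constructor
  · rintro ⟨pbar, hpbar, heq⟩
    have hdiagW : ∀ x : Idx n m → ℝ,
        (Matrix.diagonal pbar * W).mulVec x = fun k => pbar k * W.mulVec x k := by
      intro x
      rw [← Matrix.mulVec_mulVec, SISHelper.diag_mulVec]
    have hGp : ∀ k, G.mulVec pbar k = pbar k * W.mulVec pbar k := by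
      intro k
      have h1 := congrFun heq k
      rw [Matrix.sub_mulVec] at h1
      simp only [Pi.sub_apply, Pi.zero_apply] at h1
      have h2 := congrFun (hdiagW pbar) k
      rw [h2] at h1
      linarith
    have hWppos : ∀ k, 0 < W.mulVec pbar k := hWvecpos pbar (fun k => (hpbar k).1)
    have hGppos : ∀ k, 0 < G.mulVec pbar k := fun k =>
      (hGp k) ▸ mul_pos (hpbar k).1 (hWppos k)
    set η : ℝ := Finset.univ.inf' Finset.univ_nonempty
      (fun k : Idx n m => G.mulVec pbar k / pbar k) with hηdef
    have hη : 0 < η := by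
      rw [hηdef, Finset.lt_inf'_iff]
      exact fun k _ => div_pos (hGppos k) (hpbar k).1
    have hineq : ∀ k, (c + η) * pbar k ≤ A.mulVec pbar k := by
      intro k
      have h1 : η ≤ G.mulVec pbar k / pbar k := Finset.inf'_le _ (Finset.mem_univ k)
      have h2 : η * pbar k ≤ G.mulVec pbar k := (le_div_iff₀ (hpbar k).1).mp h1
      have h3 := congrFun (hAmulVec pbar) k
      rw [h3]
      nlinarith [h2]
    have hpne : pbar ≠ 0 := by
      intro h
      have h1 := (hpbar (Classical.arbitrary _)).1
      rw [h] at h1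
      simp at h1
    have hcw := hCW (c + η) pbar (fun k => (hpbar k).1.le) hpne hineq
    have hμpos : 0 < μ := by rw [hμdef]; linarith
    have hmem : μ ∈ Complex.re '' spectrum ℂ Gc :=
      ⟨((μ : ℝ) : ℂ), hμ_spec, Complex.ofReal_re μ⟩
    have h9 : μ ≤ muMax G := le_csSup hbddA hmem
    exact lt_of_lt_of_le hμpos h9

  · intro hmu
    have hμpos : 0 < μ := by
      rcases Set.eq_empty_or_nonempty (Complex.re '' spectrum ℂ Gc) with he | hne
      · exfalso
        have h0 : muMax G = 0 := by
          have : muMax G = sSup (Complex.re '' spectrum ℂ Gc) := rfl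
          rw [this, he, Real.sSup_empty]
        rw [h0] at hmu
        exact lt_irrefl 0 hmu
      · have h1 : muMax G ≤ μ := csSup_le hne (by
          rintro a ⟨t, ht, rfl⟩
          exact hspec_bound t ht)
        linarith
    set s : ℝ := 1 + ∑ i, β i with hsdef
    have hβsum : 0 ≤ ∑ i, β i := Finset.sum_nonneg fun i _ => (hβ i).le
    have hs0 : 0 < s := by rw [hsdef]; linarith
    have hWrow : ∀ k : Idx n m, ∑ l, W k l = β k.2 := by
      intro k
      rw [Finset.sum_congr rfl (fun l _ => hWapp k l), ← Finset.mul_sum,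
        Fintype.sum_prod_type]
      have h2 : ∀ γ : Fin m,
          (∑ j, if j = k.2 then v (γ, k.2) / ∑ η, v (η, k.2) else 0) =
            v (γ, k.2) / ∑ η, v (η, k.2) := by
        intro γ; simp [Finset.sum_ite_eq']
      rw [Finset.sum_congr rfl (fun γ _ => h2 γ), ← Finset.sum_div,
        div_self (hVpos k.2).ne', mul_one]
    have hWrowle : ∀ k : Idx n m, ∑ l, W k l ≤ s := by
      intro k
      rw [hWrow, hsdef]
      have := Finset.single_le_sum (f := fun i => β i) (fun i _ => (hβ i).le)
        (Finset.mem_univ k.2)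
      linarith
    set Smat : Matrix (Idx n m) (Idx n m) ℝ :=
      s • (1 : Matrix (Idx n m) (Idx n m) ℝ) + Dmat n m δ + Lmat Q v with hSdef
    have hSoff : ∀ k l : Idx n m, k ≠ l → Smat k l ≤ 0 := by
      intro k l h
      rw [hSdef]
      simp only [Matrix.add_apply, Matrix.smul_apply, Matrix.one_apply_ne h,
        hDoff k l h, smul_eq_mul, mul_zero, zero_add, add_zero]
      rcases eq_or_ne k.1 l.1 with h1 | h1
      · have h2 : k.2 ≠ l.2 := fun h2 => h (Prod.ext_iff.mpr ⟨h1, h2⟩)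
        rw [SISHelper.L_off_same Q v h1 h2]
        have hQnn : 0 ≤ Q k.1 l.2 k.2 := (hQgen k.1).1 l.2 k.2 (Ne.symm h2)
        have := div_nonneg (mul_nonneg hQnn (hvpos (k.1, l.2)).le) (hvpos k).le
        linarith
      · rw [SISHelper.L_off_diff Q v h1]
    have hSrow : ∀ k : Idx n m, ∑ l, Smat k l = s + δ k.2 := by
      intro k
      rw [hSdef]
      simp only [Matrix.add_apply, Matrix.smul_apply, smul_eq_mul]
      rw [Finset.sum_add_distrib, Finset.sum_add_distrib, SISHelper.L_row_sum,
        add_zero]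
      have h1 : (∑ l : Idx n m, s * (1 : Matrix (Idx n m) (Idx n m) ℝ) k l) = s := by
        simp [Matrix.one_apply, mul_ite, Finset.sum_ite_eq]
      have h2 : (∑ l : Idx n m, Dmat n m δ k l) = δ k.2 := by
        simp [Dmat, Matrix.diagonal_apply, Finset.sum_ite_eq]
      rw [h1, h2]
    have hSrowpos : ∀ k, 0 < ∑ l, Smat k l := by
      intro k
      rw [hSrow]
      linarith [hδ k.2]
    have hSdet := SISPF.mmatrix_isUnit_det hSoff hSrowpos
    have hSinv_nn := SISPF.mmatrix_inv_entry_nonneg hSoff hSrowpos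
    have hSS : Smat * Smat⁻¹ = 1 := Matrix.mul_nonsing_inv _ hSdet
    have hSS' : Smat⁻¹ * Smat = 1 := Matrix.nonsing_inv_mul _ hSdet
    set b : (Idx n m → ℝ) → (Idx n m → ℝ) :=
      fun p k => (1 - p k) * W.mulVec p k + s * p k with hbdef
    set T : (Idx n m → ℝ) → (Idx n m → ℝ) := fun p => Smat⁻¹.mulVec (b p) with hTdef
    have hWple : ∀ p : Idx n m → ℝ, (0 : Idx n m → ℝ) ≤ p → p ≤ 1 →
        ∀ k, W.mulVec p k ≤ s := by
      intro p hp hq k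
      have h1 : W.mulVec p k = ∑ l, W k l * p l := by
        simp [Matrix.mulVec, dotProduct]
      have h2 : W.mulVec p k ≤ ∑ l, W k l := by
        rw [h1]
        refine Finset.sum_le_sum fun l _ => ?_
        have ha := hp l
        have hb := hq l
        simp only [Pi.zero_apply, Pi.one_apply] at ha hb
        nlinarith [hWnn k l]
      linarith [hWrowle k]
    have hbmono : ∀ p q : Idx n m → ℝ, (0 : Idx n m → ℝ) ≤ p → p ≤ q → q ≤ 1 →
        ∀ k, b p k ≤ b q k := by
      intro p q hp hpq hq k
      have hWpq : W.mulVec p k ≤ W.mulVec q k :=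
        SISPF.mulVec_mono hWnn (fun j => hpq j) k
      have hWp_nn : 0 ≤ W.mulVec p k := SISPF.mulVec_nonneg hWnn (fun j => hp j) k
      have hWps : W.mulVec p k ≤ s :=
        hWple p hp (le_trans hpq hq) k
      have hq1 : q k ≤ (1 : ℝ) := hq k
      have hpk : p k ≤ q k := hpq k
      have hp0 : (0 : ℝ) ≤ p k := hp k
      rw [hbdef]
      simp only
      nlinarith [mul_le_mul_of_nonneg_left hWpq (sub_nonneg.mpr hq1),
        mul_nonneg (sub_nonneg.mpr hpk) (sub_nonneg.mpr hWps)]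
    have hWw : ∀ k, 0 < W.mulVec w k := hWvecpos w hwpos
    set ε : ℝ := Finset.univ.inf' Finset.univ_nonempty
      (fun k : Idx n m => min (μ / W.mulVec w k) (1 / w k)) with hεdef
    have hε : 0 < ε := by
      rw [hεdef, Finset.lt_inf'_iff]
      exact fun k _ => lt_min (div_pos hμpos (hWw k)) (div_pos one_pos (hwpos k))
    have hεW : ∀ k, ε * W.mulVec w k ≤ μ := by
      intro k
      have h1 : ε ≤ μ / W.mulVec w k :=
        le_trans (Finset.inf'_le _ (Finset.mem_univ k)) (min_le_left _ _)
      exact (le_div_iff₀ (hWw k)).mp h1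
    have hεw : ∀ k, ε * w k ≤ 1 := by
      intro k
      have h1 : ε ≤ 1 / w k :=
        le_trans (Finset.inf'_le _ (Finset.mem_univ k)) (min_le_right _ _)
      have := (le_div_iff₀ (hwpos k)).mp h1
      linarith
    set e : Idx n m → ℝ := fun k => ε * w k with hedef
    have he0 : ∀ k, 0 < e k := fun k => mul_pos hε (hwpos k)
    have he1 : e ≤ (1 : Idx n m → ℝ) := fun k => hεw k
    have hSmulVec : ∀ (x : Idx n m → ℝ) (k : Idx n m), Smat.mulVec x k =
        s * x k + (Dmat n m δ).mulVec x k + (Lmat Q v).mulVec x k := by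
      intro x k
      rw [hSdef, Matrix.add_mulVec, Matrix.add_mulVec, Matrix.smul_mulVec,
        Matrix.one_mulVec]
      simp [Pi.add_apply, Pi.smul_apply]
    have hDL : ∀ (x : Idx n m → ℝ) (k : Idx n m),
        (Dmat n m δ).mulVec x k + (Lmat Q v).mulVec x k =
          W.mulVec x k - G.mulVec x k := by
      intro x k
      have h1 : G.mulVec x = W.mulVec x - (Dmat n m δ).mulVec x - (Lmat Q v).mulVec x := by
        rw [hGdef, Matrix.sub_mulVec, Matrix.sub_mulVec]
      have h2 := congrFun h1 k
      simp only [Pi.sub_apply] at h2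
      linarith
    have hWe : ∀ k, W.mulVec e k = ε * W.mulVec w k := by
      intro k
      have h1 : e = ε • w := by funext j; rw [hedef]; simp
      rw [h1, Matrix.mulVec_smul]
      simp
    have hGe : ∀ k, G.mulVec e k = ε * (μ * w k) := by
      intro k
      have h1 : e = ε • w := by funext j; rw [hedef]; simp
      rw [h1, Matrix.mulVec_smul, hGw]
      simp
    have hSe : ∀ k, Smat.mulVec e k ≤ b e k := by
      intro k
      rw [hSmulVec]
      have h1 := hDL e k
      have h2 := hWe k
      have h3 := hGe k
      have h4 : b e k = (1 - ε * w k) * (ε * W.mulVec w k) + s * (ε * w k) := by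
        rw [hbdef]
        simp only
        rw [h2, hedef]
      rw [h4]
      have h5 : Smat.mulVec e k = s * e k + (W.mulVec e k - G.mulVec e k) := by
        rw [hSmulVec]; linarith [hDL e k]
      have h6 : e k = ε * w k := rfl
      nlinarith [mul_nonneg (mul_nonneg hε.le (hwpos k).le)
        (sub_nonneg.mpr (hεW k)), h1, h2, h3]
    have hTe : e ≤ T e := by
      intro k
      have h1 : ∀ j, Smat.mulVec e j ≤ b e j := hSe
      have h2 := SISPF.mulVec_mono hSinv_nn h1 k
      have h3 : Smat⁻¹.mulVec (Smat.mulVec e) = e := by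
        rw [Matrix.mulVec_mulVec, hSS', Matrix.one_mulVec]
      calc e k = Smat⁻¹.mulVec (Smat.mulVec e) k := by rw [h3]
        _ ≤ Smat⁻¹.mulVec (b e) k := h2
        _ = T e k := rfl
    have hT1 : T 1 ≤ 1 := by
      intro k
      have hb1 : ∀ j : Idx n m, b 1 j ≤ Smat.mulVec 1 j := by
        intro j
        have h1 : b 1 j = s := by
          rw [hbdef]; simp
        have h2 : Smat.mulVec 1 j = ∑ l, Smat j l := by
          simp [Matrix.mulVec, dotProduct]
        rw [h1, h2, hSrow j]
        linarith [hδ j.2]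
      have h2 := SISPF.mulVec_mono hSinv_nn hb1 k
      have h3 : Smat⁻¹.mulVec (Smat.mulVec 1) = 1 := by
        rw [Matrix.mulVec_mulVec, hSS', Matrix.one_mulVec]
      calc T 1 k ≤ Smat⁻¹.mulVec (Smat.mulVec 1) k := h2
        _ = (1 : Idx n m → ℝ) k := by rw [h3]
    have hTmono : ∀ p q : Idx n m → ℝ, e ≤ p → p ≤ q → q ≤ 1 → T p ≤ T q := by
      intro p q hep hpq hq1
      have hp0 : (0 : Idx n m → ℝ) ≤ p := le_trans (fun k => (he0 k).le) hep
      exact fun k => SISPF.mulVec_mono hSinv_nn (hbmono p q hp0 hpq hq1) k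
    obtain ⟨pbar, hpe, hp1, hTfix⟩ := SISPF.exists_fixed_point he1 hTmono hTe hT1
    have hfix2 : Smat.mulVec pbar = b pbar := by
      have h1 := congrArg (Smat.mulVec) hTfix
      rw [hTdef] at h1
      simp only at h1
      rw [Matrix.mulVec_mulVec, hSS, Matrix.one_mulVec] at h1
      exact h1.symm
    refine ⟨pbar, fun k => ⟨lt_of_lt_of_le (he0 k) (hpe k), hp1 k⟩, ?_⟩
    have hdiagW : ∀ x : Idx n m → ℝ,
        (Matrix.diagonal pbar * W).mulVec x = fun k => pbar k * W.mulVec x k := by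
      intro x
      rw [← Matrix.mulVec_mulVec, SISHelper.diag_mulVec]
    funext k
    have h1 := congrFun hfix2 k
    rw [hSmulVec] at h1
    have h2 : b pbar k = (1 - pbar k) * W.mulVec pbar k + s * pbar k := by
      rw [hbdef]
    rw [h2] at h1
    rw [Matrix.sub_mulVec]
    simp only [Pi.sub_apply, Pi.zero_apply]
    have h3 := congrFun (hdiagW pbar) k
    rw [h3]
    have h4 := hDL pbar k
    have h5 : G.mulVec pbar k = W.mulVec pbar k -
        ((Dmat n m δ).mulVec pbar k + (Lmat Q v).mulVec pbar k) := by
      linarith [hDL pbar k]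
    nlinarith [h1, h4]
end

section
/- Consider the SIS model under multi-layer Markovian mobility, with F* = F(v) and L* = L(v). If μ(B F* − D − L*) ≤ 0, where μ(G) is the largest real part of an eigenvalue of G, then for each patch i ∈ {1,…,n} there exists a class α ∈ {1,…,m} such that δ_i > β_i − ν^α_i, where ν^α_i = Σ_{j≠i} q^α_{ij} is the total transition rate out of patch i in layer α. -/
open Matrix Finset Filter

open SISMobility


open scoped Pointwise

namespace SISAux

/-- Reachability from `i₀` in at most `k` steps for a relation `r`. -/
def reachK {n : ℕ} (r : Fin n → Fin n → Prop) (i₀ : Fin n) : ℕ → Fin n → Prop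
  | 0 => fun i => i = i₀
  | k + 1 => fun i => reachK r i₀ k i ∨ ∃ j, reachK r i₀ k j ∧ r j i

lemma reachK_exists {n : ℕ} {r : Fin n → Fin n → Prop} {i₀ i : Fin n}
    (h : Relation.ReflTransGen r i₀ i) : ∃ k, reachK r i₀ k i := by
  induction h with
  | refl => exact ⟨0, rfl⟩
  | tail _ hbc ih =>
      obtain ⟨k, hk⟩ := ih
      exact ⟨k + 1, Or.inr ⟨_, hk, hbc⟩⟩

lemma exists_dist {n : ℕ} (r : Fin n → Fin n → Prop) (i₀ : Fin n)
    (h : ∀ i, Relation.ReflTransGen r i₀ i) :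
    ∃ d : Fin n → ℕ, d i₀ = 0 ∧ ∀ i, i ≠ i₀ → ∃ j, r j i ∧ d j < d i := by
  classical
  have hex : ∀ i, ∃ k, reachK r i₀ k i := fun i => reachK_exists (h i)
  refine ⟨fun i => Nat.find (hex i), ?_, ?_⟩
  · exact Nat.find_eq_zero (hex i₀) |>.mpr rfl
  · intro i hi
    have hk := Nat.find_spec (hex i)
    set k := Nat.find (hex i) with hkdef
    have hk0 : k ≠ 0 := by
      intro h0
      rw [h0] at hk
      exact hi hk
    obtain ⟨k', hksucc⟩ := Nat.exists_eq_succ_of_ne_zero hk0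
    rw [hksucc] at hk
    rcases hk with hk | ⟨j, hj, hji⟩
    · have : k' < k := by omega
      exact absurd hk (Nat.find_min (hex i) this)
    · refine ⟨j, hji, ?_⟩
      have h1 : Nat.find (hex j) ≤ k' := Nat.find_le hj
      show Nat.find (hex j) < Nat.find (hex i)
      omega


section Spec

attribute [local instance] Matrix.linftyOpNormedRing Matrix.linftyOpNormedAlgebra

variable {N : Type*} [Fintype N] [DecidableEq N] [Nonempty N]

noncomputable local instance : CompleteSpace (Matrix N N ℂ) :=
  FiniteDimensional.complete ℂ _

lemma spec_pos (M : Matrix N N ℝ) (w : N → ℝ) (ε : ℝ) (hε : 0 < ε)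
    (hMet : ∀ k l, k ≠ l → 0 ≤ M k l)
    (hw0 : ∀ k, 0 < w k) (hw1 : ∀ k, w k ≤ 1)
    (hMw : ∀ k, ε * w k ≤ M.mulVec w k) :
    0 < sSup (Complex.re '' spectrum ℂ (M.map (algebraMap ℝ ℂ))) := by
  classical
  set Mc : Matrix N N ℂ := M.map (algebraMap ℝ ℂ) with hMc
  set K : ℝ := ‖Mc‖ with hK
  have hK0 : 0 ≤ K := norm_nonneg _
  set R : ℝ := 1 + ∑ k, |M k k| with hR
  have hR1 : 1 ≤ R := by
    have : 0 ≤ ∑ k, |M k k| := Finset.sum_nonneg fun k _ => abs_nonneg _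
    simp [hR]; linarith
  have hRk : ∀ k, |M k k| ≤ R := by
    intro k
    have h1 : |M k k| ≤ ∑ l, |M l l| :=
      Finset.single_le_sum (fun l _ => abs_nonneg (M l l)) (Finset.mem_univ k)
    simp [hR]; linarith
  set h : ℝ := min (1 / R) (ε / (2 * (K ^ 2 + 1))) with hh
  have hh0 : 0 < h := by
    apply lt_min
    · positivity
    · positivity
  have hhR : h * R ≤ 1 := by
    have h1 : h ≤ 1 / R := min_le_left _ _
    have hRpos : (0:ℝ) < R := by linarith
    calc h * R ≤ 1 / R * R := by nlinarith [mul_le_mul_of_nonneg_right h1 hRpos.le]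
      _ = 1 := by field_simp
  have hhK : h * K ^ 2 ≤ ε / 2 := by
    have h1 : h ≤ ε / (2 * (K ^ 2 + 1)) := min_le_right _ _
    have h2 : (0:ℝ) < 2 * (K ^ 2 + 1) := by positivity
    rw [le_div_iff₀ h2] at h1
    nlinarith
  set A : Matrix N N ℝ := 1 + h • M with hA
  -- entrywise nonnegativity of A
  have hA0 : ∀ k l, 0 ≤ A k l := by
    intro k l
    by_cases hkl : k = l
    · subst hkl
      have : A k k = 1 + h * M k k := by
        simp [hA, Matrix.one_apply, Matrix.add_apply]
      rw [this]
      have := hRk k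
      have habs : -R ≤ M k k := by cases abs_le.mp this; linarith
      nlinarith
    · have : A k l = h * M k l := by
        simp [hA, Matrix.one_apply, hkl, Matrix.add_apply]
      rw [this]
      exact mul_nonneg hh0.le (hMet k l hkl)
  set r : ℝ := 1 + h * ε with hr
  have hr1 : 1 < r := by
    have : 0 < h * ε := mul_pos hh0 hε
    simp [hr]; linarith
  have hr0 : 0 < r := by linarith
  -- growth of A
  have hAw : ∀ k, r * w k ≤ A.mulVec w k := by
    intro k
    have : A.mulVec w k = w k + h * M.mulVec w k := by
      simp [hA, Matrix.add_mulVec, Matrix.one_mulVec, Matrix.smul_mulVec,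
        Pi.add_apply, Pi.smul_apply, smul_eq_mul]
    rw [this, hr]
    have := hMw k
    nlinarith [hw0 k]
  have hApow0 : ∀ j : ℕ, ∀ k l, 0 ≤ (A ^ j) k l := by
    intro j
    induction j with
    | zero => intro k l; by_cases hkl : k = l <;> simp [Matrix.one_apply, hkl]
    | succ i ih =>
        intro k l
        rw [pow_succ]
        rw [Matrix.mul_apply]
        exact Finset.sum_nonneg fun x _ => mul_nonneg (ih k x) (hA0 x l)
  have hgrow : ∀ j : ℕ, ∀ k, r ^ j * w k ≤ (A ^ j).mulVec w k := by
    intro j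
    induction j with
    | zero => intro k; simp [Matrix.one_mulVec]
    | succ i ih =>
        intro k
        have hstep : (A ^ (i + 1)).mulVec w k = A.mulVec ((A ^ i).mulVec w) k := by
          rw [Matrix.mulVec_mulVec, ← pow_succ']
        rw [hstep]
        have hmono : A.mulVec (fun l => r ^ i * w l) k ≤ A.mulVec ((A ^ i).mulVec w) k := by
          simp only [Matrix.mulVec, dotProduct]
          exact Finset.sum_le_sum fun l _ => mul_le_mul_of_nonneg_left (ih l) (hA0 k l)
        have hpull : A.mulVec (fun l => r ^ i * w l) k = r ^ i * A.mulVec w k := by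
          simp only [Matrix.mulVec, dotProduct, Finset.mul_sum]
          exact Finset.sum_congr rfl fun l _ => by ring
        calc r ^ (i + 1) * w k = r ^ i * (r * w k) := by ring
          _ ≤ r ^ i * A.mulVec w k := by
              have := hAw k
              have hri : (0:ℝ) ≤ r ^ i := by positivity
              nlinarith
          _ = A.mulVec (fun l => r ^ i * w l) k := hpull.symm
          _ ≤ _ := hmono
  -- norm lower bounds for powers of A (complexified)
  set Ac : Matrix N N ℂ := A.map (algebraMap ℝ ℂ) with hAc
  obtain ⟨k₀⟩ := (inferInstance : Nonempty N)
  set c : ℝ := Finset.univ.inf' Finset.univ_nonempty w with hc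
  have hc0 : 0 < c := by
    rw [hc, Finset.lt_inf'_iff]
    exact fun l _ => hw0 l
  have hcle : ∀ l, c ≤ w l := fun l => Finset.inf'_le _ (Finset.mem_univ l)
  have hnorm : ∀ j : ℕ, c * r ^ j ≤ ‖Ac ^ j‖ := by
    intro j
    have hmap : Ac ^ j = (A ^ j).map (algebraMap ℝ ℂ) := by
      rw [hAc, ← RingHom.mapMatrix_apply, ← map_pow, RingHom.mapMatrix_apply]
    have hentry : ∀ l, ‖(Ac ^ j) k₀ l‖ = (A ^ j) k₀ l := by
      intro l
      rw [hmap]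
      simp only [Matrix.map_apply, Complex.coe_algebraMap, Complex.norm_real]
      exact abs_of_nonneg (hApow0 j k₀ l)
    have hrowsum : c * r ^ j ≤ ∑ l, ‖(Ac ^ j) k₀ l‖ := by
      have h1 : (A ^ j).mulVec w k₀ ≤ ∑ l, (A ^ j) k₀ l := by
        simp only [Matrix.mulVec, dotProduct]
        refine Finset.sum_le_sum fun l _ => ?_
        have := hApow0 j k₀ l
        nlinarith [hw1 l, hw0 l]
      have h2 : c * r ^ j ≤ (A ^ j).mulVec w k₀ := by
        have := hgrow j k₀
        have hrj : (0:ℝ) ≤ r ^ j := by positivity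
        nlinarith [hcle k₀, hw0 k₀]
      calc c * r ^ j ≤ (A ^ j).mulVec w k₀ := h2
        _ ≤ ∑ l, (A ^ j) k₀ l := h1
        _ = ∑ l, ‖(Ac ^ j) k₀ l‖ := by
            refine (Finset.sum_congr rfl fun l _ => ?_)
            rw [hentry l]
    refine le_trans hrowsum ?_
    have h3 : (∑ l, ‖(Ac ^ j) k₀ l‖₊) ≤ ‖Ac ^ j‖₊ := by
      rw [Matrix.linfty_opNNNorm_def]
      exact Finset.le_sup (f := fun i => ∑ l, ‖(Ac ^ j) i l‖₊) (Finset.mem_univ k₀)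
    calc (∑ l, ‖(Ac ^ j) k₀ l‖) = ((∑ l, ‖(Ac ^ j) k₀ l‖₊ : NNReal) : ℝ) := by
          push_cast [NNReal.coe_sum]
          simp [coe_nnnorm]
      _ ≤ (‖Ac ^ j‖₊ : ℝ) := by exact_mod_cast h3
      _ = ‖Ac ^ j‖ := rfl
  -- the spectral radius of Ac is at least r
  obtain ⟨z, hzmem, hznorm⟩ := spectrum.exists_nnnorm_eq_spectralRadius Ac
  have hzr : r ≤ ‖z‖ := by
    by_contra hzl
    push_neg at hzl
    set s : ℝ := (‖z‖ + r) / 2 with hs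
    have hn0 : (0:ℝ) ≤ ‖z‖ := norm_nonneg _
    have hs0 : 0 < s := by rw [hs]; linarith
    have hzs : ‖z‖ < s := by rw [hs]; linarith
    have hsr : s < r := by rw [hs]; linarith
    have hρ : spectralRadius ℂ Ac < ENNReal.ofReal s := by
      rw [← hznorm, ← enorm_eq_nnnorm, ← ofReal_norm]
      exact (ENNReal.ofReal_lt_ofReal_iff hs0).mpr hzs
    have hev := (spectrum.pow_norm_pow_one_div_tendsto_nhds_spectralRadius Ac).eventually_lt_const hρ
    obtain ⟨n₀, hn₀⟩ := Filter.eventually_atTop.mp hev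
    have hsr1 : s / r < 1 := (div_lt_one hr0).mpr hsr
    have hsr0 : (0:ℝ) ≤ s / r := by positivity
    obtain ⟨n₁, hn₁⟩ := exists_pow_lt_of_lt_one hc0 hsr1
    set nn : ℕ := max (max n₀ 1) n₁ with hnn
    have hnn0 : n₀ ≤ nn := le_trans (le_max_left _ _) (le_max_left _ _)
    have hnn1 : 1 ≤ nn := le_trans (le_max_right _ _) (le_max_left _ _)
    have hnn2 : n₁ ≤ nn := le_max_right _ _
    have h2 := hn₀ nn hnn0
    have hlt : ‖Ac ^ nn‖ ^ ((1:ℝ) / nn) < s := by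
      have := (ENNReal.ofReal_lt_ofReal_iff hs0).mp h2
      exact this
    have hxnn : (0:ℝ) ≤ ‖Ac ^ nn‖ := norm_nonneg _
    have hid : (‖Ac ^ nn‖ ^ ((1:ℝ) / nn)) ^ (nn : ℕ) = ‖Ac ^ nn‖ := by
      rw [← Real.rpow_natCast (‖Ac ^ nn‖ ^ ((1:ℝ) / nn)) nn, ← Real.rpow_mul hxnn]
      rw [one_div, inv_mul_cancel₀ (by exact_mod_cast Nat.one_le_iff_ne_zero.mp hnn1 : (nn:ℝ) ≠ 0), Real.rpow_one]
    have hpow : ‖Ac ^ nn‖ < s ^ nn := by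
      calc ‖Ac ^ nn‖ = (‖Ac ^ nn‖ ^ ((1:ℝ) / nn)) ^ (nn:ℕ) := hid.symm
        _ < s ^ nn := by
            apply pow_lt_pow_left₀ hlt (Real.rpow_nonneg hxnn _)
            omega
    have hlow := hnorm nn
    have h3 : c * r ^ nn < s ^ nn := lt_of_le_of_lt hlow hpow
    have h4 : c < (s / r) ^ nn := by
      rw [div_pow, lt_div_iff₀ (pow_pos hr0 nn)]
      linarith
    have h5 : (s / r) ^ nn ≤ (s / r) ^ n₁ := pow_le_pow_of_le_one hsr0 hsr1.le hnn2
    linarith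
  -- extract an eigenvalue of Mc with positive real part
  have hhne : ((h:ℝ) : ℂ) ≠ 0 := by exact_mod_cast hh0.ne'
  have hAcdecomp : Ac = algebraMap ℂ (Matrix N N ℂ) 1 + (h:ℂ) • Mc := by
    ext k l
    by_cases hkl : k = l <;>
      simp [hAc, hA, hMc, Matrix.map_apply, Matrix.add_apply, Matrix.one_apply, hkl,
        Matrix.smul_apply, Algebra.algebraMap_eq_smul_one, Matrix.one_apply, smul_eq_mul] <;>
      push_cast <;> ring
  have hzmem' : z ∈ (({(1:ℂ)} : Set ℂ) + spectrum ℂ ((h:ℂ) • Mc)) := by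
    rw [spectrum.singleton_add_eq ((h:ℂ) • Mc) (1:ℂ), ← hAcdecomp]
    exact hzmem
  rw [Set.singleton_add, Set.image_add_left] at hzmem'
  have hy : z - 1 ∈ spectrum ℂ ((h:ℂ) • Mc) := by
    simpa [neg_add_eq_sub] using hzmem'
  have hsmul : spectrum ℂ ((h:ℂ) • Mc) = (h:ℂ) • spectrum ℂ Mc := by
    have := spectrum.unit_smul_eq_smul Mc (Units.mk0 ((h:ℝ):ℂ) hhne)
    simpa [Units.smul_def] using this
  rw [hsmul] at hy
  obtain ⟨μ, hμmem, hμeq⟩ := hy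
  have hμK : ‖μ‖ ≤ K := by
    have := spectrum.norm_le_norm_of_mem hμmem
    simpa [← hK] using this
  -- z = 1 + h μ
  have hzeq : z = 1 + (h:ℂ) * μ := by
    have : ((h:ℝ):ℂ) • μ = z - 1 := hμeq
    rw [smul_eq_mul] at this
    linear_combination -this
  have hzre : z.re = 1 + h * μ.re := by
    rw [hzeq]
    simp [Complex.add_re, Complex.mul_re, Complex.ofReal_re, Complex.ofReal_im]
  have hzim : z.im = h * μ.im := by
    rw [hzeq]
    simp [Complex.add_im, Complex.mul_im, Complex.ofReal_re, Complex.ofReal_im]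
  have hz2 : r ^ 2 ≤ (1 + h * μ.re) ^ 2 + (h * μ.im) ^ 2 := by
    have h1 : r ^ 2 ≤ ‖z‖ ^ 2 := pow_le_pow_left₀ hr0.le hzr 2
    have h2 : ‖z‖ ^ 2 = z.re ^ 2 + z.im ^ 2 := by
      rw [Complex.sq_norm, Complex.normSq_apply]; ring
    rw [h2, hzre, hzim] at h1
    exact h1
  have hμ2 : μ.re ^ 2 + μ.im ^ 2 ≤ K ^ 2 := by
    have h2 : μ.re ^ 2 + μ.im ^ 2 = ‖μ‖ ^ 2 := by
      rw [Complex.sq_norm, Complex.normSq_apply]; ring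
    rw [h2]
    exact pow_le_pow_left₀ (norm_nonneg μ) hμK 2
  have e1 : 2 * (h * ε) ≤ 2 * (h * μ.re) + h ^ 2 * K ^ 2 := by
    have ha : h ^ 2 * (μ.re ^ 2 + μ.im ^ 2) ≤ h ^ 2 * K ^ 2 :=
      mul_le_mul_of_nonneg_left hμ2 (sq_nonneg h)
    have hb : (0:ℝ) ≤ h ^ 2 * ε ^ 2 := by positivity
    have hc : r ^ 2 = 1 + 2 * (h * ε) + h ^ 2 * ε ^ 2 := by rw [hr]; ring
    have hd : (1 + h * μ.re) ^ 2 + (h * μ.im) ^ 2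
        = 1 + 2 * (h * μ.re) + h ^ 2 * (μ.re ^ 2 + μ.im ^ 2) := by ring
    rw [hc, hd] at hz2
    linarith
  have e2 : h ^ 2 * K ^ 2 ≤ h * (ε / 2) :=
    calc h ^ 2 * K ^ 2 = h * (h * K ^ 2) := by ring
      _ ≤ h * (ε / 2) := mul_le_mul_of_nonneg_left hhK hh0.le
  have e3 : h * (3 * ε / 2) ≤ h * (2 * μ.re) := by linarith
  have e4 : 3 * ε / 2 ≤ 2 * μ.re := le_of_mul_le_mul_left e3 hh0
  have hμre : 0 < μ.re := by linarith
  -- conclude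
  have hbdd : BddAbove (Complex.re '' spectrum ℂ Mc) := by
    refine ⟨K, ?_⟩
    rintro y ⟨x, hx, rfl⟩
    have h1 : x.re ≤ ‖x‖ := by
      exact Complex.re_le_norm x
    have h2 : ‖x‖ ≤ K := by
      have := spectrum.norm_le_norm_of_mem hx
      simpa [← hK] using this
    linarith
  have hmem : μ.re ∈ Complex.re '' spectrum ℂ Mc := ⟨μ, hμmem, rfl⟩
  have := le_csSup hbdd hmem
  rw [hMc] at this ⊢
  linarith

end Spec


end SISAux

/-- Corollary 1 (i): if `μ(B F* − D − L*) ≤ 0`, then for each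
patch `i` there exists a class `α` such that `δ_i > β_i − ν^α_i`, where
`ν^α_i = ∑_{j≠i} q^α_{ij}`. -/
theorem necessary_condition_per_patch
    (n m : ℕ) (hn : 2 ≤ n) (hm : 1 ≤ m)
    (Q : Fin m → Matrix (Fin n) (Fin n) ℝ)
    (hQgen : ∀ α, IsGenerator (Q α)) (hQirr : ∀ α, StronglyConnected (Q α))
    (β δ : Fin n → ℝ) (hβ : ∀ i, 0 < β i) (hδ : ∀ i, 0 ≤ δ i)
    (vα : Fin m → Fin n → ℝ) (hvαpos : ∀ α i, 0 < vα α i)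
    (hvαnorm : ∀ α, ∑ i, vα α i = 1)
    (hvαeig : ∀ α i, ∑ j, Q α j i * vα α j = 0)
    (Npop : Fin m → ℝ) (hNpop : ∀ α, 0 < Npop α)
    (v : Idx n m → ℝ) (hv : ∀ k, v k = Npop k.1 * vα k.1 k.2)
    (hmu : muMax (Bmat n m β * Fmat v - Dmat n m δ - Lmat Q v) ≤ 0) :
    ∀ i : Fin n, ∃ α : Fin m,
      β i - (∑ j ∈ Finset.univ.filter (· ≠ i), Q α i j) < δ i := by
  classical
  by_contra hcon
  push_neg at hcon
  obtain ⟨i₀, hi₀⟩ := hcon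
  haveI hne_m : Nonempty (Fin m) := ⟨⟨0, hm⟩⟩
  haveI hne_n : Nonempty (Fin n) := ⟨⟨0, by omega⟩⟩
  -- basic facts
  set ν : Fin m → Fin n → ℝ := fun α i => ∑ j ∈ Finset.univ.filter (· ≠ i), Q α i j with hν
  have hν0 : ∀ α i, 0 ≤ ν α i := by
    intro α i
    refine Finset.sum_nonneg fun j hj => ?_
    exact (hQgen α).1 i j (Ne.symm (Finset.mem_filter.mp hj).2)
  have hQdiag : ∀ α i, Q α i i = -ν α i := by
    intro α i
    have h3 := Finset.sum_erase_add Finset.univ (Q α i) (Finset.mem_univ i)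
    rw [(hQgen α).2 i] at h3
    have h4 : ν α i = ∑ j ∈ Finset.univ.erase i, Q α i j := by
      rw [hν]
      simp only []
      rw [Finset.filter_ne']
    rw [h4]
    linarith
  have hvpos : ∀ k : Idx n m, 0 < v k := by
    intro k
    rw [hv]
    exact mul_pos (hNpop _) (hvαpos _ _)
  set S : Fin n → ℝ := fun i => ∑ η, v (η, i) with hS
  have hSpos : ∀ i, 0 < S i :=
    fun i => Finset.sum_pos (fun η _ => hvpos _) Finset.univ_nonempty
  have hveq : ∀ α i, ∑ j ∈ Finset.univ.filter (· ≠ i), Q α j i * v (α, j) = ν α i * v (α, i) := by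
    intro α i
    have h1 : ∑ j ∈ Finset.univ.filter (· ≠ i), Q α j i * vα α j = ν α i * vα α i := by
      have h3 : (∑ j ∈ Finset.univ.erase i, Q α j i * vα α j) + Q α i i * vα α i
          = ∑ j, Q α j i * vα α j :=
        Finset.sum_erase_add Finset.univ (fun j => Q α j i * vα α j) (Finset.mem_univ i)
      rw [hvαeig α i, hQdiag α i] at h3
      rw [Finset.filter_ne']
      linarith
    calc ∑ j ∈ Finset.univ.filter (· ≠ i), Q α j i * v (α, j)
        = Npop α * ∑ j ∈ Finset.univ.filter (· ≠ i), Q α j i * vα α j := by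
          rw [Finset.mul_sum]
          refine Finset.sum_congr rfl fun j _ => ?_
          rw [hv (α, j)]
          ring
      _ = Npop α * (ν α i * vα α i) := by rw [h1]
      _ = ν α i * v (α, i) := by rw [hv (α, i)]; ring
  -- distances from i₀ in each layer
  have hdist : ∀ α : Fin m, ∃ d : Fin n → ℕ, d i₀ = 0 ∧
      ∀ i, i ≠ i₀ → ∃ j, (j ≠ i ∧ 0 < Q α j i) ∧ d j < d i :=
    fun α => SISAux.exists_dist _ i₀ (fun i => hQirr α i₀ i)
  choose d hd0 hdpred using hdist
  -- an in-edge to i₀ in each layer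
  have hin : ∀ α : Fin m, ∃ j, j ≠ i₀ ∧ 0 < Q α j i₀ := by
    intro α
    have h2 : ∃ j₀ : Fin n, j₀ ≠ i₀ := by
      haveI : Nontrivial (Fin n) := Fin.nontrivial_iff_two_le.mpr hn
      exact exists_ne i₀
    obtain ⟨j₀, hj₀⟩ := h2
    rcases Relation.ReflTransGen.cases_tail (hQirr α j₀ i₀) with heq | ⟨c, _, hc⟩
    · exact absurd heq.symm hj₀
    · exact ⟨c, hc.1, hc.2⟩
  -- selection of a positive in-edge for every (class, patch)
  have hsel : ∀ (α : Fin m) (i : Fin n),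
      ∃ j, j ≠ i ∧ 0 < Q α j i ∧ (i ≠ i₀ → d α j < d α i) := by
    intro α i
    by_cases hii : i = i₀
    · subst hii
      obtain ⟨j, hj1, hj2⟩ := hin α
      exact ⟨j, hj1, hj2, fun hne => absurd rfl hne⟩
    · obtain ⟨j, ⟨hj1, hj2⟩, hj3⟩ := hdpred α i hii
      exact ⟨j, hj1, hj2, fun _ => hj3⟩
  choose jsel hjne hjpos hjd using hsel
  -- constants
  have huniv : (Finset.univ : Finset (Idx n m)).Nonempty := Finset.univ_nonempty
  set g : Idx n m → ℝ := fun k => Q k.1 (jsel k.1 k.2) k.2 * v (k.1, jsel k.1 k.2) / v k with hg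
  set κ : ℝ := Finset.univ.inf' huniv g with hκ
  have hκ0 : 0 < κ := by
    rw [hκ, Finset.lt_inf'_iff]
    intro k _
    exact div_pos (mul_pos (hjpos k.1 k.2) (hvpos _)) (hvpos k)
  have hκle : ∀ k, κ ≤ g k := fun k => Finset.inf'_le _ (Finset.mem_univ k)
  set R : ℝ := ∑ k : Idx n m, (δ k.2 + ν k.1 k.2) with hR
  have hRle : ∀ (α : Fin m) (i : Fin n), δ i + ν α i ≤ R := by
    intro α i
    exact Finset.single_le_sum (f := fun k : Idx n m => δ k.2 + ν k.1 k.2)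
      (fun k _ => add_nonneg (hδ _) (hν0 _ _)) (Finset.mem_univ (α, i))
  have hR0 : 0 ≤ R := Finset.sum_nonneg fun k _ => add_nonneg (hδ _) (hν0 _ _)
  set Dmx : ℕ := Finset.univ.sup (fun k : Idx n m => d k.1 k.2) with hDmx
  have hDle : ∀ (α : Fin m) (i : Fin n), d α i ≤ Dmx :=
    fun α i => Finset.le_sup (f := fun k : Idx n m => d k.1 k.2) (Finset.mem_univ (α, i))
  set t : ℝ := min 1 (κ / (R + κ + 1)) with ht
  have ht0 : 0 < t := lt_min one_pos (by positivity)
  have ht1 : t ≤ 1 := min_le_left _ _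
  have htkey : t * (R + κ + 1) ≤ κ := by
    have h1 : t ≤ κ / (R + κ + 1) := min_le_right _ _
    rw [le_div_iff₀ (by positivity)] at h1
    exact h1
  set ε : ℝ := κ * t ^ Dmx with hεdef
  have hε0 : 0 < ε := mul_pos hκ0 (pow_pos ht0 _)
  have hεκ : ε ≤ κ := by
    rw [hεdef]
    nlinarith [pow_le_one₀ ht0.le ht1 (n := Dmx), pow_pos ht0 Dmx]
  set w : Idx n m → ℝ := fun k => t ^ (d k.1 k.2) with hw
  have hw0 : ∀ k, 0 < w k := fun k => pow_pos ht0 _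
  have hw1 : ∀ k, w k ≤ 1 := fun k => pow_le_one₀ ht0.le ht1
  have hwD : ∀ k, t ^ Dmx ≤ w k :=
    fun k => pow_le_pow_of_le_one ht0.le ht1 (hDle k.1 k.2)
  set MM : Matrix (Idx n m) (Idx n m) ℝ := Bmat n m β * Fmat v - Dmat n m δ - Lmat Q v with hMM
  -- row computations
  have hT1 : ∀ a : Fin m, ∀ i : Fin n, (Bmat n m β * Fmat v).mulVec w (a, i)
      = β i * ((∑ γ, v (γ, i) * w (γ, i)) / S i) := by
    intro a i
    have hentry : ∀ l : Idx n m, (Bmat n m β * Fmat v) (a, i) l = β i * Fmat v (a, i) l := by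
      intro l
      rw [Bmat, Matrix.diagonal_mul]
    simp only [Matrix.mulVec, dotProduct]
    calc ∑ l : Idx n m, (Bmat n m β * Fmat v) (a, i) l * w l
        = ∑ l : Idx n m, β i * Fmat v (a, i) l * w l := by
          refine Finset.sum_congr rfl fun l _ => ?_
          rw [hentry]
      _ = ∑ γ : Fin m, ∑ j : Fin n, β i * Fmat v (a, i) (γ, j) * w (γ, j) := by
          rw [Fintype.sum_prod_type]
      _ = ∑ γ : Fin m, β i * (v (γ, i) / S i) * w (γ, i) := by
          refine Finset.sum_congr rfl fun γ _ => ?_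
          rw [Finset.sum_eq_single i]
          · simp [Fmat, hS]
          · intro j _ hji
            simp [Fmat, hji]
          · intro habs
            exact absurd (Finset.mem_univ i) habs
      _ = β i * ((∑ γ, v (γ, i) * w (γ, i)) / S i) := by
          rw [Finset.sum_div, Finset.mul_sum]
          refine Finset.sum_congr rfl fun γ _ => ?_
          ring
  have hT2 : ∀ a : Fin m, ∀ i : Fin n, (Dmat n m δ).mulVec w (a, i) = δ i * w (a, i) := by
    intro a i
    simp only [Matrix.mulVec, dotProduct, Dmat, Matrix.diagonal_apply]
    rw [Finset.sum_eq_single ((a, i) : Idx n m)]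
    · simp
    · intro l _ hl
      simp [Ne.symm hl]
    · intro habs
      exact absurd (Finset.mem_univ _) habs
  have hT3 : ∀ a : Fin m, ∀ i : Fin n, (Lmat Q v).mulVec w (a, i) = ν a i * w (a, i)
      - ∑ j ∈ Finset.univ.filter (· ≠ i), Q a j i * v (a, j) / v (a, i) * w (a, j) := by
    intro a i
    simp only [Matrix.mulVec, dotProduct]
    rw [Fintype.sum_prod_type]
    rw [Finset.sum_eq_single a]
    rotate_left
    · intro γ _ hγ
      apply Finset.sum_eq_zero
      intro j _
      have : Lmat Q v (a, i) (γ, j) = 0 := by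
        simp [Lmat, Ne.symm hγ]
      rw [this, zero_mul]
    · intro habs
      exact absurd (Finset.mem_univ a) habs
    -- now the inner sum over j
    have hsplit : (∑ j ∈ Finset.univ.erase i, Lmat Q v (a, i) (a, j) * w (a, j))
        + Lmat Q v (a, i) (a, i) * w (a, i) = ∑ j, Lmat Q v (a, i) (a, j) * w (a, j) :=
      Finset.sum_erase_add Finset.univ
        (fun j => Lmat Q v (a, i) (a, j) * w (a, j)) (Finset.mem_univ i)
    rw [← hsplit]
    have hdiagL : Lmat Q v (a, i) (a, i) = ν a i := by
      have : Lmat Q v (a, i) (a, i)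
          = ∑ j ∈ Finset.univ.filter (· ≠ i), Q a j i * v (a, j) / v (a, i) := by
        simp [Lmat]
      rw [this, ← Finset.sum_div, hveq a i, mul_div_assoc,
        div_self (hvpos (a, i)).ne', mul_one]
    have hoffL : ∀ j, j ≠ i → Lmat Q v (a, i) (a, j)
        = -(Q a j i * v (a, j) / v (a, i)) := by
      intro j hj
      simp [Lmat, hj, Ne.symm hj]
    have herase : ∑ j ∈ Finset.univ.erase i, Lmat Q v (a, i) (a, j) * w (a, j)
        = -∑ j ∈ Finset.univ.filter (· ≠ i), Q a j i * v (a, j) / v (a, i) * w (a, j) := by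
      rw [← Finset.sum_neg_distrib, Finset.filter_ne']
      refine Finset.sum_congr rfl fun j hj => ?_
      rw [hoffL j (Finset.ne_of_mem_erase hj)]
      ring
    rw [herase, hdiagL]
    ring
  have hrow : ∀ a : Fin m, ∀ i : Fin n, MM.mulVec w (a, i)
      = β i * ((∑ γ, v (γ, i) * w (γ, i)) / S i) - (δ i + ν a i) * w (a, i)
        + ∑ j ∈ Finset.univ.filter (· ≠ i), Q a j i * v (a, j) / v (a, i) * w (a, j) := by
    intro a i
    rw [hMM, Matrix.sub_mulVec, Matrix.sub_mulVec]
    simp only [Pi.sub_apply]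
    rw [hT1 a i, hT2 a i, hT3 a i]
    ring
  -- Metzler property
  have hMet : ∀ k l : Idx n m, k ≠ l → 0 ≤ MM k l := by
    intro k l hkl
    rw [hMM]
    simp only [Matrix.sub_apply]
    have hD : Dmat n m δ k l = 0 := by
      rw [Dmat, Matrix.diagonal_apply_ne _ hkl]
    have hBF : 0 ≤ (Bmat n m β * Fmat v) k l := by
      rw [Bmat, Matrix.diagonal_mul]
      refine mul_nonneg (hβ k.2).le ?_
      by_cases hc : l.2 = k.2 <;> simp [Fmat, hc]
      exact div_nonneg (hvpos (l.1, k.2)).le (Finset.sum_nonneg fun η _ => (hvpos _).le)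
    have hL : Lmat Q v k l ≤ 0 := by
      by_cases h1 : k.1 = l.1
      · have h2 : k.2 ≠ l.2 := by
          intro h
          exact hkl (Prod.ext h1 h)
      -- entry is -(Q k.1 l.2 k.2 * v (k.1, l.2) / v k)
        have hQnn : 0 ≤ Q k.1 l.2 k.2 := (hQgen k.1).1 l.2 k.2 (Ne.symm h2)
        have : Lmat Q v k l = -(Q k.1 l.2 k.2 * v (k.1, l.2) / v k) := by
          simp [Lmat, h1, h2]
        rw [this]
        have : 0 ≤ Q k.1 l.2 k.2 * v (k.1, l.2) / v k :=
          div_nonneg (mul_nonneg hQnn (hvpos _).le) (hvpos k).le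
        linarith
      · simp [Lmat, h1]
    rw [hD]
    linarith
  -- the growth inequality
  have hMlow : ∀ k : Idx n m, ε * w k ≤ MM.mulVec w k := by
    intro k
    obtain ⟨a, i⟩ := k
    have hsum : κ * t ^ (d a (jsel a i))
        ≤ ∑ j ∈ Finset.univ.filter (· ≠ i), Q a j i * v (a, j) / v (a, i) * w (a, j) := by
      have hmem : jsel a i ∈ Finset.univ.filter (· ≠ i) :=
        Finset.mem_filter.mpr ⟨Finset.mem_univ _, hjne a i⟩
      have hnn : ∀ j ∈ Finset.univ.filter (· ≠ i),
          0 ≤ Q a j i * v (a, j) / v (a, i) * w (a, j) := by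
        intro j hj
        have hQnn : 0 ≤ Q a j i := (hQgen a).1 j i (Finset.mem_filter.mp hj).2
        exact mul_nonneg (div_nonneg (mul_nonneg hQnn (hvpos _).le) (hvpos _).le) (hw0 _).le
      have hsingle := Finset.single_le_sum hnn hmem
      refine le_trans ?_ hsingle
      have h1 : κ ≤ Q a (jsel a i) i * v (a, jsel a i) / v (a, i) := hκle (a, i)
      have h2 : (0:ℝ) < t ^ (d a (jsel a i)) := pow_pos ht0 _
      have h3 : w (a, jsel a i) = t ^ (d a (jsel a i)) := rfl
      rw [← h3] at h2 ⊢
      exact mul_le_mul_of_nonneg_right h1 h2.le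
    by_cases hii : i = i₀
    · subst hii
      have hwγ : ∀ γ : Fin m, w (γ, i) = 1 := by
        intro γ
        show t ^ (d γ i) = 1
        rw [hd0 γ, pow_zero]
      have hT1val : (∑ γ, v (γ, i) * w (γ, i)) / S i = 1 := by
        have : ∑ γ, v (γ, i) * w (γ, i) = S i := by
          rw [hS]
          refine Finset.sum_congr rfl fun γ _ => ?_
          rw [hwγ γ, mul_one]
        rw [this]
        exact div_self (hSpos i).ne'
      rw [hrow a i, hT1val, mul_one]
      have hβν := hi₀ a
      have hεle : ε ≤ κ * t ^ (d a (jsel a i)) := by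
        rw [hεdef]
        exact mul_le_mul_of_nonneg_left
          (pow_le_pow_of_le_one ht0.le ht1 (hDle a (jsel a i))) hκ0.le
      have hwa : w (a, i) = 1 := hwγ a
      rw [hwa]
      have hνdef : ν a i = ∑ j ∈ Finset.univ.filter (· ≠ i), Q a i j := rfl
      linarith [hsum, hεle]
    · -- i ≠ i₀
      have hdlt : d a (jsel a i) < d a i := hjd a i hii
      set e : ℕ := d a i with he
      have he1 : 1 ≤ e := by omega
      have hj1 : d a (jsel a i) ≤ e - 1 := by omega
      have hwj : t ^ (e - 1) ≤ t ^ (d a (jsel a i)) :=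
        pow_le_pow_of_le_one ht0.le ht1 hj1
      have hsum2 : κ * t ^ (e - 1)
          ≤ ∑ j ∈ Finset.univ.filter (· ≠ i), Q a j i * v (a, j) / v (a, i) * w (a, j) :=
        le_trans (mul_le_mul_of_nonneg_left hwj hκ0.le) hsum
      have hT1pos : 0 ≤ β i * ((∑ γ, v (γ, i) * w (γ, i)) / S i) := by
        refine mul_nonneg (hβ i).le (div_nonneg ?_ (hSpos i).le)
        exact Finset.sum_nonneg fun γ _ => mul_nonneg (hvpos _).le (hw0 _).le
      have hsplit : t ^ e = t * t ^ (e - 1) := by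
        rw [← pow_succ']
        congr 1
        omega
      have h6 : (δ i + ν a i + ε) * t ≤ κ := by
        have h7 : δ i + ν a i + ε ≤ R + κ + 1 := by
          have := hRle a i
          linarith [hεκ, hκ0]
        calc (δ i + ν a i + ε) * t ≤ (R + κ + 1) * t :=
              mul_le_mul_of_nonneg_right h7 ht0.le
          _ = t * (R + κ + 1) := mul_comm _ _
          _ ≤ κ := htkey
      have harr : (δ i + ν a i) * t ^ e + ε * t ^ e ≤ κ * t ^ (e - 1) := by
        calc (δ i + ν a i) * t ^ e + ε * t ^ e
            = ((δ i + ν a i + ε) * t) * t ^ (e - 1) := by rw [hsplit]; ring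
          _ ≤ κ * t ^ (e - 1) :=
              mul_le_mul_of_nonneg_right h6 (pow_nonneg ht0.le _)
      have hwa : w (a, i) = t ^ e := rfl
      rw [hrow a i, hwa]
      linarith [hT1pos, hsum2, harr]
  -- conclude via the spectral lemma
  have hfinal := SISAux.spec_pos MM w ε hε0 hMet hw0 hw1 hMlow
  have : muMax (Bmat n m β * Fmat v - Dmat n m δ - Lmat Q v)
      = sSup (Complex.re '' spectrum ℂ (MM.map (algebraMap ℝ ℂ))) := by
    rw [hMM, muMax]
  rw [this] at hmu
  linarith
end

section
/- Consider the SIS model under multi-layer Markovian mobility, with F* = F(v) and L* = L(v). If μ(B F* − D − L*) ≤ 0, where μ(G) is the largest real part of an eigenvalue of G, then there exists some patch i ∈ {1,…,n} such that δ_i ≥ β_i. -/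
open Matrix Finset Filter

open SISMobility

namespace SISAux

section NormSection
variable {ι : Type*} [Fintype ι] [DecidableEq ι]

attribute [local instance] Matrix.linftyOpNormedRing Matrix.linftyOpNormedAlgebra

lemma mat_entry_norm_le (A : Matrix ι ι ℝ) (k l : ι) : ‖A k l‖ ≤ ‖A‖ := by
  rw [← coe_nnnorm, ← coe_nnnorm]
  refine NNReal.coe_le_coe.mpr ?_
  rw [Matrix.linfty_opNNNorm_def]
  exact le_trans (Finset.single_le_sum (f := fun j => ‖A k j‖₊) (fun j _ => zero_le)
      (Finset.mem_univ l))
    (Finset.le_sup (f := fun i => ∑ j, ‖A i j‖₊) (Finset.mem_univ k))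

omit [DecidableEq ι] in
lemma mat_mul_nonneg {A B : Matrix ι ι ℝ} (hA : ∀ k l, 0 ≤ A k l) (hB : ∀ k l, 0 ≤ B k l) :
    ∀ k l, 0 ≤ (A * B) k l := fun k l =>
  Finset.sum_nonneg fun j _ => mul_nonneg (hA k j) (hB j l)

lemma mat_pow_nonneg {A : Matrix ι ι ℝ} (hA : ∀ k l, 0 ≤ A k l) :
    ∀ (i : ℕ) (k l : ι), 0 ≤ (A ^ i) k l := by
  intro i
  induction i with
  | zero =>
    intro k l
    rw [pow_zero, Matrix.one_apply]
    split <;> norm_num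
  | succ i ih =>
    rw [pow_succ]
    exact mat_mul_nonneg ih hA

/-- The entry evaluation as a linear map. -/
def matEntryLM (k l : ι) : Matrix ι ι ℝ →ₗ[ℝ] ℝ where
  toFun M := M k l
  map_add' _ _ := rfl
  map_smul' _ _ := rfl

lemma inv_one_sub_nonneg {X : Matrix ι ι ℝ} (hX : ∀ k l, 0 ≤ X k l) (h : ‖X‖ < 1) :
    ∀ k l, 0 ≤ (1 - X)⁻¹ k l := by
  have hsum : Summable fun i : ℕ => X ^ i := summable_geometric_of_norm_lt_one h
  have hmul : (1 - X) * ∑' i : ℕ, X ^ i = 1 := mul_neg_geom_series X h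
  rw [Matrix.inv_eq_right_inv hmul]
  intro k l
  have hφ : Continuous (matEntryLM k l) :=
    ((matEntryLM k l).mkContinuous 1 fun M => by
      rw [one_mul]; exact mat_entry_norm_le M k l).continuous
  have hhs : HasSum (fun i : ℕ => (X ^ i) k l) ((∑' i : ℕ, X ^ i) k l) :=
    hsum.hasSum.map ((matEntryLM k l).toAddMonoidHom) hφ
  exact hhs.nonneg fun i => mat_pow_nonneg hX i k l

lemma mat_norm_le_of_rows [Nonempty ι] {X : Matrix ι ι ℝ} {r : ℝ}
    (h : ∀ k, ∑ l, |X k l| ≤ r) : ‖X‖ ≤ r := by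
  have hr0 : 0 ≤ r :=
    le_trans (Finset.sum_nonneg fun l _ => abs_nonneg _) (h (Classical.arbitrary ι))
  rw [Matrix.linfty_opNorm_def, ← Real.coe_toNNReal r hr0, NNReal.coe_le_coe]
  refine Finset.sup_le fun k _ => ?_
  rw [← NNReal.coe_le_coe, NNReal.coe_sum, Real.coe_toNNReal r hr0]
  simpa [Real.norm_eq_abs] using h k

lemma one_sub_mul_inv_self {X : Matrix ι ι ℝ} (h : ‖X‖ < 1) : (1 - X) * (1 - X)⁻¹ = 1 := by
  rw [Matrix.inv_eq_right_inv (mul_neg_geom_series X h)]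
  exact mul_neg_geom_series X h

lemma scaled_neumann_nonneg [Nonempty ι] {P : Matrix ι ι ℝ} (hP : ∀ k l, 0 ≤ P k l) {s r : ℝ}
    (hrow : ∀ k, ∑ l, |P k l| ≤ s) (hsr : s < r) :
    ∀ k l, 0 ≤ ((r • (1 : Matrix ι ι ℝ) - P)⁻¹) k l := by
  have hnorm : ‖P‖ < r := lt_of_le_of_lt (mat_norm_le_of_rows hrow) hsr
  have hr0 : 0 < r := lt_of_le_of_lt (norm_nonneg P) hnorm
  set X := r⁻¹ • P with hX
  have hXn : ‖X‖ < 1 := by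
    rw [hX, norm_smul, norm_inv, Real.norm_eq_abs, abs_of_pos hr0, inv_mul_eq_div,
      div_lt_one hr0]
    exact hnorm
  have hXpos : ∀ k l, 0 ≤ X k l := fun k l => by
    rw [hX, Matrix.smul_apply, smul_eq_mul]
    exact mul_nonneg (inv_nonneg.mpr hr0.le) (hP k l)
  have hfac : r • (1 : Matrix ι ι ℝ) - P = r • (1 - X) := by
    rw [smul_sub, hX, smul_smul, mul_inv_cancel₀ hr0.ne', one_smul]
  have hright : (r • (1 : Matrix ι ι ℝ) - P) * (r⁻¹ • (1 - X)⁻¹) = 1 := by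
    rw [hfac, smul_mul_assoc, Matrix.mul_smul, smul_smul, mul_inv_cancel₀ hr0.ne', one_smul,
      one_sub_mul_inv_self hXn]
  rw [Matrix.inv_eq_right_inv hright]
  intro k l
  rw [Matrix.smul_apply, smul_eq_mul]
  exact mul_nonneg (inv_nonneg.mpr hr0.le) (inv_one_sub_nonneg hXpos hXn k l)

lemma shift_inv_nonneg [Nonempty ι] {A : Matrix ι ι ℝ} (hA : IsUnit A.det)
    (hApos : ∀ k l, 0 ≤ A⁻¹ k l) {η ρ : ℝ} (hη : 0 ≤ η)
    (hrow : ∀ k, ∑ l, |A⁻¹ k l| ≤ ρ) (hsm : η * ρ < 1) :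
    ∀ k l, 0 ≤ ((A - η • (1 : Matrix ι ι ℝ))⁻¹) k l := by
  set X := η • A⁻¹ with hX
  have hXn : ‖X‖ < 1 := by
    have h1 : ‖A⁻¹‖ ≤ ρ := mat_norm_le_of_rows hrow
    calc ‖X‖ = η * ‖A⁻¹‖ := by rw [hX, norm_smul, Real.norm_eq_abs, abs_of_nonneg hη]
    _ ≤ η * ρ := mul_le_mul_of_nonneg_left h1 hη
    _ < 1 := hsm
  have hXpos : ∀ k l, 0 ≤ X k l := fun k l => by
    rw [hX, Matrix.smul_apply, smul_eq_mul]
    exact mul_nonneg hη (hApos k l)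
  have hfac : A - η • (1 : Matrix ι ι ℝ) = A * (1 - X) := by
    rw [mul_sub, mul_one, hX, Matrix.mul_smul, Matrix.mul_nonsing_inv _ hA]
  have hright : (A - η • (1 : Matrix ι ι ℝ)) * ((1 - X)⁻¹ * A⁻¹) = 1 := by
    rw [hfac, mul_assoc, ← mul_assoc (1 - X), one_sub_mul_inv_self hXn, one_mul,
      Matrix.mul_nonsing_inv _ hA]
  rw [Matrix.inv_eq_right_inv hright]
  exact mat_mul_nonneg (inv_one_sub_nonneg hXpos hXn) hApos

lemma re_le_csSup_spectrum (M : Matrix ι ι ℂ) {z : ℂ} (hz : z ∈ spectrum ℂ M) :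
    z.re ≤ sSup (Complex.re '' spectrum ℂ M) :=
  le_csSup (((spectrum.isCompact M).image Complex.continuous_re).bddAbove) ⟨z, hz, rfl⟩

end NormSection


section Resolvent
variable {ι : Type*} [Fintype ι] [DecidableEq ι] [Nonempty ι]

lemma resolvent_nonneg (G : Matrix ι ι ℝ)
    (hM : ∀ k l, k ≠ l → 0 ≤ G k l)
    (hinv : ∀ t : ℝ, 0 < t → IsUnit (t • (1 : Matrix ι ι ℝ) - G))
    (t₁ : ℝ) (ht₁ : 0 < t₁) :
    ∀ k l, 0 ≤ ((t₁ • (1 : Matrix ι ι ℝ) - G)⁻¹) k l := by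
  classical
  set A : ℝ → Matrix ι ι ℝ := fun t => t • 1 - G with hAdef
  have hdet : ∀ t, 0 < t → IsUnit (A t).det := fun t ht =>
    (Matrix.isUnit_iff_isUnit_det _).mp (hinv t ht)
  -- a constant making G + c•1 entrywise nonnegative
  obtain ⟨c₀, hc₀⟩ := Finite.exists_le fun k => |G k k|
  obtain ⟨c, hc0, hc⟩ : ∃ c : ℝ, 0 < c ∧ ∀ k, 0 ≤ G k k + c := by
    refine ⟨1 + max c₀ 0, by positivity, fun k => ?_⟩
    have h1 : |G k k| ≤ max c₀ 0 := le_trans (hc₀ k) (le_max_left _ _)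
    have h2 := neg_abs_le (G k k)
    linarith
  set P : Matrix ι ι ℝ := G + c • 1 with hPdef
  have hP : ∀ k l, 0 ≤ P k l := by
    intro k l
    by_cases hkl : k = l
    · subst hkl
      simpa [hPdef, Matrix.add_apply, Matrix.smul_apply, Matrix.one_apply_eq] using hc k
    · simpa [hPdef, Matrix.add_apply, Matrix.smul_apply, Matrix.one_apply_ne hkl] using
        hM k l hkl
  obtain ⟨s₁, hs₁⟩ := Finite.exists_le fun k => ∑ l, |P k l|
  set s₀ : ℝ := max s₁ 0 with hs₀def
  have hrowP : ∀ k, ∑ l, |P k l| ≤ s₀ := fun k => le_trans (hs₁ k) (le_max_left _ _)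
  have hs₀0 : 0 ≤ s₀ := le_max_right _ _
  set T : ℝ := t₁ + s₀ + 1 with hTdef
  have ht₁T : t₁ < T := by simp only [hTdef]; linarith
  have hT0 : 0 < T := ht₁.trans ht₁T
  have hAT : A T = (T + c) • (1 : Matrix ι ι ℝ) - P := by
    simp only [hAdef, hPdef, add_smul]
    abel
  have hTS : ∀ k l, 0 ≤ (A T)⁻¹ k l := by
    rw [hAT]
    exact scaled_neumann_nonneg hP hrowP (by linarith)
  -- continuity of entries of the resolvent
  have hconts : ∀ (k l : ι) (t : ℝ), 0 < t → ContinuousAt (fun u => (A u)⁻¹ k l) t := by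
    intro k l t ht
    have hAc : Continuous A := by
      simp only [hAdef]
      exact (continuous_id.smul continuous_const).sub continuous_const
    have h1 : ContinuousAt (fun u => (A u).det) t := hAc.matrix_det.continuousAt
    have h2 : ContinuousAt (fun u => (A u).adjugate k l) t :=
      ((continuous_apply l).comp ((continuous_apply k).comp hAc.matrix_adjugate)).continuousAt
    have h3 : (fun u => (A u)⁻¹ k l) = fun u => ((A u).det)⁻¹ * (A u).adjugate k l := by
      funext u
      rw [Matrix.inv_def, Matrix.smul_apply, Ring.inverse_eq_inv, smul_eq_mul]
    rw [h3]
    exact (h1.inv₀ (hdet t ht).ne_zero).mul h2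
  -- the set of "good endpoints"
  set E : Set ℝ := {t : ℝ | t₁ ≤ t ∧ ∀ u, t ≤ u → u ≤ T → ∀ k l, 0 ≤ (A u)⁻¹ k l} with hEdef
  have hTE : T ∈ E := by
    refine ⟨ht₁T.le, fun u hu1 hu2 k l => ?_⟩
    have : u = T := le_antisymm hu2 hu1
    rw [this]; exact hTS k l
  have hEne : E.Nonempty := ⟨T, hTE⟩
  have hbdd : BddBelow E := ⟨t₁, fun x hx => hx.1⟩
  set b : ℝ := sInf E with hbdef
  have hb_ge : t₁ ≤ b := le_csInf hEne fun x hx => hx.1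
  have hb_le : b ≤ T := csInf_le hbdd hTE
  have hb0 : 0 < b := lt_of_lt_of_le ht₁ hb_ge
  have step1 : ∀ u, b < u → u ≤ T → ∀ k l, 0 ≤ (A u)⁻¹ k l := by
    intro u hu huT
    obtain ⟨e, heE, heu⟩ := exists_lt_of_csInf_lt hEne hu
    exact heE.2 u heu.le huT
  have step2 : ∀ k l, 0 ≤ (A b)⁻¹ k l := by
    rcases eq_or_lt_of_le hb_le with hbT | hbT
    · rw [hbT]; exact hTS
    · intro k l
      have hev : ∀ᶠ u in nhdsWithin b (Set.Ioi b), 0 ≤ (A u)⁻¹ k l := by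
        filter_upwards [Ioc_mem_nhdsGT_of_mem (Set.left_mem_Ico.mpr hbT)] with u hu
        exact step1 u hu.1 hu.2 k l
      exact ge_of_tendsto ((hconts k l b hb0).continuousWithinAt.tendsto) hev
  have step3 : b ∈ E := by
    refine ⟨hb_ge, fun u hbu huT k l => ?_⟩
    rcases eq_or_lt_of_le hbu with h | h
    · rw [← h]; exact step2 k l
    · exact step1 u h huT k l
  -- b must equal t₁
  have hbt₁ : b = t₁ := by
    by_contra hne
    have hlt : t₁ < b := lt_of_le_of_ne hb_ge (Ne.symm hne)
    set R : Matrix ι ι ℝ := (A b)⁻¹ with hRdef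
    obtain ⟨ρ₁, hρ₁⟩ := Finite.exists_le fun k => ∑ l, |R k l|
    set ρ : ℝ := max ρ₁ 0 with hρdef
    have hrowR : ∀ k, ∑ l, |R k l| ≤ ρ := fun k => le_trans (hρ₁ k) (le_max_left _ _)
    have hρ0 : 0 ≤ ρ := le_max_right _ _
    set η : ℝ := min ((b - t₁) / 2) (1 / (2 * (ρ + 1))) with hηdef
    have hη0 : 0 < η := by
      apply lt_min
      · linarith
      · positivity
    have hηlt : η * ρ < 1 := by
      have h1 : η ≤ 1 / (2 * (ρ + 1)) := min_le_right _ _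
      have h2 : η * ρ ≤ (1 / (2 * (ρ + 1))) * ρ := mul_le_mul_of_nonneg_right h1 hρ0
      have h3 : (1 / (2 * (ρ + 1))) * ρ < 1 := by
        rw [div_mul_eq_mul_div, one_mul, div_lt_one (by positivity)]
        nlinarith
      linarith
    have hstep : ∀ u, b - η ≤ u → u < b → ∀ k l, 0 ≤ (A u)⁻¹ k l := by
      intro u hu1 hu2
      have hfac : A u = A b - (b - u) • (1 : Matrix ι ι ℝ) := by
        simp only [hAdef, sub_smul]
        abel
      rw [hfac]
      refine shift_inv_nonneg (hdet b hb0) step2 (by linarith) hrowR ?_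
      have hbu : b - u ≤ η := by linarith
      calc (b - u) * ρ ≤ η * ρ := mul_le_mul_of_nonneg_right hbu hρ0
      _ < 1 := hηlt
    have ht'E : max t₁ (b - η) ∈ E := by
      refine ⟨le_max_left _ _, fun u hu1 huT k l => ?_⟩
      rcases lt_or_ge u b with h | h
      · exact hstep u (le_trans (le_max_right _ _) hu1) h k l
      · exact step3.2 u h huT k l
    have : b ≤ max t₁ (b - η) := csInf_le hbdd ht'E
    rcases max_cases t₁ (b - η) with ⟨heq, _⟩ | ⟨heq, _⟩ <;> rw [heq] at this <;> linarith
  have := step3.2 t₁ (le_of_eq hbt₁) ht₁T.le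
  exact this

end Resolvent
end SISAux

open SISAux

/-- Corollary 1 (ii): if `μ(B F* − D − L*) ≤ 0`, then there exists
some patch `i` with `δ_i ≥ β_i`. -/
theorem necessary_condition_some_patch
    (n m : ℕ) (hn : 2 ≤ n) (hm : 1 ≤ m)
    (Q : Fin m → Matrix (Fin n) (Fin n) ℝ)
    (hQgen : ∀ α, IsGenerator (Q α)) (hQirr : ∀ α, StronglyConnected (Q α))
    (β δ : Fin n → ℝ) (hβ : ∀ i, 0 < β i) (hδ : ∀ i, 0 ≤ δ i)
    (vα : Fin m → Fin n → ℝ) (hvαpos : ∀ α i, 0 < vα α i)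
    (hvαnorm : ∀ α, ∑ i, vα α i = 1)
    (hvαeig : ∀ α i, ∑ j, Q α j i * vα α j = 0)
    (Npop : Fin m → ℝ) (hNpop : ∀ α, 0 < Npop α)
    (v : Idx n m → ℝ) (hv : ∀ k, v k = Npop k.1 * vα k.1 k.2)
    (hmu : muMax (Bmat n m β * Fmat v - Dmat n m δ - Lmat Q v) ≤ 0) :
    ∃ i : Fin n, β i ≤ δ i := by
  classical
  by_contra hcon
  push_neg at hcon
  haveI : NeZero m := ⟨by omega⟩
  haveI : NeZero n := ⟨by omega⟩
  haveI : Nonempty (Fin m) := ⟨⟨0, by omega⟩⟩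
  haveI : Nonempty (Fin n) := ⟨⟨0, by omega⟩⟩
  set G : Matrix (Idx n m) (Idx n m) ℝ := Bmat n m β * Fmat v - Dmat n m δ - Lmat Q v with hGdef
  have hvpos : ∀ k : Idx n m, 0 < v k := fun k => by
    rw [hv]; exact mul_pos (hNpop _) (hvαpos _ _)
  have hSpos : ∀ i : Fin n, 0 < ∑ η : Fin m, v (η, i) := fun i =>
    Finset.sum_pos (fun η _ => hvpos _) Finset.univ_nonempty
  have hBFentry : ∀ k l : Idx n m, (Bmat n m β * Fmat v) k l
      = β k.2 * (if l.2 = k.2 then v (l.1, k.2) / ∑ η : Fin m, v (η, k.2) else 0) := by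
    intro k l
    rw [show Bmat n m β = Matrix.diagonal (fun k : Idx n m => β k.2) from rfl,
      Matrix.diagonal_mul]
    rfl
  -- G is Metzler
  have hMet : ∀ k l : Idx n m, k ≠ l → 0 ≤ G k l := by
    intro k l hkl
    have hD : Dmat n m δ k l = 0 := Matrix.diagonal_apply_ne _ hkl
    have hBF : 0 ≤ (Bmat n m β * Fmat v) k l := by
      rw [hBFentry]
      refine mul_nonneg (hβ k.2).le ?_
      split
      · exact div_nonneg (hvpos _).le (hSpos _).le
      · exact le_refl 0
    have hL : Lmat Q v k l ≤ 0 := by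
      unfold Lmat
      by_cases h1 : k.1 = l.1
      · have h2 : k.2 ≠ l.2 := fun h2 => hkl (Prod.ext h1 h2)
        rw [if_pos h1, if_neg h2]
        have hq : 0 ≤ Q k.1 l.2 k.2 := (hQgen k.1).1 l.2 k.2 (Ne.symm h2)
        have h3 : 0 ≤ Q k.1 l.2 k.2 * v (k.1, l.2) / v k :=
          div_nonneg (mul_nonneg hq (hvpos (k.1, l.2)).le) (hvpos k).le
        linarith
      · rw [if_neg h1]
    simp only [hGdef, Matrix.sub_apply]
    rw [hD]
    linarith
  -- invertibility of t•1 - G for every t > 0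
  have hinv : ∀ t : ℝ, 0 < t → IsUnit (t • (1 : Matrix (Idx n m) (Idx n m) ℝ) - G) := by
    intro t ht
    by_contra hun
    have hdet0 : (t • (1 : Matrix (Idx n m) (Idx n m) ℝ) - G).det = 0 := by
      by_contra hd
      exact hun ((Matrix.isUnit_iff_isUnit_det _).mpr (isUnit_iff_ne_zero.mpr hd))
    have hmem : (t : ℂ) ∈ spectrum ℂ (G.map (algebraMap ℝ ℂ)) := by
      rw [spectrum.mem_iff]
      intro hu
      have heq : algebraMap ℂ (Matrix (Idx n m) (Idx n m) ℂ) (t : ℂ) - G.map (algebraMap ℝ ℂ)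
          = (t • (1 : Matrix (Idx n m) (Idx n m) ℝ) - G).map (algebraMap ℝ ℂ) := by
        ext k l
        simp only [Algebra.algebraMap_eq_smul_one, Matrix.sub_apply, Matrix.smul_apply,
          Matrix.map_apply, Matrix.one_apply, smul_eq_mul, _root_.map_sub, _root_.map_mul, mul_ite, mul_one,
          mul_zero]
        split <;> simp
      rw [heq] at hu
      have h2 := (Matrix.isUnit_iff_isUnit_det _).mp hu
      have h3 : ((t • (1 : Matrix (Idx n m) (Idx n m) ℝ) - G).map (algebraMap ℝ ℂ)).det = 0 := by
        have h4 := (algebraMap ℝ ℂ).map_det (t • (1 : Matrix (Idx n m) (Idx n m) ℝ) - G)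
        rw [hdet0] at h4
        simpa [RingHom.mapMatrix_apply] using h4.symm
      rw [h3] at h2
      simp at h2
    have hre : (t : ℂ).re ≤ muMax G := re_le_csSup_spectrum _ hmem
    rw [Complex.ofReal_re] at hre
    rw [muMax] at hmu hre
    linarith
  -- the left-eigenvector computation: v ᵥ* G = v * (β - δ)
  have hvec : ∀ l : Idx n m, Matrix.vecMul v G l = v l * (β l.2 - δ l.2) := by
    intro l
    have hBF : ∑ k : Idx n m, v k * (Bmat n m β * Fmat v) k l = β l.2 * v l := by
      simp_rw [hBFentry]
      rw [Fintype.sum_prod_type]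
      have hin : ∀ α : Fin m,
          ∑ i : Fin n, v (α, i) * (β i *
            (if l.2 = i then v (l.1, i) / ∑ η : Fin m, v (η, i) else 0))
          = v (α, l.2) * (β l.2 * (v (l.1, l.2) / ∑ η : Fin m, v (η, l.2))) := by
        intro α
        rw [Finset.sum_eq_single l.2]
        · rw [if_pos rfl]
        · intro j _ hj
          rw [if_neg (Ne.symm hj)]
          ring
        · intro h; exact absurd (Finset.mem_univ _) h
      simp_rw [hin]
      rw [← Finset.sum_mul]
      have hS := (hSpos l.2).ne'
      field_simp
    have hD : ∑ k : Idx n m, v k * Dmat n m δ k l = v l * δ l.2 := by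
      rw [Finset.sum_eq_single l]
      · rw [show Dmat n m δ l l = δ l.2 from Matrix.diagonal_apply_eq _ l]
      · intro k _ hk
        rw [show Dmat n m δ k l = 0 from Matrix.diagonal_apply_ne _ hk, mul_zero]
      · intro h; exact absurd (Finset.mem_univ _) h
    have hQ0 : ∑ j : Fin n, Q l.1 j l.2 * v (l.1, j) = 0 := by
      have hvv : ∀ j, v (l.1, j) = Npop l.1 * vα l.1 j := fun j => hv (l.1, j)
      simp_rw [hvv]
      calc ∑ j : Fin n, Q l.1 j l.2 * (Npop l.1 * vα l.1 j)
          = Npop l.1 * ∑ j : Fin n, Q l.1 j l.2 * vα l.1 j := by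
            rw [Finset.mul_sum]
            exact Finset.sum_congr rfl fun j _ => by ring
      _ = 0 := by rw [hvαeig l.1 l.2, mul_zero]
    have hL0 : ∑ k : Idx n m, v k * Lmat Q v k l = 0 := by
      have hLsum : ∑ k : Idx n m, v k * Lmat Q v k l
          = ∑ i : Fin n, v (l.1, i) * Lmat Q v (l.1, i) l := by
        rw [Fintype.sum_prod_type]
        rw [Finset.sum_eq_single l.1]
        · intro α _ hα
          apply Finset.sum_eq_zero
          intro i _
          have h0 : Lmat Q v (α, i) l = 0 := by unfold Lmat; rw [if_neg hα]
          rw [h0, mul_zero]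
        · intro h; exact absurd (Finset.mem_univ _) h
      have hdiag : Lmat Q v (l.1, l.2) l
          = ∑ j ∈ Finset.univ.filter (· ≠ l.2), Q l.1 j l.2 * v (l.1, j) / v (l.1, l.2) := by
        unfold Lmat
        rw [if_pos rfl, if_pos rfl]
      have hoff : ∀ i : Fin n, i ≠ l.2 →
          Lmat Q v (l.1, i) l = -(Q l.1 l.2 i * v (l.1, l.2) / v (l.1, i)) := by
        intro i hi
        unfold Lmat
        rw [if_pos rfl, if_neg hi]
      rw [hLsum, ← Finset.sum_erase_add Finset.univ _ (Finset.mem_univ l.2)]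
      have hdiagterm : v (l.1, l.2) * Lmat Q v (l.1, l.2) l
          = ∑ j ∈ Finset.univ.erase l.2, Q l.1 j l.2 * v (l.1, j) := by
        rw [hdiag, Finset.mul_sum, ← Finset.filter_ne']
        refine Finset.sum_congr rfl fun j _ => ?_
        field_simp [(hvpos (l.1, l.2)).ne']
      have hofft : ∑ i ∈ Finset.univ.erase l.2, v (l.1, i) * Lmat Q v (l.1, i) l
          = -((∑ i ∈ Finset.univ.erase l.2, Q l.1 l.2 i) * v (l.1, l.2)) := by
        rw [Finset.sum_mul, ← Finset.sum_neg_distrib]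
        refine Finset.sum_congr rfl fun i hi => ?_
        rw [hoff i (Finset.ne_of_mem_erase hi)]
        field_simp [(hvpos (l.1, i)).ne']
      have hq1 : ∑ i ∈ Finset.univ.erase l.2, Q l.1 l.2 i = -(Q l.1 l.2 l.2) := by
        have h1 := (hQgen l.1).2 l.2
        have h2 := Finset.sum_erase_add Finset.univ (fun i => Q l.1 l.2 i) (Finset.mem_univ l.2)
        rw [h1] at h2
        linarith
      have hq2 : ∑ j ∈ Finset.univ.erase l.2, Q l.1 j l.2 * v (l.1, j)
          = -(Q l.1 l.2 l.2 * v (l.1, l.2)) := by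
        rw [Finset.sum_erase_eq_sub (Finset.mem_univ l.2), hQ0]
        ring
      rw [hofft, hdiagterm, hq1, hq2]
      ring
    have hexp : Matrix.vecMul v G l = ∑ k : Idx n m, v k * G k l := by
      simp [Matrix.vecMul, dotProduct]
    rw [hexp]
    have hsplit : ∑ k : Idx n m, v k * G k l
        = (∑ k : Idx n m, v k * (Bmat n m β * Fmat v) k l)
          - (∑ k : Idx n m, v k * Dmat n m δ k l)
          - (∑ k : Idx n m, v k * Lmat Q v k l) := by
      rw [← Finset.sum_sub_distrib, ← Finset.sum_sub_distrib]
      refine Finset.sum_congr rfl fun k _ => ?_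
      simp only [hGdef, Matrix.sub_apply]
      ring
    rw [hsplit, hBF, hD, hL0]
    have hPeta : v (l.1, l.2) = v l := by rw [Prod.mk.eta]
    ring
  -- choose s in (0, min (β - δ))
  have hne : (Finset.univ : Finset (Fin n)).Nonempty := Finset.univ_nonempty
  set ε : ℝ := Finset.univ.inf' hne (fun i => β i - δ i) with hεdef
  have hε0 : 0 < ε := by
    rw [hεdef, Finset.lt_inf'_iff]
    exact fun i _ => sub_pos.mpr (hcon i)
  set s : ℝ := ε / 2 with hsdef
  have hs0 : 0 < s := by positivity
  set A := s • (1 : Matrix (Idx n m) (Idx n m) ℝ) - G with hAdef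
  have hAinvpos : ∀ k l, 0 ≤ A⁻¹ k l := resolvent_nonneg G hMet hinv s hs0
  have hAu : IsUnit A.det := (Matrix.isUnit_iff_isUnit_det _).mp (hinv s hs0)
  have hwneg : ∀ l, Matrix.vecMul v A l < 0 := by
    intro l
    have h1 : Matrix.vecMul v A l = s * v l - v l * (β l.2 - δ l.2) := by
      have hsm : Matrix.vecMul v (s • (1 : Matrix (Idx n m) (Idx n m) ℝ)) l = s * v l := by
        simp [Matrix.vecMul, dotProduct, Matrix.smul_apply, Matrix.one_apply, mul_ite,
          Finset.sum_ite_eq, mul_comm]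
      rw [hAdef, Matrix.vecMul_sub, Pi.sub_apply, hsm, hvec l]
    have h2 : ε ≤ β l.2 - δ l.2 := Finset.inf'_le _ (Finset.mem_univ l.2)
    have h3 := hvpos l
    rw [h1]
    nlinarith
  obtain ⟨k0⟩ := (inferInstance : Nonempty (Idx n m))
  have hvk : v = Matrix.vecMul (Matrix.vecMul v A) A⁻¹ := by
    rw [Matrix.vecMul_vecMul, Matrix.mul_nonsing_inv _ hAu, Matrix.vecMul_one]
  have hle : v k0 ≤ 0 := by
    have h1 := congrFun hvk k0
    rw [h1]
    have h2 : Matrix.vecMul (Matrix.vecMul v A) A⁻¹ k0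
        = ∑ j : Idx n m, Matrix.vecMul v A j * A⁻¹ j k0 := by
      simp [Matrix.vecMul, dotProduct]
    rw [h2]
    exact Finset.sum_nonpos fun j _ => mul_nonpos_of_nonpos_of_nonneg (hwneg j).le
      (hAinvpos j k0)
  exact absurd hle (not_le.mpr (hvpos k0))
end

section
/- Consider the SIS model under multi-layer Markovian mobility, with F* = F(v) and L* = L(v). If δ_i ≥ β_i for every patch i ∈ {1,…,n}, then μ(B F* − D − L*) ≤ 0, where μ(G) is the largest real part of an eigenvalue of G. -/
open Matrix Finset Filter

namespace SISMobility

lemma mem_spec_eig' {ι : Type*} [Fintype ι] [DecidableEq ι] (M : Matrix ι ι ℂ) (z : ℂ)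
    (hz : z ∈ spectrum ℂ M) : Module.End.HasEigenvalue (Matrix.toLin' M) z := by
  rw [Module.End.hasEigenvalue_iff_mem_spectrum]
  rwa [← AlgEquiv.spectrum_eq (Matrix.toLinAlgEquiv' (R := ℂ) (n := ι))] at *

/-- A Metzler matrix (nonnegative off-diagonal entries) with nonpositive row sums has
all eigenvalues with nonpositive real part, by Gershgorin's circle theorem. -/
lemma metzler_muMax_le {ι : Type*} [Fintype ι] [DecidableEq ι] (G : Matrix ι ι ℝ)
    (hoff : ∀ i j, i ≠ j → 0 ≤ G i j) (hrow : ∀ i, ∑ j, G i j ≤ 0) :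
    muMax G ≤ 0 := by
  apply Real.sSup_le _ le_rfl
  rintro x ⟨z, hz, rfl⟩
  obtain ⟨k, hk⟩ := eigenvalue_mem_ball (mem_spec_eig' _ z hz)
  rw [Metric.mem_closedBall, Complex.dist_eq] at hk
  have h1 : z.re - G k k ≤ ‖z - (G.map (algebraMap ℝ ℂ)) k k‖ := by
    simpa using (Complex.re_le_norm (z - (G.map (algebraMap ℝ ℂ)) k k))
  have h2 : ∑ j ∈ Finset.univ.erase k, ‖(G.map (algebraMap ℝ ℂ)) k j‖
      = ∑ j ∈ Finset.univ.erase k, G k j := by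
    refine Finset.sum_congr rfl fun j hj => ?_
    have hne : k ≠ j := fun h => (Finset.mem_erase.mp hj).1 h.symm
    simp [Matrix.map_apply, Complex.norm_real, abs_of_nonneg (hoff k j hne)]
  have h3 : ∑ j ∈ Finset.univ.erase k, G k j = (∑ j, G k j) - G k k := by
    rw [Finset.sum_erase_eq_sub (Finset.mem_univ k)]
  have h4 := hrow k
  linarith [h1.trans (hk.trans_eq h2)]

end SISMobility

open SISMobility

/-- Corollary 1 (iii): if `δ_i ≥ β_i` for every patch `i`, then
`μ(B F* − D − L*) ≤ 0`. -/
theorem sufficient_condition_all_patches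
    (n m : ℕ) (hn : 2 ≤ n) (hm : 1 ≤ m)
    (Q : Fin m → Matrix (Fin n) (Fin n) ℝ)
    (hQgen : ∀ α, IsGenerator (Q α)) (hQirr : ∀ α, StronglyConnected (Q α))
    (β δ : Fin n → ℝ) (hβ : ∀ i, 0 < β i) (hδ : ∀ i, 0 ≤ δ i)
    (vα : Fin m → Fin n → ℝ) (hvαpos : ∀ α i, 0 < vα α i)
    (hvαnorm : ∀ α, ∑ i, vα α i = 1)
    (hvαeig : ∀ α i, ∑ j, Q α j i * vα α j = 0)
    (Npop : Fin m → ℝ) (hNpop : ∀ α, 0 < Npop α)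
    (v : Idx n m → ℝ) (hv : ∀ k, v k = Npop k.1 * vα k.1 k.2)
    (hrates : ∀ i : Fin n, β i ≤ δ i) :
    muMax (Bmat n m β * Fmat v - Dmat n m δ - Lmat Q v) ≤ 0 := by
  have hvpos : ∀ k : Idx n m, 0 < v k := fun k => by
    rw [hv]; exact mul_pos (hNpop k.1) (hvαpos k.1 k.2)
  have hmne : Nonempty (Fin m) := ⟨⟨0, hm⟩⟩
  have hS : ∀ i : Fin n, 0 < ∑ η : Fin m, v (η, i) := fun i =>
    Finset.sum_pos (fun η _ => hvpos (η, i)) Finset.univ_nonempty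
  have hBF : ∀ k l : Idx n m, (Bmat n m β * Fmat v) k l = β k.2 * Fmat v k l := by
    intro k l; rw [Bmat, Matrix.diagonal_mul]
  apply metzler_muMax_le
  · intro k l hkl
    rw [Matrix.sub_apply, Matrix.sub_apply, hBF, Dmat, Matrix.diagonal_apply_ne _ hkl]
    rcases eq_or_ne l.2 k.2 with h2 | h2
    · have h1 : k.1 ≠ l.1 := by
        intro h; exact hkl (Prod.ext h h2.symm)
      have hL : Lmat Q v k l = 0 := by simp [Lmat, h1]
      have hF : Fmat v k l = v (l.1, k.2) / ∑ η : Fin m, v (η, k.2) := by simp [Fmat, h2]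
      rw [hL, hF]
      have : 0 ≤ β k.2 * (v (l.1, k.2) / ∑ η : Fin m, v (η, k.2)) :=
        mul_nonneg (hβ k.2).le (div_nonneg (hvpos _).le (hS k.2).le)
      linarith
    · have hF : Fmat v k l = 0 := by simp [Fmat, h2]
      rcases eq_or_ne k.1 l.1 with h1 | h1
      · have hL : Lmat Q v k l = -(Q k.1 l.2 k.2 * v (k.1, l.2) / v k) := by
          have h2' : ¬ (k.2 = l.2) := fun h => h2 h.symm
          show (if k.1 = l.1 then _ else _) = _
          rw [if_pos h1, if_neg h2']
        rw [hF, hL]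
        have : 0 ≤ Q k.1 l.2 k.2 * v (k.1, l.2) / v k :=
          div_nonneg (mul_nonneg ((hQgen k.1).1 l.2 k.2 fun h => h2 (h ▸ rfl)) (hvpos _).le)
            (hvpos k).le
        linarith
      · have hL : Lmat Q v k l = 0 := by simp [Lmat, h1]
        rw [hF, hL]; simp
  · intro k
    have hFsum : ∑ l : Idx n m, Fmat v k l = 1 := by
      rw [Fintype.sum_prod_type]
      have : ∀ γ : Fin m, ∑ j : Fin n, Fmat v k (γ, j)
          = v (γ, k.2) / ∑ η : Fin m, v (η, k.2) := by
        intro γ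
        simp [Fmat]
      rw [Finset.sum_congr rfl fun γ _ => this γ, ← Finset.sum_div,
        div_self (hS k.2).ne']
    have hDsum : ∑ l : Idx n m, Dmat n m δ k l = δ k.2 := by
      simp [Dmat, Matrix.diagonal_apply]
    have hLsum : ∑ l : Idx n m, Lmat Q v k l = 0 := by
      rw [Fintype.sum_prod_type]
      have hγ : ∀ γ : Fin m, γ ≠ k.1 → ∑ j : Fin n, Lmat Q v k (γ, j) = 0 := by
        intro γ hγ
        refine Finset.sum_eq_zero fun j _ => ?_
        have h' : ¬ (k.1 = γ) := fun h => hγ h.symm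
        simp [Lmat, h']
      rw [Finset.sum_eq_single k.1 (fun γ _ h => hγ γ h) (by simp)]
      have hsplit : ∑ j : Fin n, Lmat Q v k (k.1, j)
          = Lmat Q v k (k.1, k.2) + ∑ j ∈ Finset.univ.erase k.2, Lmat Q v k (k.1, j) := by
        rw [← Finset.add_sum_erase _ _ (Finset.mem_univ k.2)]
      rw [hsplit]
      have hdiag : Lmat Q v k (k.1, k.2)
          = ∑ j ∈ Finset.univ.filter (· ≠ k.2), Q k.1 j k.2 * v (k.1, j) / v k := by
        simp [Lmat]
      have hoffd : ∑ j ∈ Finset.univ.erase k.2, Lmat Q v k (k.1, j)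
          = -∑ j ∈ Finset.univ.erase k.2, Q k.1 j k.2 * v (k.1, j) / v k := by
        rw [← Finset.sum_neg_distrib]
        refine Finset.sum_congr rfl fun j hj => ?_
        have hne : j ≠ k.2 := (Finset.mem_erase.mp hj).1
        have h' : ¬ (k.2 = j) := fun h => hne h.symm
        show (if k.1 = k.1 then _ else _) = _
        rw [if_pos rfl, if_neg h']
      rw [hdiag, hoffd, Finset.filter_ne']
      ring
    have hG : ∑ l : Idx n m, (Bmat n m β * Fmat v - Dmat n m δ - Lmat Q v) k l
        = β k.2 * (∑ l : Idx n m, Fmat v k l) - (∑ l : Idx n m, Dmat n m δ k l)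
          - ∑ l : Idx n m, Lmat Q v k l := by
      simp only [Matrix.sub_apply, hBF, Finset.sum_sub_distrib, Finset.mul_sum]
    rw [hG, hFsum, hDsum, hLsum]
    have := hrates k.2
    linarith
end
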